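/- arXiv:2309.15451 — 7 statements merged into one kernel-verified Lean document; each statement's English description precedes it below -/
import Mathlib

section
/- Let n ≥ 1, let 1 ≤ r ≤ n, and let A be an n×n positive definite Hermitian complex matrix written in block form A = [[A₁, C], [Cᴴ, A₂]] with respect to the splitting of the index set into the first r indices and the remaining n−r indices. Let v be an r×r positive definite Hermitian matrix and set V = [[v, 0], [0, 0]] (an n×n positive semidefinite matrix). Then A + tV is invertible for all real t ≥ 0, and as t → +∞ the matrices (A + tV)⁻¹ converge to the block matrix [[0, 0], [0, A₂⁻¹]]. (Lemma 5.6, in the coordinates used in its proof.) -/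
open Matrix ComplexOrder Filter

section Aux

variable {m' n' : Type*} [Fintype m'] [Fintype n'] [DecidableEq m'] [DecidableEq n']

/-- Explicit inverse of a 2×2 block matrix with invertible `D` and invertible
Schur complement. -/
lemma aux_inv_fromBlocks (A : Matrix m' m' ℂ) (B : Matrix m' n' ℂ) (Cc : Matrix n' m' ℂ)
    (D : Matrix n' n' ℂ) (hD : IsUnit D) (hS : IsUnit (A - B * D⁻¹ * Cc)) :
    (fromBlocks A B Cc D)⁻¹ =
      fromBlocks (A - B * D⁻¹ * Cc)⁻¹ (-((A - B * D⁻¹ * Cc)⁻¹ * B * D⁻¹))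
        (-(D⁻¹ * Cc * (A - B * D⁻¹ * Cc)⁻¹))
        (D⁻¹ + D⁻¹ * Cc * (A - B * D⁻¹ * Cc)⁻¹ * B * D⁻¹) := by
  letI : Invertible D := hD.invertible
  letI : Invertible (A - B * ⅟ D * Cc) := by
    rw [invOf_eq_nonsing_inv]; exact hS.invertible
  letI := fromBlocks₂₂Invertible A B Cc D
  rw [← invOf_eq_nonsing_inv, invOf_fromBlocks₂₂_eq]
  simp only [invOf_eq_nonsing_inv]

/-- `fromBlocks` preserves limits (entrywise). -/
lemma aux_tendsto_fromBlocks {α : Type*} {l : Filter α}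
    {f₁₁ : α → Matrix m' m' ℂ} {f₁₂ : α → Matrix m' n' ℂ}
    {f₂₁ : α → Matrix n' m' ℂ} {f₂₂ : α → Matrix n' n' ℂ}
    {L₁₁ : Matrix m' m' ℂ} {L₁₂ : Matrix m' n' ℂ} {L₂₁ : Matrix n' m' ℂ} {L₂₂ : Matrix n' n' ℂ}
    (h₁₁ : Tendsto f₁₁ l (nhds L₁₁)) (h₁₂ : Tendsto f₁₂ l (nhds L₁₂))
    (h₂₁ : Tendsto f₂₁ l (nhds L₂₁)) (h₂₂ : Tendsto f₂₂ l (nhds L₂₂)) :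
    Tendsto (fun a => fromBlocks (f₁₁ a) (f₁₂ a) (f₂₁ a) (f₂₂ a)) l
      (nhds (fromBlocks L₁₁ L₁₂ L₂₁ L₂₂)) := by
  refine tendsto_pi_nhds.2 ?_
  intro i
  refine tendsto_pi_nhds.2 ?_
  intro j
  rcases i with i | i <;> rcases j with j | j <;>
    simp only [fromBlocks_apply₁₁, fromBlocks_apply₁₂, fromBlocks_apply₂₁, fromBlocks_apply₂₂]
  · exact tendsto_pi_nhds.1 (tendsto_pi_nhds.1 h₁₁ i) j
  · exact tendsto_pi_nhds.1 (tendsto_pi_nhds.1 h₁₂ i) j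
  · exact tendsto_pi_nhds.1 (tendsto_pi_nhds.1 h₂₁ i) j
  · exact tendsto_pi_nhds.1 (tendsto_pi_nhds.1 h₂₂ i) j

end Aux

/-- Lemma 5.6 (in the coordinates of its proof): if `A = [[A₁, C], [Cᴴ, A₂]]` is
positive definite, `v` is positive definite of size `r`, and `V = [[v, 0], [0, 0]]`,
then `A + t V` is invertible for all `t ≥ 0` and `(A + t V)⁻¹ → [[0, 0], [0, A₂⁻¹]]`
as `t → +∞`. -/
theorem stmt4 (n r : ℕ) (hn : 1 ≤ n) (hr1 : 1 ≤ r) (hrn : r ≤ n)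
    (A₁ : Matrix (Fin r) (Fin r) ℂ) (A₂ : Matrix (Fin (n - r)) (Fin (n - r)) ℂ)
    (C : Matrix (Fin r) (Fin (n - r)) ℂ)
    (hA : (Matrix.fromBlocks A₁ C Cᴴ A₂).PosDef)
    (v : Matrix (Fin r) (Fin r) ℂ) (hv : v.PosDef) :
    (∀ t : ℝ, 0 ≤ t →
      IsUnit (Matrix.fromBlocks A₁ C Cᴴ A₂ + (t : ℂ) • Matrix.fromBlocks v 0 0 0).det) ∧
    Tendsto
      (fun t : ℝ => (Matrix.fromBlocks A₁ C Cᴴ A₂ + (t : ℂ) • Matrix.fromBlocks v 0 0 0)⁻¹)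
      atTop (nhds (Matrix.fromBlocks 0 0 0 A₂⁻¹)) := by
  -- the scaled `V` is positive semidefinite for `t ≥ 0`
  have hVpsd : ∀ t : ℝ, 0 ≤ t →
      ((t : ℂ) • Matrix.fromBlocks v 0 0 0 :
        Matrix (Fin r ⊕ Fin (n - r)) (Fin r ⊕ Fin (n - r)) ℂ).PosSemidef := by
    intro t ht
    have htC : (0 : ℂ) ≤ (t : ℂ) := by exact_mod_cast ht
    have hM : (Matrix.fromBlocks v 0 0 0 :
        Matrix (Fin r ⊕ Fin (n - r)) (Fin r ⊕ Fin (n - r)) ℂ).IsHermitian := by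
      simp only [Matrix.IsHermitian, fromBlocks_conjTranspose, conjTranspose_zero, hv.1.eq]
    refine .of_dotProduct_mulVec_nonneg ?_ ?_
    · show ((t : ℂ) • Matrix.fromBlocks v 0 0 0)ᴴ = _
      rw [conjTranspose_smul, hM.eq]
      congr 1
      exact Complex.conj_ofReal t
    · intro x
      rw [← Sum.elim_comp_inl_inr x, smul_mulVec, dotProduct_smul, fromBlocks_mulVec,
        Function.star_sumElim]
      simp only [Matrix.zero_mulVec, add_zero, zero_add]
      rw [sumElim_dotProduct_sumElim, dotProduct_zero, add_zero, smul_eq_mul]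
      exact mul_nonneg htC (hv.posSemidef.dotProduct_mulVec_nonneg (x ∘ Sum.inl))
  -- `A + t V` is positive definite for `t ≥ 0`
  have hPD : ∀ t : ℝ, 0 ≤ t →
      (Matrix.fromBlocks A₁ C Cᴴ A₂ + (t : ℂ) • Matrix.fromBlocks v 0 0 0).PosDef :=
    fun t ht => hA.add_posSemidef (hVpsd t ht)
  -- `A₂` is positive definite
  have hA₂ : A₂.PosDef := by
    refine .of_dotProduct_mulVec_pos ?_ ?_
    · exact (Matrix.isHermitian_fromBlocks_iff.mp hA.1).2.2.2
    · intro y hy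
      have hx : Sum.elim (0 : Fin r → ℂ) y ≠ 0 := by
        intro h
        apply hy
        funext i
        have := congrFun h (Sum.inr i)
        simpa using this
      have := hA.dotProduct_mulVec_pos hx
      simpa [fromBlocks_mulVec, Function.star_sumElim, sumElim_dotProduct_sumElim,
        Matrix.mulVec_zero] using this
  have hA₂u : IsUnit A₂ := hA₂.isUnit
  letI : Invertible A₂ := hA₂u.invertible
  -- block form of `A + t V`
  have hE : ∀ t : ℝ, Matrix.fromBlocks A₁ C Cᴴ A₂ + (t : ℂ) • Matrix.fromBlocks v 0 0 0 =
      Matrix.fromBlocks (A₁ + (t : ℂ) • v) C Cᴴ A₂ := by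
    intro t
    rw [fromBlocks_smul, fromBlocks_add]
    simp
  -- Schur complements are invertible for `t ≥ 0`
  have hS : ∀ t : ℝ, 0 ≤ t → IsUnit (A₁ + (t : ℂ) • v - C * A₂⁻¹ * Cᴴ) := by
    intro t ht
    have h1 : IsUnit (Matrix.fromBlocks (A₁ + (t : ℂ) • v) C Cᴴ A₂) := by
      rw [← hE t]; exact (hPD t ht).isUnit
    have h2 := (isUnit_fromBlocks_iff_of_invertible₂₂ (A := A₁ + (t : ℂ) • v) (B := C)
      (C := Cᴴ) (D := A₂)).mp h1
    rwa [invOf_eq_nonsing_inv] at h2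
  constructor
  · intro t ht
    exact ((Matrix.isUnit_iff_isUnit_det _).mp (hPD t ht).isUnit)
  -- the limit
  · -- Schur complement inverse tends to 0
    set S₀ : Matrix (Fin r) (Fin r) ℂ := A₁ - C * A₂⁻¹ * Cᴴ with hS₀
    have hSeq : ∀ t : ℝ, A₁ + (t : ℂ) • v - C * A₂⁻¹ * Cᴴ = S₀ + (t : ℂ) • v := by
      intro t; rw [hS₀]; exact add_sub_right_comm A₁ ((t : ℂ) • v) (C * A₂⁻¹ * Cᴴ)
    have hkey : Tendsto (fun t : ℝ => (S₀ + (t : ℂ) • v)⁻¹) atTop (nhds 0) := by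
      -- for t > 0, (S₀ + t v)⁻¹ = t⁻¹ • ((t⁻¹ • S₀ + v)⁻¹)
      have hg : Tendsto (fun t : ℝ => ((t : ℂ))⁻¹ • S₀ + v) atTop (nhds v) := by
        have h0 : Tendsto (fun t : ℝ => ((t : ℂ))⁻¹) atTop (nhds 0) := by
          have := (Complex.continuous_ofReal.tendsto 0).comp tendsto_inv_atTop_zero
          simpa [Function.comp_def] using this
        have := (h0.smul_const S₀).add_const v
        simpa using this
      have hinv : Tendsto (fun t : ℝ => (((t : ℂ))⁻¹ • S₀ + v)⁻¹) atTop (nhds v⁻¹) := by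
        have hc : ContinuousAt Inv.inv v := by
          apply continuousAt_matrix_inv
          rw [Ring.inverse_eq_inv']
          exact continuousAt_inv₀ hv.det_pos.ne'
        exact hc.tendsto.comp hg
      have h0 : Tendsto (fun t : ℝ => ((t : ℂ))⁻¹) atTop (nhds 0) := by
        have := (Complex.continuous_ofReal.tendsto 0).comp tendsto_inv_atTop_zero
        simpa [Function.comp_def] using this
      have hlim : Tendsto (fun t : ℝ => ((t : ℂ))⁻¹ • (((t : ℂ))⁻¹ • S₀ + v)⁻¹) atTop
          (nhds ((0 : ℂ) • v⁻¹)) := h0.smul hinv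
      rw [zero_smul] at hlim
      refine Tendsto.congr' ?_ hlim
      filter_upwards [eventually_ge_atTop (1 : ℝ)] with t ht
      have htpos : (0 : ℝ) < t := lt_of_lt_of_le one_pos ht
      have htne : (t : ℂ) ≠ 0 := by exact_mod_cast htpos.ne'
      have heq : S₀ + (t : ℂ) • v = (t : ℂ) • (((t : ℂ))⁻¹ • S₀ + v) := by
        rw [smul_add, smul_smul, mul_inv_cancel₀ htne, one_smul]
      rw [heq]
      letI : Invertible ((t : ℂ)) := invertibleOfNonzero htne
      have hdet : IsUnit (((t : ℂ))⁻¹ • S₀ + v).det := by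
        have hu : IsUnit (S₀ + (t : ℂ) • v) := by
          have := hS t htpos.le
          rwa [hSeq t] at this
        rw [heq] at hu
        have := (Matrix.isUnit_iff_isUnit_det _).mp hu
        rw [Matrix.det_smul] at this
        exact (IsUnit.mul_iff.mp this).2
      rw [Matrix.inv_smul (A := ((t : ℂ))⁻¹ • S₀ + v) ((t : ℂ)) hdet, invOf_eq_inv]
    -- explicit inverse formula, eventually in t
    have hformula : ∀ t : ℝ, 0 ≤ t →
        (Matrix.fromBlocks A₁ C Cᴴ A₂ + (t : ℂ) • Matrix.fromBlocks v 0 0 0)⁻¹ =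
          fromBlocks (S₀ + (t : ℂ) • v)⁻¹
            (-((S₀ + (t : ℂ) • v)⁻¹ * C * A₂⁻¹))
            (-(A₂⁻¹ * Cᴴ * (S₀ + (t : ℂ) • v)⁻¹))
            (A₂⁻¹ + A₂⁻¹ * Cᴴ * (S₀ + (t : ℂ) • v)⁻¹ * C * A₂⁻¹) := by
      intro t ht
      rw [hE t, aux_inv_fromBlocks _ _ _ _ hA₂u (hS t ht), hSeq t]
    -- limits of the four blocks
    have hmulC : Continuous fun X : Matrix (Fin r) (Fin r) ℂ => X * C * A₂⁻¹ :=
      (continuous_id.matrix_mul continuous_const).matrix_mul continuous_const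
    have h₁₂ : Tendsto (fun t : ℝ => -((S₀ + (t : ℂ) • v)⁻¹ * C * A₂⁻¹)) atTop (nhds 0) := by
      have := ((hmulC.tendsto 0).comp hkey).neg
      simpa using this
    have hmulC' : Continuous fun X : Matrix (Fin r) (Fin r) ℂ => A₂⁻¹ * Cᴴ * X :=
      continuous_const.matrix_mul continuous_id
    have h₂₁ : Tendsto (fun t : ℝ => -(A₂⁻¹ * Cᴴ * (S₀ + (t : ℂ) • v)⁻¹)) atTop (nhds 0) := by
      have := ((hmulC'.tendsto 0).comp hkey).neg
      simpa using this
    have hmulC'' : Continuous fun X : Matrix (Fin r) (Fin r) ℂ =>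
        A₂⁻¹ + A₂⁻¹ * Cᴴ * X * C * A₂⁻¹ :=
      continuous_const.add
        (((continuous_const.matrix_mul continuous_id).matrix_mul
          continuous_const).matrix_mul continuous_const)
    have h₂₂ : Tendsto
        (fun t : ℝ => A₂⁻¹ + A₂⁻¹ * Cᴴ * (S₀ + (t : ℂ) • v)⁻¹ * C * A₂⁻¹) atTop
        (nhds A₂⁻¹) := by
      have := (hmulC''.tendsto 0).comp hkey
      simpa [Function.comp_def] using this
    have hblocks := aux_tendsto_fromBlocks hkey h₁₂ h₂₁ h₂₂
    refine Tendsto.congr' ?_ hblocks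
    filter_upwards [eventually_ge_atTop (0 : ℝ)] with t ht
    exact (hformula t ht).symm
end

section
/- Let 0 ≤ l ≤ k ≤ n be integers. If A and B are n×n positive definite Hermitian complex matrices with B − A positive semidefinite, then σ_l(B)/σ_k(B) ≤ σ_l(A)/σ_k(A); that is, the function A ↦ σ_l(A)/σ_k(A) is monotone decreasing with respect to the Loewner order on positive definite Hermitian matrices. (Lemma 6.2 (1).) -/
open Matrix ComplexOrder

/-- `esymm A k` is the `k`-th elementary symmetric function of the eigenvalues of the
Hermitian matrix `A`, computed as the (real part of the) sum of all `k × k` principal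
minors of `A`. -/
noncomputable def esymm {ι : Type*} [Fintype ι] [DecidableEq ι]
    (A : Matrix ι ι ℂ) (k : ℕ) : ℝ :=
  (∑ S ∈ Finset.powersetCard k (Finset.univ : Finset ι),
    (A.submatrix (fun i : {x : ι // x ∈ S} => (i : ι))
      (fun i : {x : ι // x ∈ S} => (i : ι))).det).re

namespace Stmt5

open Polynomial

variable {n : ℕ}

noncomputable def cdet (M : Matrix (Fin n) (Fin n) ℂ) (S : Finset (Fin n)) : ℂ :=
  (M.submatrix (fun i : {x : Fin n // x ∈ S} => (i : Fin n))
    (fun i : {x : Fin n // x ∈ S} => (i : Fin n))).det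

noncomputable def cE (M : Matrix (Fin n) (Fin n) ℂ) (k : ℕ) : ℂ :=
  ∑ S ∈ Finset.powersetCard k (Finset.univ : Finset (Fin n)), cdet M S

lemma det_unit_rows (M : Matrix (Fin n) (Fin n) ℂ) (S : Finset (Fin n)) :
    (Matrix.of (fun i j => if i ∈ S then M i j else (1 : Matrix (Fin n) (Fin n) ℂ) i j)).det
      = cdet M S := by
  classical
  set N : Matrix (Fin n) (Fin n) ℂ :=
    Matrix.of (fun i j => if i ∈ S then M i j else (1 : Matrix (Fin n) (Fin n) ℂ) i j) with hN
  let e : {x : Fin n // x ∈ S} ⊕ {x : Fin n // ¬ x ∈ S} ≃ Fin n := Equiv.sumCompl (· ∈ S)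
  rw [← Matrix.det_submatrix_equiv_self e N]
  have hblock : N.submatrix e e = Matrix.fromBlocks
      (M.submatrix (fun i : {x : Fin n // x ∈ S} => (i : Fin n))
        (fun i : {x : Fin n // x ∈ S} => (i : Fin n)))
      (N.submatrix (fun i : {x : Fin n // x ∈ S} => (i : Fin n))
        (fun i : {x : Fin n // ¬ x ∈ S} => (i : Fin n)))
      0 1 := by
    ext i j
    cases i with
    | inl i =>
      cases j with
      | inl j => simp [N, e, i.2]
      | inr j => simp [N, e, i.2]
    | inr i =>
      cases j with
      | inl j =>
        have hij : (i : Fin n) ≠ (j : Fin n) := by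
          intro h
          exact i.2 (h ▸ j.2)
        simp [N, e, i.2, Matrix.one_apply, hij]
      | inr j =>
        by_cases h : i = j
        · subst h; simp [N, e, i.2, Matrix.one_apply]
        · have hij : (i : Fin n) ≠ (j : Fin n) := fun hc => h (Subtype.ext hc)
          simp [N, e, i.2, Matrix.one_apply, hij, h]
  rw [hblock, Matrix.det_fromBlocks_zero₂₁, Matrix.det_one, mul_one]
  rfl

lemma det_add_smul_one (M : Matrix (Fin n) (Fin n) ℂ) (t : ℂ) :
    (M + t • 1).det = ∑ S ∈ (Finset.univ : Finset (Fin n)).powerset,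
      t ^ (n - S.card) * cdet M S := by
  classical
  have h1 : (M + t • 1 : Matrix (Fin n) (Fin n) ℂ).det
      = (Matrix.detRowAlternating : (Fin n → ℂ) [⋀^Fin n]→ₗ[ℂ] ℂ).toMultilinearMap
        ((fun i => M i) + (fun i => (t • (1 : Matrix (Fin n) (Fin n) ℂ)) i)) := rfl
  rw [h1, MultilinearMap.map_add_univ]
  rw [Finset.powerset_univ]
  refine Finset.sum_congr rfl (fun s _ => ?_)
  have h2 : (s.piecewise (fun i => M i) (fun i => (t • (1 : Matrix (Fin n) (Fin n) ℂ)) i))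
      = fun i => (if i ∈ s then (1:ℂ) else t) •
          (if i ∈ s then M i else (1 : Matrix (Fin n) (Fin n) ℂ) i) := by
    funext i
    by_cases h : i ∈ s
    · simp [Finset.piecewise_eq_of_mem _ _ _ h, h]
    · funext j
      simp [Finset.piecewise_eq_of_notMem _ _ _ h, h, Matrix.smul_apply]
  rw [h2, MultilinearMap.map_smul_univ]
  have h3 : ∏ i, (if i ∈ s then (1:ℂ) else t) = t ^ (n - s.card) := by
    rw [Finset.prod_ite, Finset.prod_const_one, one_mul, Finset.prod_const]
    congr 1
    have : Finset.filter (fun i => ¬ i ∈ s) Finset.univ = sᶜ := by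
      ext i; simp
    rw [this, Finset.card_compl, Fintype.card_fin]
  rw [h3]
  have harg : (fun i => (if i ∈ s then M i else (1 : Matrix (Fin n) (Fin n) ℂ) i))
      = Matrix.of (fun i j => if i ∈ s then M i j else (1 : Matrix (Fin n) (Fin n) ℂ) i j) := by
    funext i j
    by_cases h : i ∈ s <;> simp [h]
  have h4 : (Matrix.detRowAlternating : (Fin n → ℂ) [⋀^Fin n]→ₗ[ℂ] ℂ).toMultilinearMap
      (fun i => (if i ∈ s then M i else (1 : Matrix (Fin n) (Fin n) ℂ) i)) = cdet M s := by
    rw [harg, ← det_unit_rows M s]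
    rfl
  rw [h4, smul_eq_mul]

lemma cE_zero_of_gt (M : Matrix (Fin n) (Fin n) ℂ) {k : ℕ} (hk : n < k) : cE M k = 0 := by
  unfold cE
  rw [Finset.powersetCard_eq_empty.2 (by simpa using hk), Finset.sum_empty]

lemma det_add_smul_one' (M : Matrix (Fin n) (Fin n) ℂ) (t : ℂ) :
    (M + t • 1).det = ∑ k ∈ Finset.range (n + 1), cE M k * t ^ (n - k) := by
  classical
  rw [det_add_smul_one]
  rw [← Finset.sum_fiberwise_of_maps_to (g := Finset.card)
    (t := Finset.range (n + 1)) (fun S hS => by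
      simp only [Finset.mem_range, Nat.lt_succ_iff]
      simpa using Finset.card_le_card (Finset.mem_powerset.1 hS))]
  refine Finset.sum_congr rfl (fun k hk => ?_)
  rw [cE, Finset.sum_mul]
  rw [show Finset.filter (fun S => S.card = k) (Finset.univ : Finset (Fin n)).powerset
      = Finset.powersetCard k Finset.univ from Finset.powersetCard_eq_filter.symm]
  refine Finset.sum_congr rfl (fun S hS => ?_)
  rw [(Finset.mem_powersetCard.1 hS).2, mul_comm]

noncomputable def cpoly (M : Matrix (Fin n) (Fin n) ℂ) : Polynomial ℂ :=
  ∑ k ∈ Finset.range (n + 1), Polynomial.C (cE M k) * Polynomial.X ^ (n - k)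

lemma cpoly_eval (M : Matrix (Fin n) (Fin n) ℂ) (t : ℂ) :
    (cpoly M).eval t = (M + t • 1).det := by
  rw [det_add_smul_one', cpoly]
  simp [Polynomial.eval_finset_sum]

lemma cpoly_coeff (M : Matrix (Fin n) (Fin n) ℂ) {k : ℕ} (hk : k ≤ n) :
    (cpoly M).coeff (n - k) = cE M k := by
  classical
  rw [cpoly, Polynomial.finset_sum_coeff]
  rw [Finset.sum_eq_single k]
  · simp
  · intro j hj hjk
    simp only [Polynomial.coeff_C_mul, Polynomial.coeff_X_pow]
    rw [if_neg (by simp only [Finset.mem_range, Nat.lt_succ_iff] at hj; omega), mul_zero]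
  · intro h
    exact absurd (Finset.mem_range.2 (Nat.lt_succ_of_le hk)) h

lemma cE_eq_of_det_eq {M N : Matrix (Fin n) (Fin n) ℂ}
    (h : ∀ t : ℂ, (M + t • 1).det = (N + t • 1).det) {k : ℕ} (hk : k ≤ n) :
    cE M k = cE N k := by
  have : cpoly M = cpoly N := Polynomial.funext (fun t => by
    rw [cpoly_eval, cpoly_eval, h])
  rw [← cpoly_coeff M hk, ← cpoly_coeff N hk, this]

lemma cE_conj_unitary {U : Matrix (Fin n) (Fin n) ℂ}
    (hU : U ∈ Matrix.unitaryGroup (Fin n) ℂ) (M : Matrix (Fin n) (Fin n) ℂ)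
    {k : ℕ} (hk : k ≤ n) :
    cE (U * M * star U) k = cE M k := by
  have hUU : U * star U = 1 := (Matrix.mem_unitaryGroup_iff).1 hU
  refine cE_eq_of_det_eq (fun t => ?_) hk
  have h1 : U * M * star U + t • 1 = U * (M + t • 1) * star U := by
    rw [Matrix.mul_add, Matrix.add_mul]
    congr 1
    rw [Matrix.mul_smul, Matrix.smul_mul, Matrix.mul_one, hUU]
  have hdet : U.det * (star U).det = 1 := by
    rw [← Matrix.det_mul, hUU, Matrix.det_one]
  rw [h1, Matrix.det_mul, Matrix.det_mul]
  calc U.det * (M + t • 1).det * (star U).det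
      = U.det * (star U).det * (M + t • 1).det := by ring
    _ = (M + t • 1).det := by rw [hdet, one_mul]

lemma cE_diagonal (f : Fin n → ℂ) (k : ℕ) :
    cE (Matrix.diagonal f) k
      = ∑ S ∈ Finset.powersetCard k (Finset.univ : Finset (Fin n)), ∏ i ∈ S, f i := by
  classical
  unfold cE cdet
  refine Finset.sum_congr rfl (fun S _ => ?_)
  rw [Matrix.submatrix_diagonal f _ Subtype.val_injective, Matrix.det_diagonal]
  exact Finset.prod_coe_sort S f


noncomputable def esR {ι : Type*} [DecidableEq ι] (s : Finset ι) (g : ι → ℝ) (m : ℕ) : ℝ :=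
  ∑ S ∈ Finset.powersetCard m s, ∏ i ∈ S, g i

@[simp] lemma esR_zero {ι : Type*} [DecidableEq ι] (s : Finset ι) (g : ι → ℝ) :
    esR s g 0 = 1 := by
  simp [esR]

lemma esR_empty_succ {ι : Type*} [DecidableEq ι] (g : ι → ℝ) (m : ℕ) :
    esR (∅ : Finset ι) g (m + 1) = 0 := by
  rw [esR, Finset.powersetCard_eq_empty.2 (by simp), Finset.sum_empty]

lemma esR_nonneg {ι : Type*} [DecidableEq ι] {s : Finset ι} {g : ι → ℝ}
    (hg : ∀ i ∈ s, 0 ≤ g i) (m : ℕ) : 0 ≤ esR s g m := by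
  refine Finset.sum_nonneg (fun S hS => Finset.prod_nonneg (fun i hi => ?_))
  exact hg i ((Finset.mem_powersetCard.1 hS).1 hi)

lemma esR_pos {ι : Type*} [DecidableEq ι] {s : Finset ι} {g : ι → ℝ}
    (hg : ∀ i ∈ s, 0 < g i) {m : ℕ} (hm : m ≤ s.card) : 0 < esR s g m := by
  refine Finset.sum_pos (fun S hS => Finset.prod_pos (fun i hi => ?_))
    (Finset.powersetCard_nonempty.2 hm)
  exact hg i ((Finset.mem_powersetCard.1 hS).1 hi)

lemma esR_insert {ι : Type*} [DecidableEq ι] {s : Finset ι} {a : ι} (h : a ∉ s)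
    (g : ι → ℝ) (m : ℕ) :
    esR (insert a s) g (m + 1) = esR s g (m + 1) + g a * esR s g m := by
  classical
  have hdisj : Disjoint (Finset.powersetCard (m + 1) s)
      ((Finset.powersetCard m s).image (insert a)) := by
    rw [Finset.disjoint_right]
    intro T hT hT'
    have h1 : a ∈ T := by
      obtain ⟨T', _, rfl⟩ := Finset.mem_image.1 hT
      exact Finset.mem_insert_self _ _
    exact h ((Finset.mem_powersetCard.1 hT').1 h1)
  have hinj : ∀ T ∈ Finset.powersetCard m s, ∀ T' ∈ Finset.powersetCard m s,
      insert a T = insert a T' → T = T' := by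
    intro T hT T' hT' hTT'
    have haT : a ∉ T := fun hc => h ((Finset.mem_powersetCard.1 hT).1 hc)
    have haT' : a ∉ T' := fun hc => h ((Finset.mem_powersetCard.1 hT').1 hc)
    have := congrArg (Finset.erase · a) hTT'
    simpa [Finset.erase_insert haT, Finset.erase_insert haT'] using this
  rw [esR, Finset.powersetCard_succ_insert h, Finset.sum_union hdisj,
    Finset.sum_image hinj]
  congr 1
  rw [esR, Finset.mul_sum]
  refine Finset.sum_congr rfl (fun T hT => ?_)
  have haT : a ∉ T := fun hc => h ((Finset.mem_powersetCard.1 hT).1 hc)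
  rw [Finset.prod_insert haT]

theorem esR_spread {ι : Type*} [DecidableEq ι] (s : Finset ι) (g : ι → ℝ)
    (hg : ∀ i ∈ s, 0 ≤ g i) :
    ∀ p q r u : ℕ, p + u = q + r → p ≤ q → p ≤ r → q ≤ u → r ≤ u →
    esR s g p * esR s g u ≤ esR s g q * esR s g r := by
  classical
  induction s using Finset.induction_on with
  | empty =>
    intro p q r u hsum hpq hpr hqu hru
    rcases Nat.eq_zero_or_pos u with hu | hu
    · have : p = 0 ∧ q = 0 ∧ r = 0 ∧ u = 0 := by omega
      obtain ⟨rfl, rfl, rfl, rfl⟩ := this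
      simp
    · obtain ⟨u', rfl⟩ : ∃ u', u = u' + 1 := ⟨u - 1, by omega⟩
      rw [esR_empty_succ, mul_zero]
      have hg0 : ∀ i ∈ (∅ : Finset ι), 0 ≤ g i := by simp
      exact mul_nonneg (esR_nonneg hg0 _) (esR_nonneg hg0 _)
  | @insert a s ha IH =>
    intro p q r u hsum hpq hpr hqu hru
    have hg' : ∀ i ∈ s, 0 ≤ g i := fun i hi => hg i (Finset.mem_insert_of_mem hi)
    have hga : 0 ≤ g a := hg a (Finset.mem_insert_self _ _)
    have IH' := IH hg'
    by_cases hpq' : p = q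
    · subst hpq'
      have : u = r := by omega
      subst this
      exact le_of_eq rfl
    by_cases hpr' : p = r
    · subst hpr'
      have : u = q := by omega
      subst this
      exact le_of_eq (mul_comm _ _)
    have hplq : p < q := lt_of_le_of_ne hpq hpq'
    have hplr : p < r := lt_of_le_of_ne hpr hpr'
    have hrlu : r < u := by omega
    have hqlu : q < u := by omega
    set F : ℕ → ℝ := fun m => esR s g m with hF
    set Fp : ℕ → ℝ := fun m => match m with | 0 => 0 | m + 1 => F m with hFp
    have hE : ∀ m, esR (insert a s) g m = F m + g a * Fp m := by
      intro m
      cases m with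
      | zero =>
        show esR (insert a s) g 0 = F 0 + g a * 0
        simp [hF]
      | succ m => rw [esR_insert ha]
    have hFnn : ∀ m, 0 ≤ F m := fun m => esR_nonneg hg' m
    have hFpnn : ∀ m, 0 ≤ Fp m := by
      intro m; cases m with
      | zero => exact le_refl 0
      | succ m => exact hFnn m
    obtain ⟨u', rfl⟩ : ∃ u', u = u' + 1 := ⟨u - 1, by omega⟩
    obtain ⟨r', rfl⟩ : ∃ r', r = r' + 1 := ⟨r - 1, by omega⟩
    have e1 : F p * F (u' + 1) ≤ F q * F (r' + 1) :=
      IH' p q (r' + 1) (u' + 1) hsum hpq hpr hqu hru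
    have e3' : Fp p * Fp (u' + 1) ≤ Fp q * Fp (r' + 1) := by
      cases p with
      | zero =>
        show (0:ℝ) * _ ≤ _
        rw [zero_mul]
        exact mul_nonneg (hFpnn q) (hFpnn (r' + 1))
      | succ p' =>
        obtain ⟨q', rfl⟩ : ∃ q', q = q' + 1 := ⟨q - 1, by omega⟩
        exact IH' p' q' r' u' (by omega) (by omega) (by omega) (by omega) (by omega)
    have e2a : F p * Fp (u' + 1) ≤ F q * Fp (r' + 1) :=
      IH' p q r' u' (by omega) hpq (by omega) (by omega) (by omega)
    have e2b : Fp p * F (u' + 1) ≤ Fp q * F (r' + 1) := by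
      cases p with
      | zero =>
        show (0:ℝ) * _ ≤ _
        rw [zero_mul]
        exact mul_nonneg (hFpnn q) (hFnn (r' + 1))
      | succ p' =>
        obtain ⟨q', rfl⟩ : ∃ q', q = q' + 1 := ⟨q - 1, by omega⟩
        exact IH' p' q' (r' + 1) (u' + 1) (by omega) (by omega) (by omega) (by omega) (by omega)
    have e2 : g a * (F p * Fp (u' + 1) + Fp p * F (u' + 1))
        ≤ g a * (F q * Fp (r' + 1) + Fp q * F (r' + 1)) :=
      mul_le_mul_of_nonneg_left (add_le_add e2a e2b) hga
    have e3 : g a * g a * (Fp p * Fp (u' + 1)) ≤ g a * g a * (Fp q * Fp (r' + 1)) :=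
      mul_le_mul_of_nonneg_left e3' (mul_nonneg hga hga)
    rw [hE p, hE (u' + 1), hE q, hE (r' + 1)]
    nlinarith [e1, e2, e3]


lemma cE_zero (M : Matrix (Fin n) (Fin n) ℂ) : cE M 0 = 1 := by
  classical
  rw [cE, Finset.powersetCard_zero, Finset.sum_singleton, cdet]
  haveI : IsEmpty {x : Fin n // x ∈ (∅ : Finset (Fin n))} :=
    ⟨fun x => absurd x.2 (Finset.notMem_empty _)⟩
  exact Matrix.det_isEmpty

lemma row_diag_col (v g u : Fin n → ℂ) :
    Matrix.replicateRow Unit v * Matrix.diagonal g * Matrix.replicateCol Unit u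
      = Matrix.of (fun _ _ : Unit => ∑ i, v i * g i * u i) := by
  ext _ _
  simp [Matrix.mul_apply, Matrix.diagonal_apply, Finset.sum_ite_eq, mul_assoc]

lemma cE_diag_rank_one (d : Fin n → ℝ) (hd : ∀ i, 0 < d i) (c : ℝ) (w : Fin n → ℂ)
    {m : ℕ} (hm1 : 1 ≤ m) (hmn : m ≤ n) :
    cE (Matrix.diagonal (fun i => (d i : ℂ)) + (c : ℂ) • Matrix.vecMulVec w (star w)) m
      = ((esR Finset.univ d m
          + c * ∑ i, Complex.normSq (w i) * esR (Finset.univ.erase i) d (m - 1) : ℝ) : ℂ) := by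
  classical
  set M : Matrix (Fin n) (Fin n) ℂ :=
    Matrix.diagonal (fun i => (d i : ℂ)) + (c : ℂ) • Matrix.vecMulVec w (star w) with hM
  set P2 : Polynomial ℂ :=
    (∏ i, (Polynomial.X + Polynomial.C ((d i : ℂ))))
      + Polynomial.C ((c : ℂ)) * ∑ i, Polynomial.C (w i * star (w i))
          * ∏ j ∈ Finset.univ.erase i, (Polynomial.X + Polynomial.C ((d j : ℂ))) with hP2
  have heval : ∀ t : ℝ, 0 < t → (cpoly M).eval (t : ℂ) = P2.eval (t : ℂ) := by
    intro t ht
    have he : ∀ i, (d i : ℂ) + (t : ℂ) ≠ 0 := by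
      intro i
      rw [← Complex.ofReal_add, Ne, Complex.ofReal_eq_zero]
      have : 0 < d i + t := add_pos (hd i) ht
      exact this.ne'
    set e : Fin n → ℂ := fun i => (d i : ℂ) + (t : ℂ) with hedef
    have hMt : M + (t : ℂ) • 1 = Matrix.diagonal e
        + Matrix.replicateCol Unit ((c : ℂ) • w) * Matrix.replicateRow Unit (star w) := by
      rw [hM, Matrix.smul_one_eq_diagonal, add_assoc, add_comm ((c : ℂ) • Matrix.vecMulVec w (star w)), ← add_assoc,
        Matrix.diagonal_add, Matrix.vecMulVec_eq Unit, Matrix.replicateCol_smul, ← Matrix.smul_mul]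
    have hdet1 : (Matrix.diagonal e).det = ∏ i, e i := Matrix.det_diagonal
    have hunit : IsUnit (Matrix.diagonal e).det := by
      rw [hdet1]
      exact isUnit_iff_ne_zero.2 (Finset.prod_ne_zero_iff.2 (fun i _ => he i))
    rw [cpoly_eval, hMt, Matrix.det_add_replicateCol_mul_replicateRow hunit]
    have hinv : (Matrix.diagonal e)⁻¹ = Matrix.diagonal (fun i => (e i)⁻¹) := by
      refine Matrix.inv_eq_right_inv ?_
      rw [Matrix.diagonal_mul_diagonal]
      rw [show (fun i => e i * (e i)⁻¹) = fun _ => (1:ℂ) from funext fun i => mul_inv_cancel₀ (he i)]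
      exact Matrix.diagonal_one
    rw [hinv, row_diag_col, hdet1]
    have hdet2 : (1 + Matrix.of (fun _ _ : Unit => ∑ i, star w i * (e i)⁻¹ * ((c : ℂ) • w) i)).det
        = 1 + ∑ i, star w i * (e i)⁻¹ * ((c : ℂ) * w i) := by
      rw [Matrix.det_unique]
      simp [Matrix.one_apply]
    rw [hdet2, hP2]
    simp only [Polynomial.eval_add, Polynomial.eval_mul, Polynomial.eval_prod,
      Polynomial.eval_finset_sum, Polynomial.eval_C, Polynomial.eval_X, Polynomial.eval_pow]
    rw [mul_add, mul_one, Finset.mul_sum]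
    have hprod : ∀ i : Fin n, (∏ j, e j) * (star w i * (e i)⁻¹ * ((c : ℂ) * w i))
        = (c : ℂ) * ((w i * star (w i)) * ∏ j ∈ Finset.univ.erase i, ((t : ℂ) + (d j : ℂ))) := by
      intro i
      rw [← Finset.mul_prod_erase Finset.univ e (Finset.mem_univ i)]
      have hsmul : ((c : ℂ) • w) i = (c : ℂ) * w i := rfl
      have hprodE : ∏ j ∈ Finset.univ.erase i, e j
          = ∏ j ∈ Finset.univ.erase i, ((t : ℂ) + (d j : ℂ)) :=
        Finset.prod_congr rfl (fun j _ => by rw [hedef]; ring)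
      calc (e i * ∏ j ∈ Finset.univ.erase i, e j) * (star w i * (e i)⁻¹ * ((c : ℂ) * w i))
          = (e i * (e i)⁻¹) * (star w i * ((c : ℂ) * w i) * ∏ j ∈ Finset.univ.erase i, e j) := by
            ring
        _ = (c : ℂ) * ((w i * star (w i)) * ∏ j ∈ Finset.univ.erase i, ((t:ℂ) + (d j : ℂ))) := by
            rw [mul_inv_cancel₀ (he i), one_mul, hprodE]
            simp only [Pi.star_apply]
            ring
    rw [Finset.sum_congr rfl (fun i _ => hprod i)]
    congr 1
    · exact Finset.prod_congr rfl (fun j _ => by rw [hedef]; ring)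
    · rw [← Finset.mul_sum]
  have hpoly : cpoly M = P2 := by
    apply Polynomial.eq_of_infinite_eval_eq
    apply Set.Infinite.mono (s := (fun t : ℝ => (t : ℂ)) '' Set.Ioi 0)
    · rintro z ⟨t, ht, rfl⟩
      exact heval t ht
    · exact (Set.Ioi_infinite 0).image (Set.injOn_of_injective Complex.ofReal_injective)
  have hcoeff := cpoly_coeff M hmn
  rw [hpoly] at hcoeff
  rw [← hcoeff, hP2]
  rw [Polynomial.coeff_add, Polynomial.coeff_C_mul, Polynomial.finset_sum_coeff]
  have h1 : (∏ i, (Polynomial.X + Polynomial.C ((d i : ℂ)))).coeff (n - m)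
      = ((esR Finset.univ d m : ℝ) : ℂ) := by
    rw [Finset.prod_X_add_C_coeff Finset.univ (fun i => ((d i : ℂ))) (by simp)]
    have hcard : (Finset.univ : Finset (Fin n)).card - (n - m) = m := by simp; omega
    rw [hcard, esR]
    push_cast
    rfl
  have h2 : ∀ i : Fin n,
      (Polynomial.C (w i * star (w i))
        * ∏ j ∈ Finset.univ.erase i, (Polynomial.X + Polynomial.C ((d j : ℂ)))).coeff (n - m)
      = ((Complex.normSq (w i) : ℝ) : ℂ) * ((esR (Finset.univ.erase i) d (m - 1) : ℝ) : ℂ) := by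
    intro i
    rw [Polynomial.coeff_C_mul]
    have hcard : (Finset.univ.erase i).card = n - 1 := by
      rw [Finset.card_erase_of_mem (Finset.mem_univ i)]
      simp
    rw [Finset.prod_X_add_C_coeff _ (fun j => ((d j : ℂ))) (by rw [hcard]; omega)]
    rw [hcard]
    have : n - 1 - (n - m) = m - 1 := by omega
    rw [this]
    congr 1
    · rw [← Complex.mul_conj]
      rfl
    · rw [esR]
      push_cast
      rfl
  rw [Finset.sum_congr rfl (fun i _ => h2 i), h1]
  push_cast
  rw [Finset.mul_sum]


lemma conj_vecMulVec (P Q : Matrix (Fin n) (Fin n) ℂ) (u v : Fin n → ℂ) :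
    P * Matrix.vecMulVec u v * Q = Matrix.vecMulVec (P *ᵥ u) (v ᵥ* Q) := by
  rw [Matrix.vecMulVec_eq Unit, Matrix.vecMulVec_eq Unit, Matrix.replicateCol_mulVec,
    Matrix.replicateRow_vecMul, Matrix.mul_assoc, Matrix.mul_assoc, Matrix.mul_assoc]

lemma smul_vecMulVec_posSemidef (c : ℝ) (hc : 0 ≤ c) (v : Fin n → ℂ) :
    ((c : ℂ) • Matrix.vecMulVec v (star v)).PosSemidef := by
  have key : (c : ℂ) • Matrix.vecMulVec v (star v)
      = (Matrix.replicateCol Unit (((Real.sqrt c : ℝ) : ℂ) • v))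
        * (Matrix.replicateCol Unit (((Real.sqrt c : ℝ) : ℂ) • v))ᴴ := by
    rw [Matrix.conjTranspose_replicateCol]
    ext i j
    simp only [Matrix.smul_apply, Matrix.vecMulVec_apply, Matrix.mul_apply, Finset.univ_unique,
      Finset.sum_singleton, Matrix.replicateCol_apply, Matrix.replicateRow_apply, Pi.star_apply, Pi.smul_apply,
      smul_eq_mul, star_mul', Complex.star_def, Complex.conj_ofReal]
    have ha : ((Real.sqrt c : ℝ) : ℂ) * ((Real.sqrt c : ℝ) : ℂ) = (c : ℂ) := by
      rw [← Complex.ofReal_mul, Real.mul_self_sqrt hc]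
    linear_combination (v i * (starRingEnd ℂ) (v j)) * ha.symm
  rw [key]
  exact Matrix.posSemidef_self_mul_conjTranspose _

lemma cE_isHermitian {A : Matrix (Fin n) (Fin n) ℂ} (hA : A.IsHermitian)
    {m : ℕ} (hm : m ≤ n) :
    cE A m = ((esR Finset.univ hA.eigenvalues m : ℝ) : ℂ) := by
  have h0 : cE A m = cE (Matrix.diagonal (RCLike.ofReal ∘ hA.eigenvalues)) m := by
    conv_lhs => rw [hA.spectral_theorem]
    exact cE_conj_unitary (hA.eigenvectorUnitary).2 _ hm
  rw [h0, cE_diagonal, esR]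
  have : (RCLike.ofReal ∘ hA.eigenvalues : Fin n → ℂ)
      = fun i => ((hA.eigenvalues i : ℝ) : ℂ) := rfl
  rw [this]
  push_cast
  rfl

lemma conj_by_star_unitary {A : Matrix (Fin n) (Fin n) ℂ} (hA : A.IsHermitian)
    (c : ℝ) (v : Fin n → ℂ) :
    star (hA.eigenvectorUnitary : Matrix (Fin n) (Fin n) ℂ)
      * (A + (c : ℂ) • Matrix.vecMulVec v (star v))
      * (hA.eigenvectorUnitary : Matrix (Fin n) (Fin n) ℂ)
    = Matrix.diagonal (fun i => ((hA.eigenvalues i : ℝ) : ℂ))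
      + (c : ℂ) • Matrix.vecMulVec
          ((star (hA.eigenvectorUnitary : Matrix (Fin n) (Fin n) ℂ)) *ᵥ v)
          (star ((star (hA.eigenvectorUnitary : Matrix (Fin n) (Fin n) ℂ)) *ᵥ v)) := by
  set U : Matrix (Fin n) (Fin n) ℂ := (hA.eigenvectorUnitary : Matrix (Fin n) (Fin n) ℂ) with hU
  have hsU : star U * U = 1 := (Matrix.mem_unitaryGroup_iff').1 (hA.eigenvectorUnitary).2
  rw [Matrix.mul_add, Matrix.add_mul]
  congr 1
  · -- star U * A * U = diagonal
    conv_lhs => rw [hA.spectral_theorem, Unitary.conjStarAlgAut_apply]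
    have h1 : star U * (U * Matrix.diagonal (RCLike.ofReal ∘ hA.eigenvalues) * star U) * U
        = (star U * U) * (Matrix.diagonal (RCLike.ofReal ∘ hA.eigenvalues) * (star U * U)) := by
      simp only [Matrix.mul_assoc]
    rw [h1, hsU, Matrix.one_mul, Matrix.mul_one]
    rfl
  · rw [Matrix.mul_smul, Matrix.smul_mul]
    congr 1
    rw [conj_vecMulVec]
    congr 1
    rw [Matrix.star_mulVec, Matrix.star_eq_conjTranspose U, Matrix.conjTranspose_conjTranspose]

lemma rank_one_step {A : Matrix (Fin n) (Fin n) ℂ} (hA : A.PosDef) (c : ℝ) (hc : 0 ≤ c)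
    (v : Fin n → ℂ) {l k : ℕ} (hlk : l ≤ k) (hkn : k ≤ n) :
    (cE (A + (c : ℂ) • Matrix.vecMulVec v (star v)) l).re / (cE (A + (c : ℂ) • Matrix.vecMulVec v (star v)) k).re
      ≤ (cE A l).re / (cE A k).re := by
  classical
  set B' : Matrix (Fin n) (Fin n) ℂ := A + (c : ℂ) • Matrix.vecMulVec v (star v) with hB'
  set U : Matrix (Fin n) (Fin n) ℂ := (hA.1.eigenvectorUnitary : Matrix (Fin n) (Fin n) ℂ) with hU
  set d : Fin n → ℝ := hA.1.eigenvalues with hd'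
  have hd : ∀ i, 0 < d i := fun i => hA.eigenvalues_pos i
  have hdnn : ∀ i ∈ (Finset.univ : Finset (Fin n)), 0 ≤ d i := fun i _ => (hd i).le
  set w : Fin n → ℂ := (star U) *ᵥ v with hw
  have hstarU : star U ∈ Matrix.unitaryGroup (Fin n) ℂ := Unitary.star_mem (hA.1.eigenvectorUnitary).2
  -- identify cE of B'
  have hconj : ∀ {m : ℕ}, m ≤ n → cE B' m
      = cE (Matrix.diagonal (fun i => ((d i : ℝ) : ℂ)) + (c : ℂ) • Matrix.vecMulVec w (star w)) m := by
    intro m hm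
    have := cE_conj_unitary hstarU B' hm
    rw [← this]
    congr 1
    have hss : star (star U) = U := star_star U
    rw [← conj_by_star_unitary hA.1 c v]
    rw [hss]
  have hEA : ∀ {m : ℕ}, m ≤ n → (cE A m).re = esR Finset.univ d m := by
    intro m hm
    rw [cE_isHermitian hA.1 hm, Complex.ofReal_re]
  have hEB : ∀ {m : ℕ}, 1 ≤ m → m ≤ n → (cE B' m).re
      = esR Finset.univ d m + c * ∑ i, Complex.normSq (w i) * esR (Finset.univ.erase i) d (m - 1) := by
    intro m hm1 hm
    rw [hconj hm, cE_diag_rank_one d hd c w hm1 hm, Complex.ofReal_re]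
  have hSnn : ∀ m : ℕ, 0 ≤ ∑ i, Complex.normSq (w i) * esR (Finset.univ.erase i) d m :=
    fun m => Finset.sum_nonneg fun i _ => mul_nonneg (Complex.normSq_nonneg _)
      (esR_nonneg (fun j _ => (hd j).le) m)
  have hpos : ∀ {m : ℕ}, m ≤ n → 0 < esR Finset.univ d m := by
    intro m hm
    exact esR_pos (fun i _ => hd i) (by simpa using hm)
  have hposA : 0 < (cE A k).re := by rw [hEA hkn]; exact hpos hkn
  have hposB : 0 < (cE B' k).re := by
    rcases Nat.eq_zero_or_pos k with rfl | hk1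
    · rw [hB', cE_zero]; norm_num
    · rw [hEB hk1 hkn]
      have := hSnn (k - 1)
      nlinarith [hpos hkn]
  rw [div_le_div_iff₀ hposB hposA]
  -- cross inequality
  rcases Nat.eq_zero_or_pos l with rfl | hl1
  · rw [cE_zero, cE_zero, Complex.one_re, one_mul, one_mul]
    rcases Nat.eq_zero_or_pos k with rfl | hk1
    · rw [cE_zero, cE_zero]
    · rw [hEA hkn, hEB hk1 hkn]
      nlinarith [hSnn (k - 1), hpos hkn]
  · have hln : l ≤ n := le_trans hlk hkn
    rw [hEA hkn, hEA hln, hEB hl1 hln, hEB (le_trans hl1 hlk) hkn]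
    have key : ∀ i : Fin n,
        esR (Finset.univ.erase i) d (l - 1) * esR Finset.univ d k
          ≤ esR Finset.univ d l * esR (Finset.univ.erase i) d (k - 1) := by
      intro i
      obtain ⟨l', rfl⟩ : ∃ l', l = l' + 1 := ⟨l - 1, by omega⟩
      obtain ⟨k', rfl⟩ : ∃ k', k = k' + 1 := ⟨k - 1, by omega⟩
      have hins : insert i (Finset.univ.erase i) = (Finset.univ : Finset (Fin n)) :=
        Finset.insert_erase (Finset.mem_univ i)
      have hiner : i ∉ Finset.univ.erase i := Finset.notMem_erase i _
      have hexp : ∀ m : ℕ, esR Finset.univ d (m + 1)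
          = esR (Finset.univ.erase i) d (m + 1) + d i * esR (Finset.univ.erase i) d m := by
        intro m
        conv_lhs => rw [← hins]
        rw [esR_insert hiner]
      simp only [Nat.add_sub_cancel]
      rw [hexp l', hexp k']
      have hsp := esR_spread (Finset.univ.erase i) d (fun j _ => (hd j).le)
        l' (l' + 1) k' (k' + 1) (by omega) (by omega) (by omega) (by omega) (by omega)
      have hnn1 : 0 ≤ esR (Finset.univ.erase i) d l' := esR_nonneg (fun j _ => (hd j).le) _
      have hnn2 : 0 ≤ esR (Finset.univ.erase i) d k' := esR_nonneg (fun j _ => (hd j).le) _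
      nlinarith [hd i]
    have hkey : (∑ i, Complex.normSq (w i) * esR (Finset.univ.erase i) d (l - 1)) * esR Finset.univ d k
        ≤ esR Finset.univ d l * ∑ i, Complex.normSq (w i) * esR (Finset.univ.erase i) d (k - 1) := by
      rw [Finset.sum_mul, Finset.mul_sum]
      refine Finset.sum_le_sum (fun i _ => ?_)
      calc Complex.normSq (w i) * esR (Finset.univ.erase i) d (l - 1) * esR Finset.univ d k
          = Complex.normSq (w i) * (esR (Finset.univ.erase i) d (l - 1) * esR Finset.univ d k) := by
            ring
        _ ≤ Complex.normSq (w i) * (esR Finset.univ d l * esR (Finset.univ.erase i) d (k - 1)) :=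
            mul_le_mul_of_nonneg_left (key i) (Complex.normSq_nonneg _)
        _ = esR Finset.univ d l * (Complex.normSq (w i) * esR (Finset.univ.erase i) d (k - 1)) := by
            ring
    nlinarith [mul_le_mul_of_nonneg_left hkey hc]


lemma esymm_eq_cE (M : Matrix (Fin n) (Fin n) ℂ) (k : ℕ) : esymm M k = (cE M k).re := rfl

lemma psd_sum_rank_one {P : Matrix (Fin n) (Fin n) ℂ} (hP : P.PosSemidef) :
    P = ∑ i, ((hP.1.eigenvalues i : ℝ) : ℂ) • Matrix.vecMulVec
      (fun j => (hP.1.eigenvectorUnitary : Matrix (Fin n) (Fin n) ℂ) j i)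
      (star fun j => (hP.1.eigenvectorUnitary : Matrix (Fin n) (Fin n) ℂ) j i) := by
  conv_lhs => rw [hP.1.spectral_theorem, Unitary.conjStarAlgAut_apply]
  ext a b
  rw [Matrix.sum_apply]
  set U : Matrix (Fin n) (Fin n) ℂ := (hP.1.eigenvectorUnitary : Matrix (Fin n) (Fin n) ℂ)
  rw [Matrix.mul_apply]
  refine Finset.sum_congr rfl (fun i _ => ?_)
  rw [Matrix.mul_diagonal]
  simp only [Matrix.smul_apply, Matrix.vecMulVec_apply, Pi.star_apply, smul_eq_mul,
    Matrix.star_apply, Function.comp_apply]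
  rw [show (RCLike.ofReal (hP.1.eigenvalues i) : ℂ) = ((hP.1.eigenvalues i : ℝ) : ℂ) from rfl]
  ring


end Stmt5

open Stmt5 in
/-- Lemma 6.2 (1): for `0 ≤ l ≤ k ≤ n`, the map `A ↦ σ_l(A) / σ_k(A)` is monotone
decreasing in the Loewner order on positive definite Hermitian matrices. -/
theorem stmt5 (n l k : ℕ) (hlk : l ≤ k) (hkn : k ≤ n)
    (A B : Matrix (Fin n) (Fin n) ℂ) (hA : A.PosDef) (hB : B.PosDef)
    (hAB : (B - A).PosSemidef) :
    esymm B l / esymm B k ≤ esymm A l / esymm A k := by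
  classical
  set P : Matrix (Fin n) (Fin n) ℂ := B - A with hP'
  have hP : P.PosSemidef := hAB
  set α : Fin n → ℝ := hP.1.eigenvalues with hα
  have hα0 : ∀ i, 0 ≤ α i := fun i => hP.eigenvalues_nonneg i
  set u : Fin n → Fin n → ℂ :=
    fun i j => (hP.1.eigenvectorUnitary : Matrix (Fin n) (Fin n) ℂ) j i with hu
  set term : Fin n → Matrix (Fin n) (Fin n) ℂ :=
    fun i => ((α i : ℝ) : ℂ) • Matrix.vecMulVec (u i) (star (u i)) with hterm
  have hsum : A + ∑ i, term i = B := by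
    have := psd_sum_rank_one hP
    rw [hterm]
    rw [← this]
    rw [hP']
    abel
  have main : ∀ s : Finset (Fin n),
      (A + ∑ i ∈ s, term i).PosDef ∧
      (cE (A + ∑ i ∈ s, term i) l).re / (cE (A + ∑ i ∈ s, term i) k).re
        ≤ (cE A l).re / (cE A k).re := by
    intro s
    induction s using Finset.induction_on with
    | empty =>
      constructor
      · simpa using hA
      · simp
    | @insert j s hj IH =>
      obtain ⟨IH1, IH2⟩ := IH
      have hstep : A + ∑ i ∈ insert j s, term i = (A + ∑ i ∈ s, term i) + term j := by
        rw [Finset.sum_insert hj]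
        abel
      constructor
      · rw [hstep]
        exact IH1.add_posSemidef (smul_vecMulVec_posSemidef (α j) (hα0 j) (u j))
      · rw [hstep]
        exact le_trans (rank_one_step IH1 (α j) (hα0 j) (u j) hlk hkn) IH2
  have hfin := (main Finset.univ).2
  rw [hsum] at hfin
  rw [esymm_eq_cE, esymm_eq_cE, esymm_eq_cE, esymm_eq_cE]
  exact hfin
end

section
/- Let 0 ≤ r ≤ l ≤ k ≤ n be integers, let A be an n×n positive definite Hermitian complex matrix, and let U be an n×(n−r) complex matrix with Uᴴ U equal to the (n−r)×(n−r) identity (so the columns of U form an orthonormal basis of an (n−r)-dimensional subspace H, and Uᴴ A U represents the compression A|_H of A to H). Then σ_{l−r}(Uᴴ A U)/σ_{k−r}(Uᴴ A U) ≤ σ_l(A)/σ_k(A). (Lemma 6.2 (2).) -/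
open Matrix ComplexOrder

namespace Lem62
section
open Polynomial



lemma esymm_zero' (s : Multiset ℝ) : s.esymm 0 = 1 := by
  simp [Multiset.esymm]

lemma esymm_cons (a : ℝ) (s : Multiset ℝ) (k : ℕ) :
    (a ::ₘ s).esymm (k+1) = a * s.esymm k + s.esymm (k+1) := by
  simp only [Multiset.esymm, Multiset.powersetCard_cons, Multiset.map_add, Multiset.sum_add,
    Multiset.map_map]
  rw [add_comm]
  congr 1
  simp [Function.comp_def, Multiset.prod_cons, ← Multiset.sum_map_mul_left]

lemma esymm_nonneg {s : Multiset ℝ} (h : ∀ x ∈ s, 0 ≤ x) (k : ℕ) : 0 ≤ s.esymm k := by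
  induction s using Multiset.induction generalizing k with
  | empty =>
    cases k with
    | zero => simp [esymm_zero']
    | succ k => simp [Multiset.esymm, Multiset.powersetCard_zero_right]
  | cons a s ih =>
    have ha : 0 ≤ a := h a (Multiset.mem_cons_self a s)
    have hs : ∀ x ∈ s, 0 ≤ x := fun x hx => h x (Multiset.mem_cons_of_mem hx)
    cases k with
    | zero => simp [esymm_zero']
    | succ k =>
      rw [esymm_cons]
      have := ih hs k
      have := ih hs (k+1)
      positivity

lemma esymm_eq_zero {s : Multiset ℝ} {k : ℕ} (h : Multiset.card s < k) : s.esymm k = 0 := by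
  induction s using Multiset.induction generalizing k with
  | empty =>
    cases k with
    | zero => omega
    | succ k => simp [Multiset.esymm, Multiset.powersetCard_zero_right]
  | cons a s ih =>
    cases k with
    | zero => simp at h
    | succ k =>
      rw [esymm_cons]
      simp only [Multiset.card_cons] at h
      rw [ih (by omega), ih (by omega)]
      ring

lemma esymm_pos {s : Multiset ℝ} (h : ∀ x ∈ s, 0 < x) {k : ℕ} (hk : k ≤ Multiset.card s) :
    0 < s.esymm k := by
  induction s using Multiset.induction generalizing k with
  | empty =>
    simp at hk
    simp [hk, esymm_zero']
  | cons a s ih =>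
    have ha : 0 < a := h a (Multiset.mem_cons_self a s)
    have hs : ∀ x ∈ s, 0 < x := fun x hx => h x (Multiset.mem_cons_of_mem hx)
    cases k with
    | zero => simp [esymm_zero']
    | succ k =>
      rw [esymm_cons]
      simp only [Multiset.card_cons] at hk
      have h1 : 0 < a * s.esymm k := mul_pos ha (ih hs (by omega))
      have h2 : 0 ≤ s.esymm (k+1) := esymm_nonneg (fun x hx => (hs x hx).le) _
      linarith

/-- staggered Newton inequality -/
lemma newton {s : Multiset ℝ} (h : ∀ x ∈ s, 0 ≤ x) :
    ∀ p q : ℕ, p ≤ q → s.esymm p * s.esymm (q+1) ≤ s.esymm (p+1) * s.esymm q := by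
  induction s using Multiset.induction with
  | empty =>
    intro p q hpq
    have h1 : (0 : Multiset ℝ).esymm (q+1) = 0 := esymm_eq_zero (by simp)
    have h2 : (0 : Multiset ℝ).esymm (p+1) = 0 := esymm_eq_zero (by simp)
    rw [h1, h2]
    simp
  | cons a s ih =>
    have ha : 0 ≤ a := h a (Multiset.mem_cons_self a s)
    have hs : ∀ x ∈ s, 0 ≤ x := fun x hx => h x (Multiset.mem_cons_of_mem hx)
    have ihs := ih hs
    have nn : ∀ t : ℕ, 0 ≤ s.esymm t := esymm_nonneg hs
    intro p q hpq
    cases p with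
    | zero =>
      cases q with
      | zero => rw [mul_comm]
      | succ q' =>
        simp only [esymm_cons, esymm_zero']
        have i1 := ihs 0 q' (by omega)
        have i2 := ihs 0 (q'+1) (by omega)
        norm_num [esymm_zero'] at i1 i2
        nlinarith [nn q', nn (q'+1), nn (q'+2), nn 1, mul_nonneg ha ha,
          mul_nonneg (mul_nonneg ha ha) (nn q'), mul_nonneg ha (mul_nonneg (nn 1) (nn q'))]
    | succ p' =>
      cases q with
      | zero => omega
      | succ q' =>
        have hp'q' : p' ≤ q' := by omega
        rw [esymm_cons, esymm_cons, esymm_cons, esymm_cons]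
        rcases eq_or_lt_of_le hp'q' with he | hlt
        · subst he
          ring_nf
          exact le_refl _
        · have i1 := ihs p' q' hp'q'
          have i2 := ihs p' (q'+1) (by omega)
          have i3 := ihs (p'+1) q' (by omega)
          have i4 := ihs (p'+1) (q'+1) (by omega)
          nlinarith [mul_nonneg (mul_nonneg ha ha) (sub_nonneg.2 i1),
            mul_nonneg ha (sub_nonneg.2 i2), mul_nonneg ha (sub_nonneg.2 i3),
            sub_nonneg.2 i4]




lemma step_add {s : Multiset ℝ} (h : ∀ x ∈ s, 0 ≤ x) {a : ℝ} (ha : 0 ≤ a) (u : ℕ) :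
    s.esymm u * (a ::ₘ s).esymm (u+2) ≤ s.esymm (u+1) * (a ::ₘ s).esymm (u+1) := by
  have h2 : (a ::ₘ s).esymm (u+2) = a * s.esymm (u+1) + s.esymm (u+2) := esymm_cons a s (u+1)
  rw [h2, esymm_cons]
  have hn := newton h u (u+1) (by omega)
  nlinarith [esymm_nonneg h u, esymm_nonneg h (u+1), esymm_nonneg h (u+2)]

lemma head_mono {t : Multiset ℝ} (h : ∀ x ∈ t, 0 ≤ x) {a b : ℝ} (hb : 0 ≤ b) (hba : b ≤ a)
    (i : ℕ) :
    (a ::ₘ t).esymm i * (b ::ₘ t).esymm (i+1) ≤ (b ::ₘ t).esymm i * (a ::ₘ t).esymm (i+1) := by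
  cases i with
  | zero =>
    simp only [esymm_zero', esymm_cons, one_mul]
    linarith
  | succ i' =>
    have e1 : (a ::ₘ t).esymm (i'+1) = a * t.esymm i' + t.esymm (i'+1) := esymm_cons a t i'
    have e2 : (b ::ₘ t).esymm (i'+1) = b * t.esymm i' + t.esymm (i'+1) := esymm_cons b t i'
    have e3 : (a ::ₘ t).esymm (i'+2) = a * t.esymm (i'+1) + t.esymm (i'+2) := esymm_cons a t (i'+1)
    have e4 : (b ::ₘ t).esymm (i'+2) = b * t.esymm (i'+1) + t.esymm (i'+2) := esymm_cons b t (i'+1)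
    rw [e1, e2, e3, e4]
    have hn := newton h i' (i'+1) (by omega)
    nlinarith [esymm_nonneg h i', esymm_nonneg h (i'+1), esymm_nonneg h (i'+2), sub_nonneg.2 hba]

lemma forall₂_pos_left {L M : List ℝ} (h : List.Forall₂ (fun x y => 0 < x ∧ x ≤ y) L M) :
    ∀ z ∈ (↑L : Multiset ℝ), 0 < z := by
  induction h with
  | nil => simp
  | cons hxy h ih =>
    intro z hz
    simp only [Multiset.mem_coe, List.mem_cons] at hz
    rcases hz with rfl | hz
    · exact hxy.1
    · exact ih z (Multiset.mem_coe.2 hz)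

lemma forall₂_pos_right {L M : List ℝ} (h : List.Forall₂ (fun x y => 0 < x ∧ x ≤ y) L M) :
    ∀ z ∈ (↑M : Multiset ℝ), 0 < z := by
  induction h with
  | nil => simp
  | cons hxy h ih =>
    intro z hz
    simp only [Multiset.mem_coe, List.mem_cons] at hz
    rcases hz with rfl | hz
    · exact lt_of_lt_of_le hxy.1 hxy.2
    · exact ih z (Multiset.mem_coe.2 hz)

lemma ratio_mono {L M : List ℝ} (h : List.Forall₂ (fun x y => 0 < x ∧ x ≤ y) L M) :
    ∀ i : ℕ, (↑M : Multiset ℝ).esymm i * (↑L : Multiset ℝ).esymm (i+1) ≤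
      (↑L : Multiset ℝ).esymm i * (↑M : Multiset ℝ).esymm (i+1) := by
  induction h with
  | nil => intro i; rw [mul_comm]
  | @cons x y L' M' hxy h ih =>
    intro i
    have hlen : L'.length = M'.length := h.length_eq
    have hLpos := forall₂_pos_left h
    have hMpos := forall₂_pos_right h
    have hLnn : ∀ z ∈ (↑L' : Multiset ℝ), 0 ≤ z := fun z hz => (hLpos z hz).le
    have hMnn : ∀ z ∈ (↑M' : Multiset ℝ), 0 ≤ z := fun z hz => (hMpos z hz).le
    have hx : 0 < x := hxy.1
    have hxy' : x ≤ y := hxy.2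
    -- two-step consequence of ih
    have two : ∀ i' : ℕ, (↑M' : Multiset ℝ).esymm i' * (↑L' : Multiset ℝ).esymm (i'+2) ≤
        (↑L' : Multiset ℝ).esymm i' * (↑M' : Multiset ℝ).esymm (i'+2) := by
      intro i'
      by_cases hc : i' + 1 ≤ L'.length
      · have hS : 0 < (↑L' : Multiset ℝ).esymm (i'+1) :=
          esymm_pos hLpos (by simpa using hc)
        have hT : 0 < (↑M' : Multiset ℝ).esymm (i'+1) :=
          esymm_pos hMpos (by simp [← hlen]; omega)
        have c1 := ih i'
        have c2 := ih (i'+1)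
        have key : ((↑M' : Multiset ℝ).esymm i' * (↑L' : Multiset ℝ).esymm (i'+2)) *
            ((↑L' : Multiset ℝ).esymm (i'+1) * (↑M' : Multiset ℝ).esymm (i'+1)) ≤
            ((↑L' : Multiset ℝ).esymm i' * (↑M' : Multiset ℝ).esymm (i'+2)) *
            ((↑L' : Multiset ℝ).esymm (i'+1) * (↑M' : Multiset ℝ).esymm (i'+1)) := by
          nlinarith [esymm_nonneg hLnn i', esymm_nonneg hLnn (i'+1), esymm_nonneg hLnn (i'+2),
            esymm_nonneg hMnn i', esymm_nonneg hMnn (i'+1), esymm_nonneg hMnn (i'+2),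
            mul_le_mul c1 c2 (mul_nonneg (esymm_nonneg hMnn (i'+1)) (esymm_nonneg hLnn (i'+2)))
              (mul_nonneg (esymm_nonneg hLnn i') (esymm_nonneg hMnn (i'+1)))]
        exact le_of_mul_le_mul_right key (mul_pos hS hT)
      · have hz : (↑L' : Multiset ℝ).esymm (i'+2) = 0 := esymm_eq_zero (by simp; omega)
        rw [hz, mul_zero]
        exact mul_nonneg (esymm_nonneg hLnn i') (esymm_nonneg hMnn (i'+2))
    show (y ::ₘ (↑M' : Multiset ℝ)).esymm i * (x ::ₘ (↑L' : Multiset ℝ)).esymm (i+1) ≤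
      (x ::ₘ (↑L' : Multiset ℝ)).esymm i * (y ::ₘ (↑M' : Multiset ℝ)).esymm (i+1)
    -- chain through x ::ₘ M'
    have part1 := head_mono hMnn hx.le hxy' i
    -- part2 : tail change with head x
    have part2 : (x ::ₘ (↑M' : Multiset ℝ)).esymm i * (x ::ₘ (↑L' : Multiset ℝ)).esymm (i+1) ≤
        (x ::ₘ (↑L' : Multiset ℝ)).esymm i * (x ::ₘ (↑M' : Multiset ℝ)).esymm (i+1) := by
      cases i with
      | zero =>
        simp only [esymm_zero', one_mul, esymm_cons]
        have := ih 0
        simp only [esymm_zero', one_mul] at this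
        linarith
      | succ i' =>
        have e1 : (x ::ₘ (↑M' : Multiset ℝ)).esymm (i'+1)
            = x * (↑M' : Multiset ℝ).esymm i' + (↑M' : Multiset ℝ).esymm (i'+1) := esymm_cons ..
        have e2 : (x ::ₘ (↑L' : Multiset ℝ)).esymm (i'+1)
            = x * (↑L' : Multiset ℝ).esymm i' + (↑L' : Multiset ℝ).esymm (i'+1) := esymm_cons ..
        have e3 : (x ::ₘ (↑M' : Multiset ℝ)).esymm (i'+2)
            = x * (↑M' : Multiset ℝ).esymm (i'+1) + (↑M' : Multiset ℝ).esymm (i'+2) :=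
          esymm_cons x _ (i'+1)
        have e4 : (x ::ₘ (↑L' : Multiset ℝ)).esymm (i'+2)
            = x * (↑L' : Multiset ℝ).esymm (i'+1) + (↑L' : Multiset ℝ).esymm (i'+2) :=
          esymm_cons x _ (i'+1)
        rw [e1, e2, e3, e4]
        have c1 := ih i'
        have c2 := ih (i'+1)
        have c3 := two i'
        nlinarith [mul_nonneg (mul_nonneg hx.le hx.le) (sub_nonneg.2 c1),
          mul_nonneg hx.le (sub_nonneg.2 c3), sub_nonneg.2 c2]
    -- transitivity via cancellation
    have hSMpos : ∀ z ∈ (x ::ₘ (↑M' : Multiset ℝ)), 0 < z := by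
      intro z hz
      rcases Multiset.mem_cons.1 hz with rfl | hz
      · exact hx
      · exact hMpos z hz
    have hSLpos : ∀ z ∈ (x ::ₘ (↑L' : Multiset ℝ)), 0 < z := by
      intro z hz
      rcases Multiset.mem_cons.1 hz with rfl | hz
      · exact hx
      · exact hLpos z hz
    have hYMpos : ∀ z ∈ (y ::ₘ (↑M' : Multiset ℝ)), 0 < z := by
      intro z hz
      rcases Multiset.mem_cons.1 hz with rfl | hz
      · exact lt_of_lt_of_le hx hxy'
      · exact hMpos z hz
    by_cases hc : i + 1 ≤ L'.length + 1
    · have hm1 : 0 < (x ::ₘ (↑M' : Multiset ℝ)).esymm i := esymm_pos hSMpos (by simp [← hlen]; omega)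
      have hm2 : 0 < (x ::ₘ (↑M' : Multiset ℝ)).esymm (i+1) := esymm_pos hSMpos (by simp [← hlen]; omega)
      have key : ((y ::ₘ (↑M' : Multiset ℝ)).esymm i * (x ::ₘ (↑L' : Multiset ℝ)).esymm (i+1)) *
          ((x ::ₘ (↑M' : Multiset ℝ)).esymm i * (x ::ₘ (↑M' : Multiset ℝ)).esymm (i+1)) ≤
          ((x ::ₘ (↑L' : Multiset ℝ)).esymm i * (y ::ₘ (↑M' : Multiset ℝ)).esymm (i+1)) *
          ((x ::ₘ (↑M' : Multiset ℝ)).esymm i * (x ::ₘ (↑M' : Multiset ℝ)).esymm (i+1)) := by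
        nlinarith [mul_le_mul part1 part2
            (mul_nonneg (esymm_nonneg (fun z hz => (hSMpos z hz).le) i)
              (esymm_nonneg (fun z hz => (hSLpos z hz).le) (i+1)))
            (mul_nonneg (esymm_nonneg (fun z hz => (hSMpos z hz).le) i)
              (esymm_nonneg (fun z hz => (hYMpos z hz).le) (i+1)))]
      exact le_of_mul_le_mul_right key (mul_pos hm1 hm2)
    · have hz : (x ::ₘ (↑L' : Multiset ℝ)).esymm (i+1) = 0 := esymm_eq_zero (by simp; omega)
      rw [hz, mul_zero]
      exact mul_nonneg (esymm_nonneg (fun z hz => (hSLpos z hz).le) i)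
        (esymm_nonneg (fun z hz => (hYMpos z hz).le) (i+1))



lemma ratio_shift {L : Multiset ℝ} (hL : ∀ x ∈ L, 0 < x) :
    ∀ (c : List ℝ), (∀ x ∈ c, 0 < x) → ∀ t : ℕ, t + 1 ≤ Multiset.card L →
    L.esymm t * ((↑c : Multiset ℝ) + L).esymm (t + c.length + 1) ≤
      L.esymm (t+1) * ((↑c : Multiset ℝ) + L).esymm (t + c.length) := by
  intro c
  induction c with
  | nil =>
    intro _ t _
    simp [mul_comm]
  | cons a c' ih =>
    intro hc t ht
    have ha : 0 < a := hc a List.mem_cons_self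
    have hc' : ∀ x ∈ c', 0 < x := fun x hx => hc x (List.mem_cons_of_mem a hx)
    have hspos : ∀ x ∈ ((↑c' : Multiset ℝ) + L), 0 < x := by
      intro x hx
      rcases Multiset.mem_add.1 hx with hx | hx
      · exact hc' x (Multiset.mem_coe.1 hx)
      · exact hL x hx
    have hsnn : ∀ x ∈ ((↑c' : Multiset ℝ) + L), 0 ≤ x := fun x hx => (hspos x hx).le
    have hLnn : ∀ x ∈ L, 0 ≤ x := fun x hx => (hL x hx).le
    set s : Multiset ℝ := (↑c' : Multiset ℝ) + L with hs
    set u : ℕ := t + c'.length with hu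
    have hcoe : ((↑(a :: c') : Multiset ℝ) + L) = a ::ₘ s := by
      rw [hs, ← Multiset.cons_coe, Multiset.cons_add]
    have hlen : t + (a :: c').length = u + 1 := by simp [hu, List.length_cons]; omega
    rw [hcoe, hlen]
    have step := step_add hsnn ha.le u
    have iht := ih hc' t ht
    -- cancel s.esymm u > 0
    have hBpos : 0 < s.esymm u := by
      apply esymm_pos hspos
      simp [hs, hu]
      omega
    have key : (L.esymm t * (a ::ₘ s).esymm (u + 1 + 1)) * s.esymm u ≤
        (L.esymm (t+1) * (a ::ₘ s).esymm (u + 1)) * s.esymm u := by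
      have e1 : L.esymm t * (a ::ₘ s).esymm (u+2) * s.esymm u
          ≤ L.esymm t * (s.esymm (u+1) * (a ::ₘ s).esymm (u+1)) := by
        have := mul_le_mul_of_nonneg_left step (esymm_nonneg hLnn t)
        nlinarith [esymm_nonneg hLnn t]
      have e2 : L.esymm t * (s.esymm (u+1) * (a ::ₘ s).esymm (u+1))
          ≤ L.esymm (t+1) * (a ::ₘ s).esymm (u+1) * s.esymm u := by
        have h2 := mul_le_mul_of_nonneg_right iht
          (esymm_nonneg (fun x hx => by
            rcases Multiset.mem_cons.1 hx with rfl | hx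
            exacts [ha.le, hsnn x hx]) (u+1))
        calc L.esymm t * (s.esymm (u+1) * (a ::ₘ s).esymm (u+1))
            = L.esymm t * s.esymm (u+1) * (a ::ₘ s).esymm (u+1) := by ring
          _ ≤ L.esymm (t+1) * s.esymm u * (a ::ₘ s).esymm (u+1) := h2
          _ = L.esymm (t+1) * (a ::ₘ s).esymm (u+1) * s.esymm u := by ring
      calc (L.esymm t * (a ::ₘ s).esymm (u + 1 + 1)) * s.esymm u
          = L.esymm t * (a ::ₘ s).esymm (u+2) * s.esymm u := by norm_num
        _ ≤ L.esymm t * (s.esymm (u+1) * (a ::ₘ s).esymm (u+1)) := e1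
        _ ≤ L.esymm (t+1) * (a ::ₘ s).esymm (u+1) * s.esymm u := e2
        _ = (L.esymm (t+1) * (a ::ₘ s).esymm (u + 1)) * s.esymm u := by ring
    exact le_of_mul_le_mul_right key hBpos

/-- the final chaining over j from l to k -/
lemma chain (Λ Μ : Multiset ℝ) (l k r : ℕ) (hrl : r ≤ l) (hlk : l ≤ k)
    (hM0 : 0 ≤ Μ.esymm (l - r))
    (hMnn : ∀ j : ℕ, 0 ≤ Μ.esymm j)
    (posL : ∀ j : ℕ, l ≤ j → j ≤ k → 0 < Λ.esymm j)
    (H : ∀ j : ℕ, l ≤ j → j < k →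
      Μ.esymm (j - r) * Λ.esymm (j+1) ≤ Μ.esymm (j - r + 1) * Λ.esymm j) :
    Μ.esymm (l - r) * Λ.esymm k ≤ Λ.esymm l * Μ.esymm (k - r) := by
  have main : ∀ j : ℕ, l ≤ j → j ≤ k →
      Μ.esymm (l - r) * Λ.esymm j ≤ Λ.esymm l * Μ.esymm (j - r) := by
    intro j hj hjk
    induction j, hj using Nat.le_induction with
    | base => rw [mul_comm]
    | succ j hj ihj =>
      have hjk' : j < k := by omega
      have ihj' := ihj (by omega)
      have hH := H j hj hjk'
      have hpos : 0 < Λ.esymm j := posL j hj (by omega)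
      have hsub : j + 1 - r = j - r + 1 := by omega
      rw [hsub]
      have key : (Μ.esymm (l - r) * Λ.esymm (j+1)) * Λ.esymm j ≤
          (Λ.esymm l * Μ.esymm (j - r + 1)) * Λ.esymm j := by
        have e1 : Μ.esymm (l - r) * Λ.esymm (j+1) * Λ.esymm j
            = (Μ.esymm (l-r) * Λ.esymm j) * Λ.esymm (j+1) := by ring
        have e2 := mul_le_mul_of_nonneg_right ihj' (posL (j+1) (by omega) (by omega)).le
        have e3 := mul_le_mul_of_nonneg_left hH (posL l (le_refl l) (by omega)).le
        calc Μ.esymm (l - r) * Λ.esymm (j+1) * Λ.esymm j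
            = (Μ.esymm (l-r) * Λ.esymm j) * Λ.esymm (j+1) := by ring
          _ ≤ (Λ.esymm l * Μ.esymm (j - r)) * Λ.esymm (j+1) := e2
          _ = Λ.esymm l * (Μ.esymm (j - r) * Λ.esymm (j+1)) := by ring
          _ ≤ Λ.esymm l * (Μ.esymm (j - r + 1) * Λ.esymm j) := e3
          _ = Λ.esymm l * Μ.esymm (j - r + 1) * Λ.esymm j := by ring
      exact le_of_mul_le_mul_right key hpos
  exact main k hlk (le_refl k)

lemma tj {Lo Hi : List ℝ} (h : List.Forall₂ (fun x y => 0 < x ∧ x ≤ y) Lo Hi)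
    {c : List ℝ} (hc : ∀ x ∈ c, 0 < x) (i : ℕ) (hi : i + 1 ≤ Lo.length) :
    (↑Hi : Multiset ℝ).esymm i * ((↑c : Multiset ℝ) + ↑Lo).esymm (i + c.length + 1) ≤
      (↑Hi : Multiset ℝ).esymm (i+1) * ((↑c : Multiset ℝ) + ↑Lo).esymm (i + c.length) := by
  have hLo := forall₂_pos_left h
  have hHi := forall₂_pos_right h
  have hLonn : ∀ z ∈ (↑Lo : Multiset ℝ), 0 ≤ z := fun z hz => (hLo z hz).le
  have hHinn : ∀ z ∈ (↑Hi : Multiset ℝ), 0 ≤ z := fun z hz => (hHi z hz).le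
  have hΛnn : ∀ z ∈ ((↑c : Multiset ℝ) + ↑Lo), 0 ≤ z := by
    intro z hz
    rcases Multiset.mem_add.1 hz with hz | hz
    · exact (hc z (Multiset.mem_coe.1 hz)).le
    · exact hLonn z hz
  have r1 := ratio_mono h i
  have r2 := ratio_shift hLo c hc i (by simpa using hi)
  have hB1 : 0 < (↑Lo : Multiset ℝ).esymm i := esymm_pos hLo (by simp; omega)
  have hB2 : 0 < (↑Lo : Multiset ℝ).esymm (i+1) := esymm_pos hLo (by simpa using hi)
  have key : ((↑Hi : Multiset ℝ).esymm i * ((↑c : Multiset ℝ) + ↑Lo).esymm (i + c.length + 1)) *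
      ((↑Lo : Multiset ℝ).esymm i * (↑Lo : Multiset ℝ).esymm (i+1)) ≤
      ((↑Hi : Multiset ℝ).esymm (i+1) * ((↑c : Multiset ℝ) + ↑Lo).esymm (i + c.length)) *
      ((↑Lo : Multiset ℝ).esymm i * (↑Lo : Multiset ℝ).esymm (i+1)) := by
    have e := mul_le_mul r1 r2
      (mul_nonneg (esymm_nonneg hLonn i) (esymm_nonneg hΛnn (i + c.length + 1)))
      (mul_nonneg (esymm_nonneg hLonn i) (esymm_nonneg hHinn (i+1)))
    nlinarith [e]
  exact le_of_mul_le_mul_right key (mul_pos hB1 hB2)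


variable {ι : Type*} [Fintype ι] [DecidableEq ι]

lemma det_unit_rows {R : Type*} [CommRing R] (M : Matrix ι ι R) (S : Finset ι) :
    Matrix.det (Matrix.of (S.piecewise M (fun i => Pi.single i 1))) =
      (M.submatrix ((↑) : {x // x ∈ S} → ι) ((↑) : {x // x ∈ S} → ι)).det := by
  rw [← Matrix.det_submatrix_equiv_self (Equiv.sumCompl (· ∈ S))]
  have hblock : (Matrix.of (S.piecewise M (fun i => Pi.single i 1))).submatrix
      (Equiv.sumCompl (· ∈ S)) (Equiv.sumCompl (· ∈ S)) =
      Matrix.fromBlocks (M.submatrix ((↑) : {x // x ∈ S} → ι) ((↑) : {x // x ∈ S} → ι))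
        (M.submatrix ((↑) : {x // x ∈ S} → ι) ((↑) : {x // x ∉ S} → ι)) 0 1 := by
    ext i j
    rcases i with i | i <;> rcases j with j | j <;>
      simp only [Matrix.submatrix_apply, Matrix.of_apply, Equiv.sumCompl_apply_inl,
        Equiv.sumCompl_apply_inr, Matrix.fromBlocks_apply₁₁, Matrix.fromBlocks_apply₁₂,
        Matrix.fromBlocks_apply₂₁, Matrix.fromBlocks_apply₂₂]
    · simp only [Finset.piecewise, if_pos i.2]
    · simp only [Finset.piecewise, if_pos i.2]
    · simp only [Finset.piecewise, if_neg i.2]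
      have : (i : ι) ≠ (j : ι) := by
        intro hij
        exact i.2 (hij ▸ j.2)
      simp [Pi.single_apply, this.symm, Matrix.zero_apply]
    · simp only [Finset.piecewise, if_neg i.2]
      simp [Pi.single_apply, Matrix.one_apply, eq_comm, Subtype.ext_iff]
  rw [hblock, Matrix.det_fromBlocks_zero₂₁, Matrix.det_one, mul_one]

lemma det_X_smul_one_add (M : Matrix ι ι ℂ) :
    Matrix.det ((Polynomial.X : ℂ[X]) • (1 : Matrix ι ι ℂ[X]) + M.map Polynomial.C) =
      ∑ s : Finset ι, (Polynomial.X : ℂ[X]) ^ (Fintype.card ι - s.card) *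
        Polynomial.C ((M.submatrix ((↑) : {x // x ∈ s} → ι) ((↑) : {x // x ∈ s} → ι)).det) := by
  have hrows : ((Polynomial.X : ℂ[X]) • (1 : Matrix ι ι ℂ[X]) + M.map Polynomial.C) =
      Matrix.of ((fun i => (M.map Polynomial.C) i) + (fun i => (Polynomial.X : ℂ[X]) • (Pi.single i 1 : ι → ℂ[X]))) := by
    ext i j
    by_cases h : i = j <;>
      simp [Matrix.one_apply, Pi.single_apply, h, add_comm]
  rw [hrows]
  have expand : Matrix.det (Matrix.of ((fun i => (M.map Polynomial.C) i) +
      (fun i => (Polynomial.X : ℂ[X]) • (Pi.single i 1 : ι → ℂ[X])))) =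
      ∑ s : Finset ι, (Matrix.detRowAlternating (R := ℂ[X]) (n := ι))
        (s.piecewise (fun i => (M.map Polynomial.C) i)
          (fun i => (Polynomial.X : ℂ[X]) • (Pi.single i 1 : ι → ℂ[X]))) :=
    (Matrix.detRowAlternating (R := ℂ[X]) (n := ι)).toMultilinearMap.map_add_univ _ _
  rw [expand]
  apply Finset.sum_congr rfl
  intro s _
  -- rewrite the piecewise as scaled base rows
  have hsplit : (s.piecewise (fun i => (M.map Polynomial.C) i)
        (fun i => (Polynomial.X : ℂ[X]) • (Pi.single i 1 : ι → ℂ[X]))) =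
      (sᶜ.piecewise (fun i => (Polynomial.X : ℂ[X]) •
          (s.piecewise (fun i' => (M.map Polynomial.C) i') (fun i' => Pi.single i' 1)) i)
        (s.piecewise (fun i' => (M.map Polynomial.C) i') (fun i' => Pi.single i' 1))) := by
    ext i j
    by_cases h : i ∈ s <;>
      simp [Finset.piecewise, h]
  rw [hsplit]
  have mstep : (Matrix.detRowAlternating (R := ℂ[X]) (n := ι))
      (sᶜ.piecewise (fun i => (Polynomial.X : ℂ[X]) •
          (s.piecewise (fun i' => (M.map Polynomial.C) i') (fun i' => Pi.single i' 1)) i)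
        (s.piecewise (fun i' => (M.map Polynomial.C) i') (fun i' => Pi.single i' 1))) =
      (∏ _i ∈ sᶜ, (Polynomial.X : ℂ[X])) • (Matrix.detRowAlternating (R := ℂ[X]) (n := ι))
        (s.piecewise (fun i' => (M.map Polynomial.C) i') (fun i' => Pi.single i' 1)) :=
    (Matrix.detRowAlternating (R := ℂ[X]) (n := ι)).toMultilinearMap.map_piecewise_smul
      (fun _ => (Polynomial.X : ℂ[X])) _ sᶜ
  rw [mstep]
  have hbase : (Matrix.detRowAlternating (R := ℂ[X]) (n := ι))
      (s.piecewise (fun i' => (M.map Polynomial.C) i') (fun i' => Pi.single i' 1)) =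
      Polynomial.C ((M.submatrix ((↑) : {x // x ∈ s} → ι) ((↑) : {x // x ∈ s} → ι)).det) := by
    have : (Matrix.detRowAlternating (R := ℂ[X]) (n := ι))
        (s.piecewise (fun i' => (M.map Polynomial.C) i') (fun i' => Pi.single i' 1)) =
        Matrix.det (Matrix.of (s.piecewise (M.map Polynomial.C) (fun i => Pi.single i 1))) := by
      congr 1
    rw [this, det_unit_rows, Matrix.submatrix_map]
    exact ((Polynomial.C : ℂ →+* ℂ[X]).map_det _).symm
  rw [hbase, Finset.prod_const, Finset.card_compl, smul_eq_mul]




lemma esymm_ofReal (s : Multiset ℝ) (k : ℕ) :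
    ((s.map (fun x : ℝ => (x : ℂ))).esymm k) = ((s.esymm k : ℝ) : ℂ) := by
  rw [Multiset.esymm, Multiset.esymm, Multiset.powersetCard_map, Multiset.map_map]
  have h1 : Multiset.map (Multiset.prod ∘ Multiset.map (fun x : ℝ => (x:ℂ)))
        (Multiset.powersetCard k s)
      = Multiset.map ((⇑Complex.ofRealHom) ∘ Multiset.prod) (Multiset.powersetCard k s) :=
    Multiset.map_congr rfl (fun u _ => (map_multiset_prod Complex.ofRealHom u).symm)
  rw [h1, ← Multiset.map_map, ← map_multiset_sum]
  rfl

lemma det_eq_prod_eig (M : Matrix ι ι ℂ) (hM : M.IsHermitian) :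
    Matrix.det ((Polynomial.X : Polynomial ℂ) • (1 : Matrix ι ι (Polynomial ℂ)) +
        M.map Polynomial.C) =
      ∏ i, ((Polynomial.X : Polynomial ℂ) + Polynomial.C ((hM.eigenvalues i : ℝ) : ℂ)) := by
  set W : Matrix ι ι ℂ := (Matrix.IsHermitian.eigenvectorUnitary hM : Matrix ι ι ℂ) with hW
  have hWW' : W * Wᴴ = 1 := by
    have := (Matrix.IsHermitian.eigenvectorUnitary hM).2
    rw [Matrix.mem_unitaryGroup_iff] at this
    simpa [Matrix.star_eq_conjTranspose] using this
  have hW'W : Wᴴ * W = 1 := by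
    have := (Matrix.IsHermitian.eigenvectorUnitary hM).2
    rw [Matrix.mem_unitaryGroup_iff'] at this
    simpa [Matrix.star_eq_conjTranspose] using this
  have hspec : M = W * Matrix.diagonal (fun i => ((hM.eigenvalues i : ℝ) : ℂ)) * Wᴴ := by
    have := hM.spectral_theorem
    rw [Unitary.conjStarAlgAut_apply, ← hW] at this
    exact this
  set Wc : Matrix ι ι (Polynomial ℂ) := W.map Polynomial.C with hWc
  set Wc' : Matrix ι ι (Polynomial ℂ) := (Wᴴ).map Polynomial.C with hWc'
  have h1 : Wc * Wc' = 1 := by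
    rw [hWc, hWc', ← Matrix.map_mul, hWW']
    ext i j
    simp [Matrix.one_apply, apply_ite]
  have h2 : ((Polynomial.X : Polynomial ℂ) • (1 : Matrix ι ι (Polynomial ℂ)) + M.map Polynomial.C)
      = Wc * ((Polynomial.X : Polynomial ℂ) • (1 : Matrix ι ι (Polynomial ℂ)) +
          (Matrix.diagonal (fun i => ((hM.eigenvalues i : ℝ) : ℂ))).map Polynomial.C) * Wc' := by
    rw [mul_add, add_mul, Matrix.mul_smul, Matrix.mul_one, Matrix.smul_mul, h1]
    congr 1
    conv_lhs => rw [hspec]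
    rw [Matrix.map_mul, Matrix.map_mul]
  rw [h2, Matrix.det_mul, Matrix.det_mul, mul_right_comm, ← Matrix.det_mul, h1,
    Matrix.det_one, one_mul]
  rw [Matrix.smul_one_eq_diagonal, Matrix.diagonal_map (Polynomial.C_0), Matrix.diagonal_add,
    Matrix.det_diagonal]

lemma esymm_eq_eig (M : Matrix ι ι ℂ) (hM : M.IsHermitian) (j : ℕ) :
    esymm M j = (Multiset.map hM.eigenvalues Finset.univ.val).esymm j := by
  by_cases hj : j ≤ Fintype.card ι
  case neg =>
    have h1 : Finset.powersetCard j (Finset.univ : Finset ι) = ∅ := by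
      rw [Finset.powersetCard_eq_empty]
      simpa [Finset.card_univ] using hj
    have h2 : (Multiset.map hM.eigenvalues Finset.univ.val).esymm j = 0 :=
      esymm_eq_zero (by simpa [Finset.card_univ] using hj)
    rw [esymm, h1, h2]
    simp
  case pos =>
    have key := det_X_smul_one_add M
    rw [det_eq_prod_eig M hM] at key
    have keyc := congrArg (fun p => Polynomial.coeff p (Fintype.card ι - j)) key
    -- LHS coeff
    rw [Polynomial.finset_sum_coeff] at keyc
    have hL : ∀ s : Finset ι, ((Polynomial.X : Polynomial ℂ) ^ (Fintype.card ι - s.card) *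
        Polynomial.C ((M.submatrix ((↑) : {x // x ∈ s} → ι) ((↑) : {x // x ∈ s} → ι)).det)).coeff
          (Fintype.card ι - j) =
        if s.card = j then
          ((M.submatrix ((↑) : {x // x ∈ s} → ι) ((↑) : {x // x ∈ s} → ι)).det) else 0 := by
      intro s
      rw [Polynomial.coeff_mul_C, Polynomial.coeff_X_pow]
      have hsc : s.card ≤ Fintype.card ι := by
        simpa [Finset.card_univ] using Finset.card_le_univ s
      by_cases h : s.card = j
      · simp [h]
      · have : ¬ (Fintype.card ι - j = Fintype.card ι - s.card) := by omega
        simp [this, h]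
    rw [Finset.sum_congr rfl (fun s _ => hL s)] at keyc
    rw [← Finset.sum_filter] at keyc
    have hfilter : (Finset.univ : Finset (Finset ι)).filter (fun s => s.card = j) =
        Finset.powersetCard j (Finset.univ : Finset ι) := by
      ext s
      simp [Finset.mem_powersetCard_univ]
    rw [hfilter] at keyc
    -- RHS coeff
    rw [Finset.prod_eq_multiset_prod] at keyc
    have hR := Multiset.prod_X_add_C_coeff' (Finset.univ : Finset ι).val
      (fun i => ((hM.eigenvalues i : ℝ) : ℂ))
      (k := Fintype.card ι - j) (by simpa [Finset.card_univ] using Nat.sub_le _ _)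
    rw [hR] at keyc
    have hcard : Multiset.card (Finset.univ : Finset ι).val = Fintype.card ι := by
      simp [Finset.card_univ]
    rw [hcard] at keyc
    have hjj : Fintype.card ι - (Fintype.card ι - j) = j := by omega
    rw [hjj] at keyc
    have hmap : (Multiset.map (fun i => ((hM.eigenvalues i : ℝ) : ℂ)) (Finset.univ : Finset ι).val)
        = (Multiset.map hM.eigenvalues (Finset.univ : Finset ι).val).map (fun x : ℝ => (x : ℂ)) := by
      rw [Multiset.map_map]
      rfl
    rw [hmap, esymm_ofReal] at keyc
    rw [esymm, ← keyc]
    simp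



lemma mulVec_inj {ι κ : Type*} [Fintype ι] [Fintype κ] [DecidableEq κ]
    (M : Matrix ι κ ℂ) (h : Mᴴ * M = 1) : Function.Injective M.mulVecLin := by
  intro x y hxy
  simp only [Matrix.mulVecLin_apply] at hxy
  have h2 := congrArg (fun v => Mᴴ *ᵥ v) hxy
  simpa [Matrix.mulVec_mulVec, h] using h2

lemma compress_dot {ι κ : Type*} [Fintype ι] [Fintype κ]
    (M : Matrix ι κ ℂ) (A : Matrix ι ι ℂ) (c : κ → ℂ) :
    star (M *ᵥ c) ⬝ᵥ (A *ᵥ (M *ᵥ c)) = star c ⬝ᵥ ((Mᴴ * A * M) *ᵥ c) := by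
  rw [Matrix.star_mulVec, Matrix.dotProduct_mulVec, Matrix.vecMul_vecMul,
    Matrix.dotProduct_mulVec, Matrix.vecMul_vecMul, ← Matrix.dotProduct_mulVec]

lemma isometry_dot {ι κ : Type*} [Fintype ι] [DecidableEq ι] [Fintype κ] [DecidableEq κ]
    (M : Matrix ι κ ℂ) (h : Mᴴ * M = 1) (c : κ → ℂ) :
    star (M *ᵥ c) ⬝ᵥ (M *ᵥ c) = star c ⬝ᵥ c := by
  have := compress_dot M 1 c
  simpa [Matrix.one_mulVec, h] using this

lemma posdef_compression {n m : ℕ} (A : Matrix (Fin n) (Fin n) ℂ) (hA : A.PosDef)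
    (U : Matrix (Fin n) (Fin m) ℂ) (hU : Uᴴ * U = 1) : (Uᴴ * A * U).PosDef := by
  refine Matrix.posDef_iff_dotProduct_mulVec.2 ⟨?_, ?_⟩
  · show (Uᴴ * A * U)ᴴ = Uᴴ * A * U
    rw [Matrix.conjTranspose_mul, Matrix.conjTranspose_mul, Matrix.conjTranspose_conjTranspose,
      hA.1.eq, Matrix.mul_assoc]
  · intro x hx
    have hUx : U *ᵥ x ≠ 0 := by
      intro h0
      apply hx
      have := congrArg (fun v => Uᴴ *ᵥ v) h0
      simpa [Matrix.mulVec_mulVec, hU] using this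
    have := hA.dotProduct_mulVec_pos hUx
    rwa [compress_dot U A x] at this

lemma dot_self_re {ι : Type*} [Fintype ι] (x : ι → ℂ) :
    (star x ⬝ᵥ x).re = ∑ i, Complex.normSq (x i) := by
  rw [dotProduct, Complex.re_sum]
  congr 1
  funext i
  simp [Complex.normSq_apply]

lemma dot_self_re_pos {ι : Type*} [Fintype ι] {x : ι → ℂ} (hx : x ≠ 0) :
    0 < (star x ⬝ᵥ x).re := by
  rw [dot_self_re]
  obtain ⟨i, hi⟩ : ∃ i, x i ≠ 0 := by
    by_contra h
    push_neg at h
    exact hx (funext h)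
  exact Finset.sum_pos' (fun j _ => Complex.normSq_nonneg _)
    ⟨i, Finset.mem_univ i, Complex.normSq_pos.2 hi⟩

lemma diag_dot_re {ι : Type*} [Fintype ι] [DecidableEq ι] (d : ι → ℝ) (c : ι → ℂ) :
    (star c ⬝ᵥ ((Matrix.diagonal (fun i => (d i : ℂ))) *ᵥ c)).re =
      ∑ i, d i * Complex.normSq (c i) := by
  rw [dotProduct, Complex.re_sum]
  congr 1
  funext i
  have : (Matrix.diagonal (fun i => (d i : ℂ)) *ᵥ c) i = (d i : ℂ) * c i := by
    simp [Matrix.mulVec_diagonal]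
  rw [Pi.star_apply, this]
  simp only [Complex.star_def, Complex.mul_re, Complex.mul_im, Complex.normSq_apply,
    Complex.conj_re, Complex.conj_im, Complex.ofReal_re, Complex.ofReal_im]
  ring



/-- selector matrix with orthonormal columns -/
lemma sel_isometry {p q : ℕ} (f : Fin p → Fin q) (hf : Function.Injective f) :
    (Matrix.of fun (i : Fin q) (j : Fin p) => if i = f j then (1:ℂ) else 0)ᴴ *
      (Matrix.of fun (i : Fin q) (j : Fin p) => if i = f j then (1:ℂ) else 0) = 1 := by
  ext u v
  simp only [Matrix.mul_apply, Matrix.conjTranspose_apply, Matrix.of_apply, Matrix.one_apply]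
  rw [Finset.sum_eq_single (f u)]
  · simp [hf.eq_iff, eq_comm]
  · intro i _ hi
    simp [hi]
  · simp

lemma sel_mulVec_support {p q : ℕ} (f : Fin p → Fin q) (c : Fin p → ℂ) (i : Fin q)
    (hi : ∀ j, i ≠ f j) :
    ((Matrix.of fun (i : Fin q) (j : Fin p) => if i = f j then (1:ℂ) else 0) *ᵥ c) i = 0 := by
  simp only [Matrix.mulVec, dotProduct, Matrix.of_apply]
  apply Finset.sum_eq_zero
  intro j _
  simp [hi j]

theorem interlace {n m : ℕ} (hmn : m ≤ n)
    (A : Matrix (Fin n) (Fin n) ℂ)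
    (U : Matrix (Fin n) (Fin m) ℂ) (hU : Uᴴ * U = 1)
    (W : Matrix (Fin n) (Fin n) ℂ) (hW : Wᴴ * W = 1)
    (a : Fin n → ℝ) (ha : Monotone a)
    (hWA : A = W * Matrix.diagonal (fun i => (a i : ℂ)) * Wᴴ)
    (V : Matrix (Fin m) (Fin m) ℂ) (hV : Vᴴ * V = 1)
    (b : Fin m → ℝ) (hb : Monotone b)
    (hVB : Uᴴ * A * U = V * Matrix.diagonal (fun i => (b i : ℂ)) * Vᴴ)
    (s : Fin m) : a (Fin.castLE hmn s) ≤ b s := by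
  have hsm : (s : ℕ) < m := s.2
  have hsn : (s : ℕ) < n := lt_of_lt_of_le hsm hmn
  -- selector embeddings
  set fJ : Fin ((s:ℕ)+1) → Fin m := fun j => ⟨(j : ℕ), by omega⟩ with hfJ
  have hfJinj : Function.Injective fJ := by
    intro u v huv
    have h2 := congrArg Fin.val huv
    have h3 : (u:ℕ) = (v:ℕ) := h2
    exact Fin.ext h3
  set fK : Fin (n - (s:ℕ)) → Fin n := fun j => ⟨(j : ℕ) + (s:ℕ), by omega⟩ with hfK
  have hfKinj : Function.Injective fK := by
    intro u v huv
    have h2 := congrArg Fin.val huv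
    have h3 : (u:ℕ) + (s:ℕ) = (v:ℕ) + (s:ℕ) := h2
    exact Fin.ext (by omega)
  set J : Matrix (Fin m) (Fin ((s:ℕ)+1)) ℂ :=
    Matrix.of fun i j => if i = fJ j then (1:ℂ) else 0 with hJdef
  set K : Matrix (Fin n) (Fin (n - (s:ℕ))) ℂ :=
    Matrix.of fun i j => if i = fK j then (1:ℂ) else 0 with hKdef
  have hJ : Jᴴ * J = 1 := sel_isometry fJ hfJinj
  have hK : Kᴴ * K = 1 := sel_isometry fK hfKinj
  -- isometries onto the two subspaces
  have hUVJ : (U * V * J)ᴴ * (U * V * J) = 1 := by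
    rw [Matrix.conjTranspose_mul, Matrix.conjTranspose_mul]
    calc Jᴴ * (Vᴴ * Uᴴ) * (U * V * J) = Jᴴ * (Vᴴ * ((Uᴴ * U) * V)) * J := by
          simp only [Matrix.mul_assoc]
      _ = 1 := by rw [hU, Matrix.one_mul, hV, Matrix.mul_one, hJ]
  have hWK : (W * K)ᴴ * (W * K) = 1 := by
    rw [Matrix.conjTranspose_mul]
    calc Kᴴ * Wᴴ * (W * K) = Kᴴ * ((Wᴴ * W) * K) := by simp only [Matrix.mul_assoc]
      _ = 1 := by rw [hW, Matrix.one_mul, hK]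
  -- subspaces
  set Y : Submodule ℂ (Fin n → ℂ) := LinearMap.range (Matrix.mulVecLin (U * V * J)) with hY
  set Z : Submodule ℂ (Fin n → ℂ) := LinearMap.range (Matrix.mulVecLin (W * K)) with hZ
  have hYrank : Module.finrank ℂ Y = (s:ℕ) + 1 := by
    rw [hY, LinearMap.finrank_range_of_inj (mulVec_inj _ hUVJ)]
    simp [Module.finrank_pi]
  have hZrank : Module.finrank ℂ Z = n - (s:ℕ) := by
    rw [hZ, LinearMap.finrank_range_of_inj (mulVec_inj _ hWK)]
    simp [Module.finrank_pi]
  have hinf : 0 < Module.finrank ℂ (Y ⊓ Z : Submodule ℂ (Fin n → ℂ)) := by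
    have hsum := Submodule.finrank_sup_add_finrank_inf_eq Y Z
    have hle : Module.finrank ℂ (Y ⊔ Z : Submodule ℂ (Fin n → ℂ)) ≤ n := by
      have := Submodule.finrank_le (Y ⊔ Z)
      simpa [Module.finrank_pi] using this
    omega
  obtain ⟨x, hxYZ, hxne⟩ : ∃ x : Fin n → ℂ, x ∈ (Y ⊓ Z) ∧ x ≠ 0 := by
    have hbot : (Y ⊓ Z) ≠ ⊥ := by
      intro hb
      rw [hb] at hinf
      simp at hinf
    obtain ⟨v, hv, hvne⟩ := Submodule.exists_mem_ne_zero_of_ne_bot hbot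
    exact ⟨v, hv, hvne⟩
  obtain ⟨c, hc⟩ := LinearMap.mem_range.1 hxYZ.1
  obtain ⟨d, hd⟩ := LinearMap.mem_range.1 hxYZ.2
  rw [Matrix.mulVecLin_apply] at hc hd
  -- compressions are diagonal
  have hUVdiag : (U * V)ᴴ * A * (U * V) = Matrix.diagonal (fun i => (b i : ℂ)) := by
    rw [Matrix.conjTranspose_mul]
    have h1 : Vᴴ * Uᴴ * A * (U * V) = Vᴴ * (Uᴴ * A * U) * V := by
      simp only [Matrix.mul_assoc]
    rw [h1, hVB]
    have hVV' : V * Vᴴ = 1 := mul_eq_one_comm.1 hV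
    calc Vᴴ * (V * Matrix.diagonal (fun i => (b i : ℂ)) * Vᴴ) * V
        = (Vᴴ * V) * Matrix.diagonal (fun i => (b i : ℂ)) * (Vᴴ * V) := by
          simp only [Matrix.mul_assoc]
      _ = Matrix.diagonal (fun i => (b i : ℂ)) := by rw [hV]; simp
  have hWdiag : Wᴴ * A * W = Matrix.diagonal (fun i => (a i : ℂ)) := by
    rw [hWA]
    have hWW' : W * Wᴴ = 1 := mul_eq_one_comm.1 hW
    calc Wᴴ * (W * Matrix.diagonal (fun i => (a i : ℂ)) * Wᴴ) * W
        = (Wᴴ * W) * Matrix.diagonal (fun i => (a i : ℂ)) * (Wᴴ * W) := by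
          simp only [Matrix.mul_assoc]
      _ = Matrix.diagonal (fun i => (a i : ℂ)) := by rw [hW]; simp
  -- upper bound from Y side
  set c' : Fin m → ℂ := J *ᵥ c with hc'
  have hxc : x = (U * V) *ᵥ c' := by
    rw [hc', Matrix.mulVec_mulVec]
    exact hc.symm
  have hxAx_c : (star x ⬝ᵥ (A *ᵥ x)).re = ∑ i, b i * Complex.normSq (c' i) := by
    rw [hxc, compress_dot, hUVdiag, diag_dot_re]
  have hxx_c : (star x ⬝ᵥ x).re = ∑ i, Complex.normSq (c' i) := by
    rw [hxc, isometry_dot _ (by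
      rw [Matrix.conjTranspose_mul]
      calc Vᴴ * Uᴴ * (U * V) = Vᴴ * ((Uᴴ * U) * V) := by simp only [Matrix.mul_assoc]
        _ = 1 := by rw [hU, Matrix.one_mul, hV]), dot_self_re]
  have hsupc : ∀ i : Fin m, (s:ℕ) < (i:ℕ) → c' i = 0 := by
    intro i hi
    rw [hc']
    apply sel_mulVec_support
    intro j hj
    have : (i : ℕ) = (j : ℕ) := congrArg Fin.val hj
    have : (j : ℕ) < (s:ℕ) + 1 := j.2
    omega
  have hupper : (star x ⬝ᵥ (A *ᵥ x)).re ≤ b s * (star x ⬝ᵥ x).re := by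
    rw [hxAx_c, hxx_c, Finset.mul_sum]
    apply Finset.sum_le_sum
    intro i _
    by_cases hcz : c' i = 0
    · simp [hcz]
    · have hile : (i:ℕ) ≤ (s:ℕ) := by
        by_contra hlt
        exact hcz (hsupc i (by omega))
      have : b i ≤ b s := hb (by rwa [Fin.le_def])
      exact mul_le_mul_of_nonneg_right this (Complex.normSq_nonneg _)
  -- lower bound from Z side
  set d' : Fin n → ℂ := K *ᵥ d with hd'
  have hxd : x = W *ᵥ d' := by
    rw [hd', Matrix.mulVec_mulVec]
    exact hd.symm
  have hxAx_d : (star x ⬝ᵥ (A *ᵥ x)).re = ∑ i, a i * Complex.normSq (d' i) := by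
    rw [hxd, compress_dot, hWdiag, diag_dot_re]
  have hxx_d : (star x ⬝ᵥ x).re = ∑ i, Complex.normSq (d' i) := by
    rw [hxd, isometry_dot _ hW, dot_self_re]
  have hsupd : ∀ i : Fin n, (i:ℕ) < (s:ℕ) → d' i = 0 := by
    intro i hi
    rw [hd']
    apply sel_mulVec_support
    intro j hj
    have : (i : ℕ) = (j : ℕ) + (s:ℕ) := congrArg Fin.val hj
    omega
  have hlower : a (Fin.castLE hmn s) * (star x ⬝ᵥ x).re ≤ (star x ⬝ᵥ (A *ᵥ x)).re := by
    rw [hxAx_d, hxx_d, Finset.mul_sum]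
    apply Finset.sum_le_sum
    intro i _
    by_cases hdz : d' i = 0
    · simp [hdz]
    · have hile : (s:ℕ) ≤ (i:ℕ) := by
        by_contra hlt
        exact hdz (hsupd i (by omega))
      have : a (Fin.castLE hmn s) ≤ a i := ha (by rw [Fin.le_def]; simpa using hile)
      exact mul_le_mul_of_nonneg_right this (Complex.normSq_nonneg _)
  have hxpos : 0 < (star x ⬝ᵥ x).re := dot_self_re_pos hxne
  have := le_trans hlower hupper
  exact le_of_mul_le_mul_right this hxpos



lemma perm_map_univ {N : ℕ} (σ : Equiv.Perm (Fin N)) (e : Fin N → ℝ) :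
    Multiset.map (e ∘ σ) (Finset.univ : Finset (Fin N)).val =
      Multiset.map e (Finset.univ : Finset (Fin N)).val := by
  rw [← Multiset.map_map]
  congr 1
  have := Finset.map_univ_equiv σ
  calc Multiset.map (⇑σ) (Finset.univ : Finset (Fin N)).val
      = (Finset.map σ.toEmbedding (Finset.univ : Finset (Fin N))).val := rfl
    _ = (Finset.univ : Finset (Fin N)).val := by rw [this]

lemma sorted_spectral {N : ℕ} (M : Matrix (Fin N) (Fin N) ℂ) (hM : M.IsHermitian) :
    ∃ (W : Matrix (Fin N) (Fin N) ℂ) (σ : Equiv.Perm (Fin N)),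
      Wᴴ * W = 1 ∧ Monotone (hM.eigenvalues ∘ σ) ∧
      M = W * Matrix.diagonal (fun i => ((hM.eigenvalues (σ i) : ℝ) : ℂ)) * Wᴴ := by
  set σ : Equiv.Perm (Fin N) := Tuple.sort hM.eigenvalues with hσ
  set W₀ : Matrix (Fin N) (Fin N) ℂ := (Matrix.IsHermitian.eigenvectorUnitary hM : Matrix (Fin N) (Fin N) ℂ) with hW₀
  have hW₀W₀ : W₀ᴴ * W₀ = 1 := by
    have := (Matrix.IsHermitian.eigenvectorUnitary hM).2
    rw [Matrix.mem_unitaryGroup_iff'] at this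
    simpa [Matrix.star_eq_conjTranspose] using this
  have hspec0 : M = W₀ * Matrix.diagonal (fun i => ((hM.eigenvalues i : ℝ) : ℂ)) * W₀ᴴ := by
    have := hM.spectral_theorem
    rw [Unitary.conjStarAlgAut_apply, ← hW₀] at this
    exact this
  refine ⟨W₀.submatrix ⇑(Equiv.refl (Fin N)) ⇑σ, σ, ?_, Tuple.monotone_sort _, ?_⟩
  · rw [Matrix.conjTranspose_submatrix, Matrix.submatrix_mul_equiv, hW₀W₀,
      Matrix.submatrix_one_equiv]
  · have hdiag : Matrix.diagonal (fun i => ((hM.eigenvalues (σ i) : ℝ) : ℂ)) =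
        (Matrix.diagonal (fun i => ((hM.eigenvalues i : ℝ) : ℂ))).submatrix ⇑σ ⇑σ := by
      ext i j
      by_cases h : i = j
      · subst h
        simp
      · have : σ i ≠ σ j := fun hc => h (σ.injective hc)
        simp [Matrix.diagonal_apply_ne _ h, Matrix.diagonal_apply_ne _ this]
    rw [hdiag, Matrix.conjTranspose_submatrix, Matrix.submatrix_mul_equiv,
      Matrix.submatrix_mul_equiv]
    simpa using hspec0

lemma coe_ofFn {q : ℕ} (f : Fin q → ℝ) :
    ((List.ofFn f : List ℝ) : Multiset ℝ) = Multiset.map f (Finset.univ : Finset (Fin q)).val := by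
  rw [List.ofFn_eq_map]
  rfl

lemma forall₂_ofFn {q : ℕ} (R : ℝ → ℝ → Prop) (f g : Fin q → ℝ) (h : ∀ i, R (f i) (g i)) :
    List.Forall₂ R (List.ofFn f) (List.ofFn g) := by
  induction q with
  | zero => simp [List.ofFn_zero]
  | succ q ih =>
    rw [List.ofFn_succ, List.ofFn_succ]
    exact List.Forall₂.cons (h 0) (ih _ _ (fun i => h i.succ))

lemma split_univ_multiset {N m : ℕ} (hmn : m ≤ N) (a : Fin N → ℝ) :
    Multiset.map a (Finset.univ : Finset (Fin N)).val =
      Multiset.map a ((Finset.univ : Finset (Fin N)).val.filter (fun i : Fin N => ¬((i:ℕ) < m))) +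
      ((List.ofFn (fun s : Fin m => a (Fin.castLE hmn s)) : List ℝ) : Multiset ℝ) := by
  rw [coe_ofFn]
  have h1 : Multiset.map (fun s : Fin m => a (Fin.castLE hmn s)) (Finset.univ : Finset (Fin m)).val
      = Multiset.map a (Multiset.map (Fin.castLE hmn) (Finset.univ : Finset (Fin m)).val) := by
    rw [Multiset.map_map]
    rfl
  have h2 : Multiset.map (Fin.castLE hmn) (Finset.univ : Finset (Fin m)).val =
      (Finset.univ : Finset (Fin N)).val.filter (fun i : Fin N => (i:ℕ) < m) := by
    have : (Finset.univ : Finset (Fin m)).map ⟨Fin.castLE hmn, Fin.castLE_injective hmn⟩ =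
        (Finset.univ : Finset (Fin N)).filter (fun i : Fin N => (i:ℕ) < m) := by
      ext i
      simp only [Finset.mem_map, Finset.mem_univ, true_and, Finset.mem_filter,
        Function.Embedding.coeFn_mk]
      constructor
      · rintro ⟨s, rfl⟩
        exact s.2
      · intro hi
        exact ⟨⟨(i:ℕ), hi⟩, Fin.ext rfl⟩
    calc Multiset.map (Fin.castLE hmn) (Finset.univ : Finset (Fin m)).val
        = ((Finset.univ : Finset (Fin m)).map ⟨Fin.castLE hmn, Fin.castLE_injective hmn⟩).val := rfl
      _ = ((Finset.univ : Finset (Fin N)).filter (fun i : Fin N => (i:ℕ) < m)).val := by rw [this]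
      _ = (Finset.univ : Finset (Fin N)).val.filter (fun i : Fin N => (i:ℕ) < m) :=
            Finset.filter_val _ _
  rw [h1, h2, ← Multiset.map_add]
  congr 1
  rw [add_comm]
  exact (Multiset.filter_add_not _ _).symm


end
end Lem62

/-- Lemma 6.2 (2): for `0 ≤ r ≤ l ≤ k ≤ n`, a positive definite `A`, and an isometry
`U` onto an `(n - r)`-dimensional subspace (so `Uᴴ A U` is the compression of `A`),
`σ_{l-r}(Uᴴ A U) / σ_{k-r}(Uᴴ A U) ≤ σ_l(A) / σ_k(A)`. -/
theorem stmt6 (n r l k : ℕ) (hrl : r ≤ l) (hlk : l ≤ k) (hkn : k ≤ n)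
    (A : Matrix (Fin n) (Fin n) ℂ) (hA : A.PosDef)
    (U : Matrix (Fin n) (Fin (n - r)) ℂ) (hU : Uᴴ * U = 1) :
    esymm (Uᴴ * A * U) (l - r) / esymm (Uᴴ * A * U) (k - r)
      ≤ esymm A l / esymm A k := by
  classical
  have hrn : r ≤ n := le_trans hrl (le_trans hlk hkn)
  have hmn : n - r ≤ n := Nat.sub_le n r
  have hB : (Uᴴ * A * U).PosDef := Lem62.posdef_compression A hA U hU
  obtain ⟨W, σ, hW, haMono, hWA⟩ := Lem62.sorted_spectral A hA.1
  obtain ⟨V, τ, hV, hbMono, hVB⟩ := Lem62.sorted_spectral (Uᴴ * A * U) hB.1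
  set a : Fin n → ℝ := hA.1.eigenvalues ∘ σ with ha
  set b : Fin (n - r) → ℝ := hB.1.eigenvalues ∘ τ with hb
  have apos : ∀ i, 0 < a i := fun i => hA.eigenvalues_pos (σ i)
  have bpos : ∀ i, 0 < b i := fun i => hB.eigenvalues_pos (τ i)
  have hint : ∀ s : Fin (n - r), a (Fin.castLE hmn s) ≤ b s := fun s =>
    Lem62.interlace hmn A U hU W hW a haMono hWA V hV b hbMono hVB s
  set Λ : Multiset ℝ := Multiset.map hA.1.eigenvalues (Finset.univ : Finset (Fin n)).val with hΛ
  set Μ : Multiset ℝ := Multiset.map hB.1.eigenvalues (Finset.univ : Finset (Fin (n - r))).val with hΜ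
  have hΛa : Multiset.map a (Finset.univ : Finset (Fin n)).val = Λ := Lem62.perm_map_univ σ _
  have hΜb : Multiset.map b (Finset.univ : Finset (Fin (n - r))).val = Μ := Lem62.perm_map_univ τ _
  have hΛpos : ∀ x ∈ Λ, 0 < x := by
    intro x hx
    rw [← hΛa] at hx
    obtain ⟨i, -, rfl⟩ := Multiset.mem_map.1 hx
    exact apos i
  have hΜpos : ∀ x ∈ Μ, 0 < x := by
    intro x hx
    rw [← hΜb] at hx
    obtain ⟨i, -, rfl⟩ := Multiset.mem_map.1 hx
    exact bpos i
  have hΛcard : Multiset.card Λ = n := by simp [hΛ]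
  have hΜcard : Multiset.card Μ = n - r := by simp [hΜ]
  -- list data
  set Lo : List ℝ := List.ofFn (fun s : Fin (n - r) => a (Fin.castLE hmn s)) with hLo
  set Hi : List ℝ := List.ofFn b with hHi
  set cM : Multiset ℝ :=
    Multiset.map a ((Finset.univ : Finset (Fin n)).val.filter (fun i : Fin n => ¬((i:ℕ) < n - r)))
    with hcM
  set c : List ℝ := cM.toList with hc
  have hccoe : (↑c : Multiset ℝ) = cM := Multiset.coe_toList cM
  have hHiM : (↑Hi : Multiset ℝ) = Μ := by rw [hHi, Lem62.coe_ofFn, hΜb]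
  have hsplit : Λ = cM + (↑Lo : Multiset ℝ) := by
    rw [← hΛa, Lem62.split_univ_multiset hmn a, hLo]
  have hLolen : Lo.length = n - r := by simp [hLo]
  have hclen : c.length = r := by
    have h1 : Multiset.card Λ = Multiset.card cM + Lo.length := by
      rw [hsplit, Multiset.card_add]
      simp
    have h2 : c.length = Multiset.card cM := Multiset.length_toList cM
    omega
  have hcpos : ∀ x ∈ c, 0 < x := by
    intro x hx
    rw [hc, Multiset.mem_toList, hcM] at hx
    obtain ⟨i, -, rfl⟩ := Multiset.mem_map.1 hx
    exact apos i
  have hfa : List.Forall₂ (fun x y => 0 < x ∧ x ≤ y) Lo Hi := by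
    rw [hLo, hHi]
    exact Lem62.forall₂_ofFn _ _ _ (fun s => ⟨apos _, hint s⟩)
  -- the consecutive-ratio inequalities
  have H : ∀ j : ℕ, l ≤ j → j < k →
      Μ.esymm (j - r) * Λ.esymm (j+1) ≤ Μ.esymm (j - r + 1) * Λ.esymm j := by
    intro j hlj hjk
    have hi : (j - r) + 1 ≤ Lo.length := by
      rw [hLolen]
      omega
    have := Lem62.tj hfa hcpos (j - r) hi
    rw [hclen, hccoe] at this
    have e1 : j - r + r = j := by omega
    rw [e1] at this
    rw [hHiM, ← hsplit] at this
    exact this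
  have main := Lem62.chain Λ Μ l k r hrl hlk
    (Lem62.esymm_nonneg (fun x hx => (hΜpos x hx).le) _)
    (fun j => Lem62.esymm_nonneg (fun x hx => (hΜpos x hx).le) j)
    (fun j hj hjk => Lem62.esymm_pos hΛpos (by rw [hΛcard]; omega))
    H
  -- put everything together
  have eA : ∀ j : ℕ, esymm A j = Λ.esymm j := fun j => Lem62.esymm_eq_eig A hA.1 j
  have eB : ∀ j : ℕ, esymm (Uᴴ * A * U) j = Μ.esymm j := fun j =>
    Lem62.esymm_eq_eig (Uᴴ * A * U) hB.1 j
  rw [eA l, eA k, eB (l - r), eB (k - r)]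
  have hΜkr : 0 < Μ.esymm (k - r) := Lem62.esymm_pos hΜpos (by rw [hΜcard]; omega)
  have hΛk : 0 < Λ.esymm k := Lem62.esymm_pos hΛpos (by rw [hΛcard]; omega)
  rw [div_le_div_iff₀ hΜkr hΛk]
  exact main
end

section
/- Let 1 ≤ k ≤ r ≤ n be integers and let A be an n×n positive definite Hermitian complex matrix. Then for every n×n positive semidefinite Hermitian complex matrix B, σ_{r−1}(A) · (d/dt)|_{t=0} σ_k(A + tB) ≥ σ_{k−1}(A) · (d/dt)|_{t=0} σ_r(A + tB). Equivalently, in the Loewner order, σ_{r−1}(A) T_{k−1}(A) ≥ σ_{k−1}(A) T_{r−1}(A), where T_{j−1}(A) is the Hermitian matrix of partial derivatives of σ_j at A. (Lemma 6.2 (3), inequality (6.5).) -/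
open Matrix ComplexOrder

set_option linter.unusedSectionVars false
set_option maxHeartbeats 1600000

namespace Stmt7Aux

open Finset

variable {ι : Type*} [DecidableEq ι] [Fintype ι]

/-- Subset-sum elementary symmetric function of `f` over `s`. -/
noncomputable def E (s : Finset ι) (f : ι → ℝ) (j : ℕ) : ℝ :=
  ∑ T ∈ s.powersetCard j, ∏ i ∈ T, f i

@[simp] lemma E_zero (s : Finset ι) (f : ι → ℝ) : E s f 0 = 1 := by
  simp [E]

@[simp] lemma E_empty_succ (f : ι → ℝ) (j : ℕ) : E (∅ : Finset ι) f (j + 1) = 0 := by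
  rw [E, Finset.powersetCard_eq_empty.mpr (by simp), Finset.sum_empty]

lemma E_nonneg {s : Finset ι} {f : ι → ℝ} (h : ∀ i ∈ s, 0 ≤ f i) (j : ℕ) : 0 ≤ E s f j := by
  refine Finset.sum_nonneg fun T hT => Finset.prod_nonneg fun i hi => h i ?_
  exact (Finset.mem_powersetCard.mp hT).1 hi

lemma E_insert {a : ι} {s : Finset ι} (ha : a ∉ s) (f : ι → ℝ) (j : ℕ) :
    E (insert a s) f (j + 1) = E s f (j + 1) + f a * E s f j := by
  classical
  rw [E, E, E, Finset.powersetCard_succ_insert ha, Finset.sum_union, Finset.sum_image,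
    Finset.mul_sum]
  · congr 1
    refine Finset.sum_congr rfl fun T hT => ?_
    have haT : a ∉ T := fun h => ha ((Finset.mem_powersetCard.mp hT).1 h)
    rw [Finset.prod_insert haT]
  · intro T hT T' hT' h
    have haT : a ∉ T := fun h => ha ((Finset.mem_powersetCard.mp hT).1 h)
    have haT' : a ∉ T' := fun h => ha ((Finset.mem_powersetCard.mp hT').1 h)
    have := congrArg (fun (X : Finset ι) => X.erase a) h
    simpa [Finset.erase_insert haT, Finset.erase_insert haT'] using this
  · rw [Finset.disjoint_left]
    intro T hT hT'
    obtain ⟨T', hT', rfl⟩ := Finset.mem_image.mp hT'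
    have : a ∈ insert a T' := Finset.mem_insert_self a T'
    exact ha ((Finset.mem_powersetCard.mp hT).1 this)

/-- Log-concavity (decreasing ratios) of elementary symmetric functions of nonnegative reals. -/
lemma E_logConcave {s : Finset ι} {f : ι → ℝ} (h : ∀ i ∈ s, 0 ≤ f i) :
    ∀ a b : ℕ, a ≤ b → E s f a * E s f (b + 1) ≤ E s f (a + 1) * E s f b := by
  classical
  induction s using Finset.induction_on with
  | empty =>
    intro a b hab
    have hb : 0 < b + 1 := Nat.succ_pos b
    rcases Nat.eq_zero_or_pos a with rfl | ha
    · rcases Nat.eq_zero_or_pos b with rfl | hb'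
      · simp
      · obtain ⟨b', rfl⟩ := Nat.exists_eq_succ_of_ne_zero (Nat.pos_iff_ne_zero.mp hb')
        simp
    · obtain ⟨a', rfl⟩ := Nat.exists_eq_succ_of_ne_zero (Nat.pos_iff_ne_zero.mp ha)
      simp
  | @insert x s hx IH =>
    intro a b hab
    have hfx : 0 ≤ f x := h x (Finset.mem_insert_self x s)
    have hs : ∀ i ∈ s, 0 ≤ f i := fun i hi => h i (Finset.mem_insert_of_mem hi)
    have hN : ∀ j, 0 ≤ E s f j := fun j => E_nonneg hs j
    have IH' := IH hs
    rcases Nat.eq_zero_or_pos a with rfl | ha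
    · -- a = 0 : E I (b+1) ≤ E I 1 * E I b
      rcases Nat.eq_zero_or_pos b with rfl | hb'
      · simp
      · obtain ⟨b', rfl⟩ := Nat.exists_eq_succ_of_ne_zero (Nat.pos_iff_ne_zero.mp hb')
        simp only [E_zero, one_mul]
        rw [E_insert hx, E_insert hx, E_insert hx]
        have h1 : E s f (b' + 1 + 1) ≤ E s f 1 * E s f (b' + 1) := by
          simpa using IH' 0 (b' + 1) (Nat.zero_le _)
        have h2 : 0 ≤ f x * E s f (b' + 1) := mul_nonneg hfx (hN _)
        have h3 : 0 ≤ f x * E s f 1 * E s f b' := mul_nonneg (mul_nonneg hfx (hN _)) (hN _)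
        have h4 : 0 ≤ f x * (f x * E s f b') := mul_nonneg hfx (mul_nonneg hfx (hN _))
        have h0 : E s f 0 = 1 := E_zero s f
        nlinarith [hN (b'+1), hN b', hN 1, hfx]
    · obtain ⟨a', rfl⟩ := Nat.exists_eq_succ_of_ne_zero (Nat.pos_iff_ne_zero.mp ha)
      obtain ⟨b', rfl⟩ := Nat.exists_eq_succ_of_ne_zero
        (Nat.pos_iff_ne_zero.mp (lt_of_lt_of_le ha hab))
      have hab' : a' ≤ b' := by omega
      rw [E_insert hx, E_insert hx, E_insert hx, E_insert hx]
      -- expand and use three instances of IH'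
      have k1 : E s f (a' + 1) * E s f (b' + 1 + 1) ≤ E s f (a' + 1 + 1) * E s f (b' + 1) :=
        IH' (a' + 1) (b' + 1) (by omega)
      have k3 : E s f a' * E s f (b' + 1) ≤ E s f (a' + 1) * E s f b' := IH' a' b' hab'
      have k2 : E s f a' * E s f (b' + 1 + 1) ≤ E s f (a' + 1 + 1) * E s f b' := by
        rcases Nat.lt_or_ge a' b' with hlt | hge
        · have k2a : E s f a' * E s f (b' + 1 + 1) ≤ E s f (a' + 1) * E s f (b' + 1) :=
            IH' a' (b' + 1) (by omega)
          have k2b : E s f (a' + 1) * E s f (b' + 1) ≤ E s f (a' + 1 + 1) * E s f b' :=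
            IH' (a' + 1) b' (by omega)
          exact le_trans k2a k2b
        · have : a' = b' := le_antisymm hab' hge
          subst this
          have := IH' a' (a' + 1) (by omega)
          nlinarith [this]
      nlinarith [mul_nonneg hfx (hN a'), mul_nonneg hfx (hN (b'+1)), mul_le_mul_of_nonneg_left k3 (mul_nonneg hfx hfx), mul_le_mul_of_nonneg_left k2 hfx, mul_le_mul_of_nonneg_left k3 hfx]

lemma E_key [Fintype ι] {f : ι → ℝ} (hpos : ∀ i, 0 < f i) (i : ι) {k r : ℕ}
    (hk : 1 ≤ k) (hkr : k ≤ r) :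
    E univ f (k - 1) * E (univ.erase i) f (r - 1)
      ≤ E univ f (r - 1) * E (univ.erase i) f (k - 1) := by
  classical
  set s := univ.erase i with hs
  have hins : insert i s = univ := by
    rw [hs, Finset.insert_erase (Finset.mem_univ i)]
  have hinotin : i ∉ s := Finset.notMem_erase i univ
  have hsnn : ∀ x ∈ s, 0 ≤ f x := fun x _ => (hpos x).le
  have hEuniv : ∀ j : ℕ, E univ f (j + 1) = E s f (j + 1) + f i * E s f j := by
    intro j
    rw [← hins, E_insert hinotin]
  rcases Nat.eq_zero_or_pos (k - 1) with hk0 | hk1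
  · rw [hk0]
    simp only [E_zero, one_mul, mul_one]
    rcases Nat.eq_zero_or_pos (r - 1) with hr0 | hr1
    · rw [hr0]; simp
    · obtain ⟨r', hr'⟩ := Nat.exists_eq_succ_of_ne_zero (Nat.pos_iff_ne_zero.mp hr1)
      rw [hr']
      rw [hEuniv r']
      have := mul_nonneg (hpos i).le (E_nonneg hsnn r')
      linarith
  · obtain ⟨k', hk'⟩ := Nat.exists_eq_succ_of_ne_zero (Nat.pos_iff_ne_zero.mp hk1)
    have hr1 : 0 < r - 1 := lt_of_lt_of_le hk1 (by omega)
    obtain ⟨r', hr'⟩ := Nat.exists_eq_succ_of_ne_zero (Nat.pos_iff_ne_zero.mp hr1)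
    have hk'r' : k' ≤ r' := by omega
    rw [hk', hr', hEuniv k', hEuniv r']
    have key := E_logConcave hsnn k' r' hk'r'
    have hfi := (hpos i).le
    nlinarith [mul_le_mul_of_nonneg_left key hfi, E_nonneg hsnn k', E_nonneg hsnn r',
      E_nonneg hsnn (k'+1), E_nonneg hsnn (r'+1)]

/-- principal minor -/
noncomputable def pm (M : Matrix ι ι ℂ) (S : Finset ι) : ℂ :=
  (M.submatrix (fun i : {x : ι // x ∈ S} => (i : ι)) (fun i : {x : ι // x ∈ S} => (i : ι))).det

/-- complex sum of principal minors of size m -/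
noncomputable def sc (M : Matrix ι ι ℂ) (m : ℕ) : ℂ :=
  ∑ S ∈ Finset.powersetCard m (Finset.univ : Finset ι), pm M S

/-- expansion of a determinant by splitting each row of a subset into a sum -/
lemma det_ite_add (M : Matrix ι ι ℂ) (s : Finset ι) :
    ∀ N : Matrix ι ι ℂ,
    (Matrix.of fun i j => if i ∈ s then M i j + N i j else N i j).det
      = ∑ S ∈ s.powerset, (Matrix.of fun i j => if i ∈ S then M i j else N i j).det := by
  classical
  induction s using Finset.induction_on with
  | empty =>
    intro N
    simp
  | @insert a s ha IH =>
    intro N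
    have hK : (Matrix.of fun i j => if i ∈ insert a s then M i j + N i j else N i j)
        = (Matrix.of fun i j => if i ∈ s then M i j + N i j else N i j).updateRow a
          (M a + N a) := by
      ext i j
      by_cases hi : i = a
      · subst hi; simp [Matrix.updateRow_apply, ha]
      · simp [Matrix.updateRow_apply, hi, Finset.mem_insert]
    rw [hK, Matrix.det_updateRow_add]
    rw [show (M a : ι → ℂ) = (fun j => M a j) from rfl]
    have h2 : ((Matrix.of fun i j => if i ∈ s then M i j + N i j else N i j).updateRow a
        (fun j => N a j)).det
        = ∑ S ∈ s.powerset, (Matrix.of fun i j => if i ∈ S then M i j else N i j).det := by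
      have : (Matrix.of fun i j => if i ∈ s then M i j + N i j else N i j).updateRow a
          (fun j => N a j) = (Matrix.of fun i j => if i ∈ s then M i j + N i j else N i j) := by
        ext i j
        by_cases hi : i = a
        · subst hi; simp [Matrix.updateRow_apply, ha]
        · simp [Matrix.updateRow_apply, hi]
      rw [this, IH]
    have h1 : ((Matrix.of fun i j => if i ∈ s then M i j + N i j else N i j).updateRow a
        (fun j => M a j)).det
        = ∑ S ∈ s.powerset,
            (Matrix.of fun i j => if i ∈ insert a S then M i j else N i j).det := by
      set N' := N.updateRow a (M a) with hN'
      have hmat : (Matrix.of fun i j => if i ∈ s then M i j + N i j else N i j).updateRow a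
          (fun j => M a j) = (Matrix.of fun i j => if i ∈ s then M i j + N' i j else N' i j) := by
        ext i j
        by_cases hi : i = a
        · subst hi; simp [Matrix.updateRow_apply, ha, hN']
        · simp [Matrix.updateRow_apply, hi, hN']
      rw [hmat, IH N']
      refine Finset.sum_congr rfl fun S hS => ?_
      have haS : a ∉ S := fun h => ha ((Finset.mem_powerset.mp hS) h)
      congr 1
      ext i j
      by_cases hi : i = a
      · subst hi; simp [haS, hN', Matrix.updateRow_apply]
      · by_cases hiS : i ∈ S <;>
          simp [hiS, hi, hN', Matrix.updateRow_apply, Finset.mem_insert]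
    rw [h1, h2, Finset.powerset_insert, Finset.sum_union, Finset.sum_image]
    · ring
    · intro S hS S' hS' h
      have haS : a ∉ S := fun hh => ha ((Finset.mem_powerset.mp hS) hh)
      have haS' : a ∉ S' := fun hh => ha ((Finset.mem_powerset.mp hS') hh)
      have := congrArg (fun X : Finset ι => X.erase a) h
      simpa [Finset.erase_insert haS, Finset.erase_insert haS'] using this
    · rw [Finset.disjoint_left]
      intro S hS hS'
      obtain ⟨S', hS', rfl⟩ := Finset.mem_image.mp hS'
      exact ha ((Finset.mem_powerset.mp hS) (Finset.mem_insert_self a S'))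

lemma det_ite_diagonal (M : Matrix ι ι ℂ) (d : ι → ℂ) (S : Finset ι) :
    (Matrix.of fun i j => if i ∈ S then M i j else diagonal d i j).det
      = (∏ i ∈ Sᶜ, d i) * pm M S := by
  classical
  rw [← Matrix.det_submatrix_equiv_self (Equiv.sumCompl (· ∈ S))]
  have hblock : (Matrix.of fun i j => if i ∈ S then M i j else diagonal d i j).submatrix
      (Equiv.sumCompl (· ∈ S)) (Equiv.sumCompl (· ∈ S))
      = Matrix.fromBlocks
          (M.submatrix (fun i : {x : ι // x ∈ S} => (i : ι)) (fun i : {x : ι // x ∈ S} => (i : ι)))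
          ((Matrix.of fun (i : {x : ι // x ∈ S}) (j : {x : ι // ¬ x ∈ S}) => M i j))
          0 (diagonal fun i : {x : ι // ¬ x ∈ S} => d i) := by
    ext i j
    cases i with
    | inl i =>
      cases j with
      | inl j => simp [Matrix.fromBlocks, i.2]
      | inr j => simp [Matrix.fromBlocks, i.2]
    | inr i =>
      cases j with
      | inl j =>
        have : (i : ι) ≠ (j : ι) := fun h => i.2 (h ▸ j.2)
        simp [Matrix.fromBlocks, i.2, Matrix.diagonal_apply_ne _ this]
      | inr j =>
        by_cases h : i = j
        · subst h; simp [Matrix.fromBlocks, i.2, Matrix.diagonal_apply_eq]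
        · have : (i : ι) ≠ (j : ι) := fun hh => h (Subtype.ext hh)
          simp [Matrix.fromBlocks, i.2, Matrix.diagonal_apply_ne _ this,
            Matrix.diagonal_apply_ne _ h]
  rw [hblock, Matrix.det_fromBlocks_zero₂₁, Matrix.det_diagonal, mul_comm, pm]
  congr 1
  exact (Finset.prod_subtype Sᶜ (fun x => Finset.mem_compl) d).symm

lemma det_add_diagonal (M : Matrix ι ι ℂ) (d : ι → ℂ) :
    (M + diagonal d).det
      = ∑ S ∈ (Finset.univ : Finset ι).powerset, (∏ i ∈ Sᶜ, d i) * pm M S := by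
  classical
  have h0 : M + diagonal d
      = Matrix.of fun i j => if i ∈ (Finset.univ : Finset ι) then M i j + diagonal d i j
          else diagonal d i j := by
    ext i j; simp
  rw [h0, det_ite_add M Finset.univ (diagonal d)]
  exact Finset.sum_congr rfl fun S _ => det_ite_diagonal M d S

lemma det_add_smul_one (M : Matrix ι ι ℂ) (x : ℂ) :
    (M + x • 1).det = ∑ m ∈ Finset.range (Fintype.card ι + 1),
      sc M m * x ^ (Fintype.card ι - m) := by
  have h1 : x • (1 : Matrix ι ι ℂ) = diagonal (fun _ => x) := by
    ext i j
    by_cases h : i = j <;>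
      simp [Matrix.one_apply, Matrix.diagonal_apply, h]
  rw [h1, det_add_diagonal]
  erw [Finset.powerset_card_disjiUnion, Finset.sum_disjiUnion]
  rw [Finset.card_univ]
  refine Finset.sum_congr rfl fun m _ => ?_
  rw [sc, Finset.sum_mul]
  refine Finset.sum_congr rfl fun S hS => ?_
  have hcard : #S = m := (Finset.mem_powersetCard.mp hS).2
  rw [Finset.prod_const, Finset.card_compl, hcard, mul_comm]

lemma sc_eq_of_det_eq {M M' : Matrix ι ι ℂ}
    (h : ∀ x : ℂ, (M + x • 1).det = (M' + x • 1).det) {m : ℕ}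
    (hm : m ≤ Fintype.card ι) : sc M m = sc M' m := by
  classical
  set N := Fintype.card ι with hN
  set P : Polynomial ℂ := ∑ j ∈ Finset.range (N + 1),
    Polynomial.C (sc M (N - j)) * Polynomial.X ^ j with hP
  set P' : Polynomial ℂ := ∑ j ∈ Finset.range (N + 1),
    Polynomial.C (sc M' (N - j)) * Polynomial.X ^ j with hP'
  have heval : ∀ (Q : Matrix ι ι ℂ) (x : ℂ),
      Polynomial.eval x (∑ j ∈ Finset.range (N + 1),
        Polynomial.C (sc Q (N - j)) * Polynomial.X ^ j) = (Q + x • 1).det := by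
    intro Q x
    rw [det_add_smul_one]
    rw [Polynomial.eval_finset_sum]
    simp only [Polynomial.eval_mul, Polynomial.eval_C, Polynomial.eval_pow, Polynomial.eval_X]
    rw [← Finset.sum_range_reflect (fun m => sc Q m * x ^ (Fintype.card ι - m)) (N + 1)]
    refine Finset.sum_congr rfl fun j hj => ?_
    rw [Finset.mem_range] at hj
    have h1 : N + 1 - 1 - j = N - j := by omega
    have h2 : Fintype.card ι - (N - j) = j := by rw [← hN]; omega
    rw [h1, h2]
  have hPP' : P = P' := by
    refine Polynomial.funext fun x => ?_
    rw [hP, hP', heval, heval, h]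
  have hcoeff : ∀ (Q : Matrix ι ι ℂ),
      (∑ j ∈ Finset.range (N + 1),
        Polynomial.C (sc Q (N - j)) * Polynomial.X ^ j).coeff (N - m) = sc Q m := by
    intro Q
    rw [Polynomial.finset_sum_coeff]
    have : ∀ j ∈ Finset.range (N + 1),
        (Polynomial.C (sc Q (N - j)) * Polynomial.X ^ j).coeff (N - m)
          = if N - m = j then sc Q (N - j) else 0 := by
      intro j _
      rw [Polynomial.coeff_C_mul, Polynomial.coeff_X_pow]
      by_cases hj : N - m = j
      · rw [if_pos hj, if_pos hj, mul_one]
      · rw [if_neg hj, if_neg hj, mul_zero]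
    rw [Finset.sum_congr rfl this, Finset.sum_ite_eq (Finset.range (N + 1))]
    have hmem : N - m ∈ Finset.range (N + 1) := by simp
    rw [if_pos hmem]
    congr 1
    omega
  have := congrArg (fun Q : Polynomial ℂ => Q.coeff (N - m)) hPP'
  simpa only [hP, hP', hcoeff] using this

lemma sc_unitary_conj {U : Matrix ι ι ℂ} (hU : U ∈ Matrix.unitaryGroup ι ℂ)
    (M : Matrix ι ι ℂ) {m : ℕ} (hm : m ≤ Fintype.card ι) :
    sc (U * M * star U) m = sc M m := by
  refine sc_eq_of_det_eq (fun x => ?_) hm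
  have h1 : U * M * star U + x • 1 = U * (M + x • 1) * star U := by
    rw [Matrix.mul_add, Matrix.add_mul]
    congr 1
    rw [Matrix.mul_smul, Matrix.mul_one, Matrix.smul_mul]
    congr 1
    exact (Matrix.mem_unitaryGroup_iff.mp hU).symm
  have hdet : (U * star U).det = 1 := by
    rw [Matrix.mem_unitaryGroup_iff.mp hU, Matrix.det_one]
  rw [h1, Matrix.det_mul, Matrix.det_mul]
  have h2 : U.det * (M + x • 1).det * (star U).det
      = (M + x • 1).det * (U * star U).det := by
    rw [Matrix.det_mul]; ring
  rw [h2, hdet, mul_one]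

lemma pm_smul (z : ℂ) (C : Matrix ι ι ℂ) (S : Finset ι) :
    pm (z • C) S = z ^ #S * pm C S := by
  rw [pm, pm,
    show (z • C).submatrix (fun i : {x : ι // x ∈ S} => (i : ι))
        (fun i : {x : ι // x ∈ S} => (i : ι))
      = z • C.submatrix (fun i : {x : ι // x ∈ S} => (i : ι))
        (fun i : {x : ι // x ∈ S} => (i : ι)) from rfl,
    Matrix.det_smul, Fintype.card_coe]

lemma pm_singleton (C : Matrix ι ι ℂ) (i : ι) : pm C {i} = C i i := by
  haveI : Subsingleton {x : ι // x ∈ ({i} : Finset ι)} :=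
    ⟨fun a b => Subtype.ext (by
      rw [Finset.mem_singleton.mp a.2, Finset.mem_singleton.mp b.2])⟩
  rw [pm, Matrix.det_eq_elem_of_subsingleton _ ⟨i, Finset.mem_singleton_self i⟩]
  rfl

lemma pm_diagonal (d : ι → ℂ) (S : Finset ι) : pm (diagonal d) S = ∏ i ∈ S, d i := by
  classical
  have hsub : (diagonal d).submatrix (fun i : {x : ι // x ∈ S} => (i : ι))
      (fun i : {x : ι // x ∈ S} => (i : ι)) = diagonal (fun i : {x : ι // x ∈ S} => d i) := by
    ext i j
    by_cases h : i = j
    · subst h; simp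
    · have : (i : ι) ≠ (j : ι) := fun hh => h (Subtype.ext hh)
      simp [Matrix.diagonal_apply_ne _ this, Matrix.diagonal_apply_ne _ h]
  rw [pm, hsub, Matrix.det_diagonal]
  exact (Finset.prod_subtype S (fun x => Iff.rfl) d).symm

lemma sc_diagonal (d : ι → ℂ) (m : ℕ) :
    sc (diagonal d) m = ∑ S ∈ Finset.powersetCard m (Finset.univ : Finset ι), ∏ i ∈ S, d i :=
  Finset.sum_congr rfl fun S _ => pm_diagonal d S

/-- derivative of `z ↦ det (diagonal d + z • C)` at `0`. -/
lemma hasDerivAt_det_diagonal_add (d : ι → ℂ) (C : Matrix ι ι ℂ) :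
    HasDerivAt (fun z : ℂ => (diagonal d + z • C).det)
      (∑ i : ι, (∏ j ∈ Finset.univ.erase i, d j) * C i i) 0 := by
  classical
  have hfun : (fun z : ℂ => (diagonal d + z • C).det)
      = fun z : ℂ => ∑ S ∈ (Finset.univ : Finset ι).powerset,
          (∏ i ∈ Sᶜ, d i) * pm C S * z ^ #S := by
    funext z
    rw [add_comm, det_add_diagonal (z • C) d]
    refine Finset.sum_congr rfl fun S _ => ?_
    rw [pm_smul]
    ring
  rw [hfun]
  have key : ∀ S ∈ (Finset.univ : Finset ι).powerset,
      HasDerivAt (fun z : ℂ => (∏ i ∈ Sᶜ, d i) * pm C S * z ^ #S)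
        (if #S = 1 then (∏ i ∈ Sᶜ, d i) * pm C S else 0) 0 := by
    intro S _
    have h := (hasDerivAt_pow #S (0 : ℂ)).const_mul ((∏ i ∈ Sᶜ, d i) * pm C S)
    refine h.congr_deriv ?_
    rcases hc : #S with _ | m
    · simp
    · rcases m with _ | m'
      · simp
      · simp [pow_succ]
  have hsum := HasDerivAt.fun_sum key
  refine hsum.congr_deriv ?_
  symm
  rw [Finset.sum_ite, Finset.sum_const_zero, add_zero]
  have hfil : ((Finset.univ : Finset ι).powerset.filter fun S => #S = 1)
      = Finset.powersetCard 1 (Finset.univ : Finset ι) := by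
    rw [Finset.powersetCard_eq_filter]
  rw [hfil, Finset.powersetCard_one, Finset.sum_map]
  refine Finset.sum_congr rfl fun i _ => ?_
  simp only [Function.Embedding.coeFn_mk]
  rw [pm_singleton, Finset.compl_singleton]

lemma subtype_sum_prod (S : Finset ι) (f g : ι → ℂ) :
    (∑ i : {x : ι // x ∈ S}, (∏ j ∈ (Finset.univ : Finset {x : ι // x ∈ S}).erase i, f (j : ι))
      * g (i : ι))
      = ∑ i ∈ S, (∏ j ∈ S.erase i, f j) * g i := by
  classical
  rw [Finset.sum_subtype S (fun x => Iff.rfl) (fun i => (∏ j ∈ S.erase i, f j) * g i)]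
  refine Finset.sum_congr rfl fun i _ => ?_
  congr 1
  refine Finset.prod_bij' (fun (j : {x : ι // x ∈ S}) _ => (j : ι))
    (fun j hj => ⟨j, (Finset.mem_erase.mp hj).2⟩) ?_ ?_ ?_ ?_ ?_
  · intro a ha
    rw [Finset.mem_erase] at ha ⊢
    exact ⟨fun h => ha.1 (Subtype.ext h), a.2⟩
  · intro a ha
    rw [Finset.mem_erase] at ha ⊢
    exact ⟨fun h => ha.1 (congrArg Subtype.val h), Finset.mem_univ _⟩
  · intro a _; rfl
  · intro a _; rfl
  · intro a _; rfl

lemma hasDerivAt_sc (d : ι → ℂ) (C : Matrix ι ι ℂ) (m : ℕ) :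
    HasDerivAt (fun z : ℂ => sc (diagonal d + z • C) m)
      (∑ S ∈ Finset.powersetCard m (Finset.univ : Finset ι),
        ∑ i ∈ S, (∏ j ∈ S.erase i, d j) * C i i) 0 := by
  classical
  have key : ∀ S ∈ Finset.powersetCard m (Finset.univ : Finset ι),
      HasDerivAt (fun z : ℂ => pm (diagonal d + z • C) S)
        (∑ i ∈ S, (∏ j ∈ S.erase i, d j) * C i i) 0 := by
    intro S _
    have hfun : (fun z : ℂ => pm (diagonal d + z • C) S)
        = fun z : ℂ => (diagonal (fun i : {x : ι // x ∈ S} => d i)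
            + z • C.submatrix (fun i : {x : ι // x ∈ S} => (i : ι))
              (fun i : {x : ι // x ∈ S} => (i : ι))).det := by
      funext z
      rw [pm]
      congr 1
      ext i j
      by_cases h : i = j
      · subst h; simp
      · have hne : (i : ι) ≠ (j : ι) := fun hh => h (Subtype.ext hh)
        simp [Matrix.diagonal_apply_ne _ hne, Matrix.diagonal_apply_ne _ h]
    rw [hfun, ← subtype_sum_prod S d (fun i => C i i)]
    exact hasDerivAt_det_diagonal_add _ _
  exact HasDerivAt.fun_sum key

lemma swap_sum (d : ι → ℝ) (g : ι → ℝ) {m : ℕ} (hm : 1 ≤ m) :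
    (∑ S ∈ Finset.powersetCard m (Finset.univ : Finset ι),
      ∑ i ∈ S, (∏ j ∈ S.erase i, d j) * g i)
      = ∑ i : ι, g i * E (Finset.univ.erase i) d (m - 1) := by
  classical
  rw [Finset.sum_sigma' (Finset.powersetCard m (Finset.univ : Finset ι)) (fun S => S)
    (fun S i => (∏ j ∈ S.erase i, d j) * g i)]
  simp only [E, Finset.mul_sum]
  rw [Finset.sum_sigma' (Finset.univ : Finset ι)
    (fun i => (Finset.univ.erase i).powersetCard (m - 1))
    (fun i T => g i * ∏ j ∈ T, d j)]
  refine Finset.sum_nbij' (fun x => ⟨x.2, x.1.erase x.2⟩) (fun x => ⟨insert x.1 x.2, x.1⟩)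
    ?_ ?_ ?_ ?_ ?_
  · rintro ⟨S, i⟩ hx
    rw [Finset.mem_sigma] at hx ⊢
    obtain ⟨hS, hi⟩ := hx
    rw [Finset.mem_powersetCard] at hS ⊢
    refine ⟨Finset.mem_univ _, ?_, ?_⟩
    · intro j hj
      rw [Finset.mem_erase] at hj ⊢
      exact ⟨hj.1, Finset.mem_univ _⟩
    · rw [Finset.card_erase_of_mem hi, hS.2]
  · rintro ⟨i, T⟩ hx
    rw [Finset.mem_sigma] at hx ⊢
    obtain ⟨-, hT⟩ := hx
    rw [Finset.mem_powersetCard] at hT ⊢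
    have hiT : i ∉ T := fun h => (Finset.mem_erase.mp (hT.1 h)).1 rfl
    constructor
    · exact ⟨fun x _ => Finset.mem_univ x, by rw [Finset.card_insert_of_notMem hiT, hT.2]; omega⟩
    · exact Finset.mem_insert_self i T
  · rintro ⟨S, i⟩ hx
    rw [Finset.mem_sigma] at hx
    simp only [Sigma.mk.inj_iff]
    exact ⟨Finset.insert_erase hx.2, HEq.rfl⟩
  · rintro ⟨i, T⟩ hx
    rw [Finset.mem_sigma] at hx
    rw [Finset.mem_powersetCard] at hx
    have hiT : i ∉ T := fun h => (Finset.mem_erase.mp (hx.2.1 h)).1 rfl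
    simp only [Sigma.mk.inj_iff]
    exact ⟨trivial, heq_of_eq (Finset.erase_insert hiT)⟩
  · rintro ⟨S, i⟩ _
    simp only
    ring

lemma posSemidef_diag_re_nonneg {C : Matrix ι ι ℂ} (hC : C.PosSemidef) (i : ι) :
    0 ≤ (C i i).re := by
  have h := hC.dotProduct_mulVec_nonneg (Pi.single i 1)
  have hval : dotProduct (star (Pi.single i 1)) (C *ᵥ Pi.single i 1) = C i i := by
    simp [dotProduct, Matrix.mulVec, Pi.single_apply, mul_ite, ite_mul,
      apply_ite (star : ℂ → ℂ), Finset.sum_ite_eq, Finset.sum_ite_eq']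
  rw [hval] at h
  exact (Complex.le_def.mp h).1


lemma esymm_eq_re_sc (M : Matrix ι ι ℂ) (m : ℕ) : esymm M m = (sc M m).re := rfl

end Stmt7Aux

open Stmt7Aux in
/-- Lemma 6.2 (3), inequality (6.5): for `1 ≤ k ≤ r ≤ n`, a positive definite `A`, and
any positive semidefinite direction `B`,
`σ_{r-1}(A) · (d/dt)|₀ σ_k(A + tB) ≥ σ_{k-1}(A) · (d/dt)|₀ σ_r(A + tB)`,
i.e. `σ_{r-1}(A) T_{k-1}(A) ≥ σ_{k-1}(A) T_{r-1}(A)` in the Loewner order. -/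
theorem stmt7 (n k r : ℕ) (hk1 : 1 ≤ k) (hkr : k ≤ r) (hrn : r ≤ n)
    (A : Matrix (Fin n) (Fin n) ℂ) (hA : A.PosDef)
    (B : Matrix (Fin n) (Fin n) ℂ) (hB : B.PosSemidef) :
    esymm A (k - 1) * deriv (fun t : ℝ => esymm (A + (t : ℂ) • B) r) 0
      ≤ esymm A (r - 1) * deriv (fun t : ℝ => esymm (A + (t : ℂ) • B) k) 0 := by
  classical
  have hH : A.IsHermitian := hA.1
  set U : Matrix (Fin n) (Fin n) ℂ := (hH.eigenvectorUnitary : Matrix (Fin n) (Fin n) ℂ)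
    with hUdef
  have hU : U ∈ Matrix.unitaryGroup (Fin n) ℂ := (hH.eigenvectorUnitary).2
  set d : Fin n → ℝ := hH.eigenvalues with hd
  set dc : Fin n → ℂ := fun i => (d i : ℂ) with hdc
  set Dm : Matrix (Fin n) (Fin n) ℂ := Matrix.diagonal dc with hDm
  have hspec : A = U * Dm * star U := by
    have := hH.spectral_theorem
    rw [Unitary.conjStarAlgAut_apply] at this
    rw [hDm]
    exact this
  set C : Matrix (Fin n) (Fin n) ℂ := star U * B * U with hCdef
  have hUU : U * star U = 1 := Matrix.mem_unitaryGroup_iff.mp hU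
  have hfact : ∀ z : ℂ, A + z • B = U * (Dm + z • C) * star U := by
    intro z
    rw [Matrix.mul_add, Matrix.add_mul, ← hspec]
    congr 1
    rw [Matrix.mul_smul, Matrix.smul_mul]
    congr 1
    have h1 : U * (star U * B * U) * star U = U * star U * B * (U * star U) := by
      simp only [Matrix.mul_assoc]
    rw [hCdef, h1, hUU, Matrix.one_mul, Matrix.mul_one]
  have hC : C.PosSemidef := by
    simpa [hCdef, Matrix.star_eq_conjTranspose] using hB.conjTranspose_mul_mul_same U
  have hdpos : ∀ i, 0 < d i := fun i => hA.eigenvalues_pos i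
  have hcard : Fintype.card (Fin n) = n := Fintype.card_fin n
  have hsc : ∀ (z : ℂ) (m : ℕ), m ≤ n → sc (A + z • B) m = sc (Dm + z • C) m := by
    intro z m hm
    rw [hfact z]
    exact sc_unitary_conj hU _ (by rw [hcard]; exact hm)
  have hcii : ∀ i, 0 ≤ (C i i).re := fun i => posSemidef_diag_re_nonneg hC i
  -- the derivative computation
  have hderiv : ∀ m : ℕ, 1 ≤ m → m ≤ n →
      deriv (fun t : ℝ => esymm (A + (t : ℂ) • B) m) 0
        = ∑ i : Fin n, (C i i).re * E (Finset.univ.erase i) d (m - 1) := by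
    intro m hm1 hmn
    have hF : HasDerivAt (fun z : ℂ => sc (Dm + z • C) m)
        (∑ S ∈ Finset.powersetCard m (Finset.univ : Finset (Fin n)),
          ∑ i ∈ S, (∏ j ∈ S.erase i, dc j) * C i i) 0 := by
      rw [hDm]
      exact hasDerivAt_sc dc C m
    have hfun : (fun t : ℝ => esymm (A + (t : ℂ) • B) m)
        = fun t : ℝ => (sc (Dm + ((t : ℝ) : ℂ) • C) m).re := by
      funext t
      rw [esymm_eq_re_sc, hsc _ m hmn]
    rw [hfun]
    have hF' : HasDerivAt (fun z : ℂ => sc (Dm + z • C) m)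
        (∑ S ∈ Finset.powersetCard m (Finset.univ : Finset (Fin n)),
          ∑ i ∈ S, (∏ j ∈ S.erase i, dc j) * C i i) (((0 : ℝ) : ℂ)) := by
      rw [Complex.ofReal_zero]; exact hF
    have hR := HasDerivAt.real_of_complex hF'
    rw [hR.deriv]
    rw [Complex.re_sum]
    have hterm : ∀ S ∈ Finset.powersetCard m (Finset.univ : Finset (Fin n)),
        (∑ i ∈ S, (∏ j ∈ S.erase i, dc j) * C i i).re
          = ∑ i ∈ S, (∏ j ∈ S.erase i, d j) * (C i i).re := by
      intro S _
      rw [Complex.re_sum]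
      refine Finset.sum_congr rfl fun i _ => ?_
      have hprod : (∏ j ∈ S.erase i, dc j) = ((∏ j ∈ S.erase i, d j : ℝ) : ℂ) := by
        rw [Complex.ofReal_prod]
      rw [hprod, Complex.re_ofReal_mul]
    rw [Finset.sum_congr rfl hterm]
    exact swap_sum d (fun i => (C i i).re) hm1
  -- values of esymm at A
  have hesymmA : ∀ m : ℕ, m ≤ n → esymm A m = E Finset.univ d m := by
    intro m hm
    have h0 : A = A + (0 : ℂ) • B := by rw [zero_smul, add_zero]
    rw [esymm_eq_re_sc, h0, hsc 0 m hm, zero_smul, add_zero, hDm, sc_diagonal,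
      Complex.re_sum, E]
    refine Finset.sum_congr rfl fun S _ => ?_
    rw [hdc]
    rw [← Complex.ofReal_prod, Complex.ofReal_re]
  rw [hderiv r (le_trans hk1 hkr) hrn, hderiv k hk1 (le_trans hkr hrn),
    hesymmA (k - 1) (by omega), hesymmA (r - 1) (by omega),
    Finset.mul_sum, Finset.mul_sum]
  refine Finset.sum_le_sum fun i _ => ?_
  have hkey := E_key (f := d) hdpos i hk1 hkr
  have hc := hcii i
  have h1 := mul_le_mul_of_nonneg_left hkey hc
  nlinarith [h1]
end

section
/- Fix a finite index set ι with |ι| = n, partitioned into m nonempty blocks b₁,…,b_m. Let A be a positive semidefinite Hermitian complex matrix indexed by ι×ι. Then det A ≤ ∏_{i=1}^m det(A_{b_i}), where A_{b} denotes the principal submatrix of A on block b. Equivalently, det A ≤ det A' where A' is the block-diagonal pinching of A with respect to the partition. (Lemma 6.3 (1).) -/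
open Matrix ComplexOrder

section FischerAux

variable {n : Type} [Fintype n] [DecidableEq n]




lemma psd_det_real {M : Matrix n n ℂ} (hM : M.PosSemidef) :
    M.det = (M.det.re : ℂ) ∧ 0 ≤ M.det.re := by
  have h : M.det = ((∏ i, hM.1.eigenvalues i : ℝ) : ℂ) := by
    rw [hM.1.det_eq_prod_eigenvalues]; push_cast; rfl
  rw [h]
  refine ⟨by rw [Complex.ofReal_re], ?_⟩
  simp only [Complex.ofReal_re]
  exact Finset.prod_nonneg fun i _ => hM.eigenvalues_nonneg i

lemma posDef_of_det_ne_zero {M : Matrix n n ℂ} (hM : M.PosSemidef) (h : M.det ≠ 0) :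
    M.PosDef := by
  refine posDef_iff_dotProduct_mulVec.mpr ⟨hM.1, fun x hx => ?_⟩
  rcases (hM.dotProduct_mulVec_nonneg x).lt_or_eq with hlt | heq
  · exact hlt
  · exact absurd ((Matrix.exists_mulVec_eq_zero_iff).1
      ⟨x, hx, (hM.dotProduct_mulVec_zero_iff x).1 heq.symm⟩) h




lemma eig_le_one {T : Matrix n n ℂ} (hT : T.IsHermitian)
    (h1 : (1 - T).PosSemidef) (i : n) : hT.eigenvalues i ≤ 1 := by
  set v : n → ℂ := ⇑(hT.eigenvectorBasis i) with hv
  have hv0 : v ≠ 0 := by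
    intro h
    have := (hT.eigenvectorBasis).toBasis.ne_zero i
    apply this
    ext j
    have := congrFun h j
    simpa using this
  have hmul : T *ᵥ v = (hT.eigenvalues i : ℂ) • v := by
    have := hT.mulVec_eigenvectorBasis i
    rw [this]; ext j; simp [hv, Complex.real_smul]
  have hs0 : star v ⬝ᵥ v ≠ 0 := by
    rwa [Ne, dotProduct_star_self_eq_zero]
  have hsre : 0 < (star v ⬝ᵥ v).re ∧ (star v ⬝ᵥ v).im = 0 := by
    have h1 : star v ⬝ᵥ v = ((∑ j, Complex.normSq (v j) : ℝ) : ℂ) := by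
      simp [dotProduct, Complex.star_def, Complex.normSq_eq_conj_mul_self]
    constructor
    · rw [h1, Complex.ofReal_re]
      have hnn : 0 ≤ ∑ j, Complex.normSq (v j) :=
        Finset.sum_nonneg fun j _ => Complex.normSq_nonneg _
      rcases hnn.lt_or_eq with h | h
      · exact h
      · exfalso; apply hs0; rw [h1, ← h]; simp
    · rw [h1, Complex.ofReal_im]
  have key := h1.re_dotProduct_nonneg v
  rw [sub_mulVec, one_mulVec, dotProduct_sub, hmul, dotProduct_smul] at key
  have : 0 ≤ (star v ⬝ᵥ v).re - hT.eigenvalues i * (star v ⬝ᵥ v).re := by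
    simpa [Complex.sub_re, Complex.mul_re, Complex.ofReal_re, Complex.ofReal_im,
      hsre.2, smul_eq_mul] using key
  nlinarith [hsre.1]

lemma det_le_one {T : Matrix n n ℂ} (hT : T.PosSemidef) (h1 : (1 - T).PosSemidef) :
    T.det.re ≤ 1 := by
  have h : T.det = ((∏ i, hT.1.eigenvalues i : ℝ) : ℂ) := by
    rw [hT.1.det_eq_prod_eigenvalues]; push_cast; rfl
  rw [h, Complex.ofReal_re]
  exact Finset.prod_le_one (fun i _ => hT.eigenvalues_nonneg i)
    (fun i _ => eig_le_one hT.1 h1 i)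

lemma det_mono {S Q : Matrix n n ℂ} (hS : S.PosSemidef) (hQS : (Q - S).PosSemidef) :
    S.det.re ≤ Q.det.re := by
  have hQ : Q.PosSemidef := by simpa using hQS.add hS
  by_cases hdet : Q.det = 0
  · -- Q singular forces S singular
    obtain ⟨x, hx, hQx⟩ := (Matrix.exists_mulVec_eq_zero_iff).2 hdet
    have hQq : star x ⬝ᵥ Q *ᵥ x = 0 := by rw [hQx, dotProduct_zero]
    have h1 : (0:ℂ) ≤ star x ⬝ᵥ S *ᵥ x := hS.dotProduct_mulVec_nonneg x
    have h2 : (0:ℂ) ≤ star x ⬝ᵥ (Q - S) *ᵥ x := hQS.dotProduct_mulVec_nonneg x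
    have h3 : star x ⬝ᵥ (Q - S) *ᵥ x = - (star x ⬝ᵥ S *ᵥ x) := by
      rw [sub_mulVec, dotProduct_sub, hQq, zero_sub]
    have h4 : star x ⬝ᵥ S *ᵥ x = 0 := le_antisymm (by rw [← neg_nonneg, ← h3]; exact h2) h1
    have hSx : S *ᵥ x = 0 := (hS.dotProduct_mulVec_zero_iff x).1 h4
    have : S.det = 0 := (Matrix.exists_mulVec_eq_zero_iff).1 ⟨x, hx, hSx⟩
    rw [this, hdet]
  · have hQd : Q.PosDef := posDef_of_det_ne_zero hQ hdet
    open scoped MatrixOrder in set W := CFC.sqrt Q with hW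
    have hWpsd : W.PosSemidef := by open scoped MatrixOrder in exact (CFC.sqrt_nonneg Q).posSemidef
    have hWH : Wᴴ = W := hWpsd.1
    have hWW : W * W = Q := by open scoped MatrixOrder in exact CFC.sqrt_mul_sqrt_self Q hQ.nonneg
    have hWdet : W.det ≠ 0 := by
      intro h
      apply hdet
      rw [← hWW, det_mul, h, zero_mul]
    have hWunit : IsUnit W.det := isUnit_iff_ne_zero.2 hWdet
    have hWinv : W⁻¹ * W = 1 := nonsing_inv_mul W hWunit
    have hWinv' : W * W⁻¹ = 1 := mul_nonsing_inv W hWunit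
    have hWiH : (W⁻¹)ᴴ = W⁻¹ := by rw [conjTranspose_nonsing_inv, hWH]
    set T := W⁻¹ * S * W⁻¹ with hT
    have hTpsd : T.PosSemidef := by
      have := hS.conjTranspose_mul_mul_same W⁻¹
      rwa [hWiH] at this
    have h1T : (1 - T).PosSemidef := by
      have := hQS.conjTranspose_mul_mul_same W⁻¹
      rw [hWiH] at this
      have heq : W⁻¹ * (Q - S) * W⁻¹ = 1 - T := by
        rw [Matrix.mul_sub, Matrix.sub_mul, hT]
        congr 1
        rw [← hWW]
        calc W⁻¹ * (W * W) * W⁻¹ = (W⁻¹ * W) * (W * W⁻¹) := by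
              simp only [Matrix.mul_assoc]
          _ = 1 := by rw [hWinv, hWinv', one_mul]
      rwa [heq] at this
    have hSeq : S = W * T * W := by
      rw [hT]
      calc S = (W * W⁻¹) * S * (W⁻¹ * W) := by rw [hWinv, hWinv', one_mul, Matrix.mul_one]
        _ = W * (W⁻¹ * S * W⁻¹) * W := by simp only [Matrix.mul_assoc]
    have hdetS : S.det = Q.det * T.det := by
      have h5 : Q.det = W.det * W.det := by rw [← hWW, det_mul]
      have h6 : S.det = W.det * T.det * W.det := by rw [hSeq, det_mul, det_mul]
      rw [h6, h5]; ring
    have hQre := psd_det_real hQ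
    have hTre := psd_det_real hTpsd
    have : S.det.re = Q.det.re * T.det.re := by
      rw [hdetS, Complex.mul_re]
      have : Q.det.im = 0 := by rw [hQre.1]; simp
      rw [this]; ring
    rw [this]
    calc Q.det.re * T.det.re ≤ Q.det.re * 1 :=
          mul_le_mul_of_nonneg_left (det_le_one hTpsd h1T) hQre.2
      _ = Q.det.re := mul_one _

lemma fischer2 {α β : Type} [Fintype α] [Fintype β] [DecidableEq α] [DecidableEq β]
    (M : Matrix (α ⊕ β) (α ⊕ β) ℂ) (hM : M.PosSemidef) :
    M.det.re ≤ (M.submatrix Sum.inl Sum.inl).det.re * (M.submatrix Sum.inr Sum.inr).det.re := by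
  set A := M.submatrix Sum.inl Sum.inl with hA
  set D := M.submatrix Sum.inr Sum.inr with hD
  have hApsd : A.PosSemidef := hM.submatrix Sum.inl
  have hDpsd : D.PosSemidef := hM.submatrix Sum.inr
  have hAre := psd_det_real hApsd
  have hDre := psd_det_real hDpsd
  -- singular cases : show M.det = 0
  by_cases hAdet : A.det = 0
  · obtain ⟨x, hx, hAx⟩ := (Matrix.exists_mulVec_eq_zero_iff).2 hAdet
    set y : α ⊕ β → ℂ := Sum.elim x 0 with hy
    have hy0 : y ≠ 0 := by
      intro h
      apply hx
      ext j
      have := congrFun h (Sum.inl j)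
      simpa [hy] using this
    have hq : star y ⬝ᵥ M *ᵥ y = star x ⬝ᵥ A *ᵥ x := by
      simp [hy, dotProduct, mulVec, Fintype.sum_sum_type, hA, submatrix]
    have hMy : M *ᵥ y = 0 := (hM.dotProduct_mulVec_zero_iff y).1
      (by rw [hq, hAx, dotProduct_zero])
    have hMdet : M.det = 0 := (Matrix.exists_mulVec_eq_zero_iff).1 ⟨y, hy0, hMy⟩
    rw [hMdet]
    simpa using mul_nonneg hAre.2 hDre.2
  by_cases hDdet : D.det = 0
  · obtain ⟨x, hx, hDx⟩ := (Matrix.exists_mulVec_eq_zero_iff).2 hDdet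
    set y : α ⊕ β → ℂ := Sum.elim 0 x with hy
    have hy0 : y ≠ 0 := by
      intro h
      apply hx
      ext j
      have := congrFun h (Sum.inr j)
      simpa [hy] using this
    have hq : star y ⬝ᵥ M *ᵥ y = star x ⬝ᵥ D *ᵥ x := by
      simp [hy, dotProduct, mulVec, Fintype.sum_sum_type, hD, submatrix]
    have hMy : M *ᵥ y = 0 := (hM.dotProduct_mulVec_zero_iff y).1
      (by rw [hq, hDx, dotProduct_zero])
    have hMdet : M.det = 0 := (Matrix.exists_mulVec_eq_zero_iff).1 ⟨y, hy0, hMy⟩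
    rw [hMdet]
    simpa using mul_nonneg hAre.2 hDre.2
  -- now A posdef
  have hAd : A.PosDef := posDef_of_det_ne_zero hApsd hAdet
  haveI : Invertible A := invertibleOfIsUnitDet A (isUnit_iff_ne_zero.2 hAdet)
  set B := M.toBlocks₁₂ with hB
  have hM21 : M.toBlocks₂₁ = Bᴴ := by
    ext i j
    have := congrFun (congrFun hM.1 (Sum.inr i)) (Sum.inl j)
    simp only [conjTranspose_apply] at this ⊢
    simpa [toBlocks₂₁, toBlocks₁₂, hB] using this.symm
  have hMblocks : M = fromBlocks A B Bᴴ D := by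
    rw [← hM21, hA, hD, hB]
    exact (fromBlocks_toBlocks M).symm
  have hSchur : (D - Bᴴ * A⁻¹ * B).PosSemidef := by
    rw [← Matrix.PosDef.fromBlocks₁₁ B D hAd]
    rwa [← hMblocks]
  have hdetM : M.det = A.det * (D - Bᴴ * A⁻¹ * B).det := by
    rw [hMblocks, det_fromBlocks₁₁, invOf_eq_nonsing_inv]
  have hsub : (D - (D - Bᴴ * A⁻¹ * B)).PosSemidef := by
    have hAiH : (A⁻¹)ᴴ = A⁻¹ := by rw [conjTranspose_nonsing_inv, hAd.1]
    have hAB : A * (A⁻¹ * B) = B := by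
      rw [← Matrix.mul_assoc, mul_nonsing_inv A (isUnit_iff_ne_zero.2 hAdet), Matrix.one_mul]
    have heq : D - (D - Bᴴ * A⁻¹ * B) = (A⁻¹ * B)ᴴ * A * (A⁻¹ * B) := by
      rw [conjTranspose_mul, hAiH, sub_sub_cancel]
      calc Bᴴ * A⁻¹ * B = Bᴴ * A⁻¹ * (A * (A⁻¹ * B)) := by rw [hAB]
        _ = Bᴴ * A⁻¹ * A * (A⁻¹ * B) := by rw [Matrix.mul_assoc (Bᴴ * A⁻¹)]
    rw [heq]
    exact hAd.posSemidef.conjTranspose_mul_mul_same _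
  have hSre := psd_det_real hSchur
  have hmono : (D - Bᴴ * A⁻¹ * B).det.re ≤ D.det.re := det_mono hSchur hsub
  have hre : M.det.re = A.det.re * (D - Bᴴ * A⁻¹ * B).det.re := by
    rw [hdetM, Complex.mul_re]
    have : A.det.im = 0 := by rw [hAre.1]; simp
    rw [this]; ring
  rw [hre]
  exact mul_le_mul_of_nonneg_left hmono hAre.2

lemma fischer_main : ∀ (m : ℕ) (ι : Type) [Fintype ι] [DecidableEq ι] (blk : ι → Fin m)
    (A : Matrix ι ι ℂ), A.PosSemidef →
    A.det.re ≤ ∏ b : Fin m,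
      (A.submatrix (fun i : {x : ι // blk x = b} => (i : ι))
        (fun i : {x : ι // blk x = b} => (i : ι))).det.re := by
  intro m
  induction m with
  | zero =>
    intro ι _ _ blk A hA
    haveI : IsEmpty ι := Function.isEmpty blk
    simp [Matrix.det_isEmpty]
  | succ m ih =>
    intro ι _ _ blk A hA
    classical
    let e : {x : ι // blk x = Fin.last m} ⊕ {x : ι // ¬ blk x = Fin.last m} ≃ ι :=
      Equiv.sumCompl (fun x => blk x = Fin.last m)
    have hMpsd : (A.submatrix e e).PosSemidef := (posSemidef_submatrix_equiv e).2 hA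
    have hdet : (A.submatrix e e).det = A.det := det_submatrix_equiv_self e A
    have h2 := fischer2 (A.submatrix e e) hMpsd
    have hinl : (A.submatrix e e).submatrix Sum.inl Sum.inl
        = A.submatrix (fun i : {x : ι // blk x = Fin.last m} => (i : ι))
            (fun i : {x : ι // blk x = Fin.last m} => (i : ι)) := by
      rw [submatrix_submatrix]
      congr 1 <;> · funext i; simp [e]
    have hinr' : (A.submatrix e e).submatrix Sum.inr Sum.inr
        = A.submatrix (fun i : {x : ι // ¬ blk x = Fin.last m} => (i : ι))
            (fun i : {x : ι // ¬ blk x = Fin.last m} => (i : ι)) := by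
      rw [submatrix_submatrix]
      congr 1 <;> · funext i; simp [e]
    have hinr := ih {x : ι // ¬ blk x = Fin.last m}
      (fun x => (blk x.1).castPred x.2)
      (A.submatrix (fun i : {x : ι // ¬ blk x = Fin.last m} => (i : ι))
        (fun i : {x : ι // ¬ blk x = Fin.last m} => (i : ι))) (hA.submatrix _)
    have hblocks : ∀ b : Fin m,
        ((A.submatrix (fun i : {x : ι // ¬ blk x = Fin.last m} => (i : ι))
            (fun i : {x : ι // ¬ blk x = Fin.last m} => (i : ι))).submatrix
          (fun i : {y : {x : ι // ¬ blk x = Fin.last m} // (blk y.1).castPred y.2 = b} => (i : {x : ι // ¬ blk x = Fin.last m}))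
          (fun i : {y : {x : ι // ¬ blk x = Fin.last m} // (blk y.1).castPred y.2 = b} => (i : {x : ι // ¬ blk x = Fin.last m}))).det =
        (A.submatrix (fun i : {x : ι // blk x = b.castSucc} => (i : ι))
          (fun i : {x : ι // blk x = b.castSucc} => (i : ι))).det := by
      intro b
      let φ : {y : {x : ι // ¬ blk x = Fin.last m} // (blk y.1).castPred y.2 = b}
          ≃ {x : ι // blk x = b.castSucc} :=
        { toFun := fun y => ⟨y.1.1,
            (Fin.castSucc_castPred _ _).symm.trans (congrArg Fin.castSucc y.2)⟩
          invFun := fun x => ⟨⟨x.1, by rw [x.2]; exact (Fin.castSucc_lt_last b).ne⟩, by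
            apply Fin.castSucc_injective
            rw [Fin.castSucc_castPred, x.2]⟩
          left_inv := fun y => by ext; rfl
          right_inv := fun x => by ext; rfl }
      rw [← Matrix.det_submatrix_equiv_self φ]
      rfl
    rw [Fin.prod_univ_castSucc, ← hdet]
    calc (A.submatrix e e).det.re
        ≤ ((A.submatrix e e).submatrix Sum.inl Sum.inl).det.re *
          ((A.submatrix e e).submatrix Sum.inr Sum.inr).det.re := h2
      _ ≤ ((A.submatrix e e).submatrix Sum.inl Sum.inl).det.re * ∏ b : Fin m,
          (A.submatrix (fun i : {x : ι // blk x = b.castSucc} => (i : ι))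
            (fun i : {x : ι // blk x = b.castSucc} => (i : ι))).det.re := by
          refine mul_le_mul_of_nonneg_left ?_ (by
            rw [hinl]
            exact (psd_det_real (hA.submatrix _)).2)
          rw [hinr']
          refine le_trans hinr (le_of_eq ?_)
          exact Finset.prod_congr rfl fun b _ => by rw [hblocks b]
      _ = (∏ b : Fin m,
          (A.submatrix (fun i : {x : ι // blk x = b.castSucc} => (i : ι))
            (fun i : {x : ι // blk x = b.castSucc} => (i : ι))).det.re) *
          (A.submatrix (fun i : {x : ι // blk x = Fin.last m} => (i : ι))
            (fun i : {x : ι // blk x = Fin.last m} => (i : ι))).det.re := by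
          rw [hinl]; ring

end FischerAux

/-- Lemma 6.3 (1) (Fischer's inequality): if `A` is a positive semidefinite Hermitian
matrix indexed by a finite set `ι` partitioned into `m` nonempty blocks (the fibers of
a surjection `blk : ι → Fin m`), then `det A ≤ ∏ b, det (A_b)`, where `A_b` is the
principal submatrix of `A` on the block `b`. -/
theorem stmt8 (ι : Type) [Fintype ι] [DecidableEq ι] (n m : ℕ)
    (hcard : Fintype.card ι = n)
    (blk : ι → Fin m) (hblk : Function.Surjective blk)
    (A : Matrix ι ι ℂ) (hA : A.PosSemidef) :
    A.det.re ≤ ∏ b : Fin m,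
      (A.submatrix (fun i : {x : ι // blk x = b} => (i : ι))
        (fun i : {x : ι // blk x = b} => (i : ι))).det.re :=
  fischer_main m ι blk A hA
end

section
/- Fix a finite index set ι with |ι| = n, partitioned into m nonempty blocks b₁,…,b_m, and let A be a positive semidefinite Hermitian complex matrix indexed by ι×ι, with block-diagonal pinching A'. Then for every integer k with 0 ≤ k ≤ n, σ_k(A) ≤ σ_k(A'), and moreover σ_k(A') = Σ ∏_{i=1}^m σ_{l_i}(A_{b_i}), the sum being over all tuples (l₁,…,l_m) of nonnegative integers with l₁ + ⋯ + l_m = k. (Lemma 6.3 (2), inequality (6.14).) -/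
open Matrix ComplexOrder

namespace Stmt9Aux

set_option linter.unusedSectionVars false

/-- The complex-valued version of `esymm`. -/
noncomputable def cesymm {ι : Type*} [Fintype ι] [DecidableEq ι]
    (A : Matrix ι ι ℂ) (k : ℕ) : ℂ :=
  ∑ S ∈ Finset.powersetCard k (Finset.univ : Finset ι),
    (A.submatrix (fun i : {x : ι // x ∈ S} => (i : ι))
      (fun i : {x : ι // x ∈ S} => (i : ι))).det

lemma esymm_eq_re {ι : Type*} [Fintype ι] [DecidableEq ι] (A : Matrix ι ι ℂ) (k : ℕ) :
    esymm A k = (cesymm A k).re := rfl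


variable {α β : Type*} [Fintype α] [DecidableEq α] [Fintype β] [DecidableEq β]


lemma det_nonneg {X : Matrix α α ℂ} (hX : X.PosSemidef) : 0 ≤ X.det := by
  rw [hX.1.det_eq_prod_eigenvalues]
  refine Finset.prod_nonneg fun i _ => ?_
  exact Complex.zero_le_real.2 (hX.eigenvalues_nonneg i)

lemma det_real {X : Matrix α α ℂ} (hX : X.IsHermitian) :
    X.det = ((X.det.re : ℝ) : ℂ) := by
  have h : X.det = ((∏ i, hX.eigenvalues i : ℝ) : ℂ) := by
    rw [hX.det_eq_prod_eigenvalues]; push_cast; rfl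
  rw [h, Complex.ofReal_re]

lemma one_le_det_one_add {Z : Matrix α α ℂ} (hZ : Z.PosSemidef) :
    1 ≤ (1 + Z).det := by
  set U := (hZ.1.eigenvectorUnitary : Matrix α α ℂ) with hU
  have hUU : U * star U = 1 := (Matrix.mem_unitaryGroup_iff).mp (hZ.1.eigenvectorUnitary).2
  have hspec : Z = U * Matrix.diagonal (RCLike.ofReal ∘ hZ.1.eigenvalues) * star U :=
    hZ.1.spectral_theorem
  have key : 1 + Z = U * (1 + Matrix.diagonal (RCLike.ofReal ∘ hZ.1.eigenvalues)) * star U := by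
    rw [mul_add, add_mul, mul_one, hUU, ← hspec]
  rw [key, det_mul, det_mul]
  have hdetU : U.det * (star U).det = 1 := by rw [← det_mul, hUU, det_one]
  rw [mul_comm U.det _, mul_assoc, hdetU, mul_one]
  have : (1 : Matrix α α ℂ) + Matrix.diagonal (RCLike.ofReal ∘ hZ.1.eigenvalues)
      = Matrix.diagonal (fun i => 1 + (hZ.1.eigenvalues i : ℂ)) := by
    rw [← Matrix.diagonal_one, Matrix.diagonal_add]
    rfl
  rw [this, det_diagonal]
  calc (1 : ℂ) = ∏ _i : α, 1 := by simp
  _ ≤ ∏ i, (1 + (hZ.1.eigenvalues i : ℂ)) := by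
      refine Finset.prod_le_prod (fun i _ => zero_le_one) (fun i _ => ?_)
      exact le_add_of_nonneg_right (Complex.zero_le_real.2 (hZ.eigenvalues_nonneg i))

lemma exists_kernel {X : Matrix α α ℂ} (hX : X.PosSemidef) (hd : ¬ X.PosDef) :
    ∃ x ≠ 0, X *ᵥ x = 0 := by
  have : ¬ ∀ x : α → ℂ, x ≠ 0 → 0 < star x ⬝ᵥ X *ᵥ x := fun h => hd (posDef_iff_dotProduct_mulVec.2 ⟨hX.1, h⟩)
  push_neg at this
  obtain ⟨x, hx0, hq⟩ := this
  refine ⟨x, hx0, (hX.dotProduct_mulVec_zero_iff x).1 ?_⟩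
  rcases (hX.dotProduct_mulVec_nonneg x).lt_or_eq with h | h
  · exact absurd h hq
  · exact h.symm

lemma det_eq_zero_of_not_posDef {X : Matrix α α ℂ} (hX : X.PosSemidef) (hd : ¬ X.PosDef) :
    X.det = 0 := by
  obtain ⟨x, hx0, hx⟩ := exists_kernel hX hd
  exact (Matrix.exists_mulVec_eq_zero_iff).1 ⟨x, hx0, hx⟩

open scoped MatrixOrder in
lemma det_le_det_add {X Y : Matrix α α ℂ} (hX : X.PosSemidef) (hY : Y.PosSemidef) :
    X.det ≤ (X + Y).det := by
  by_cases hd : X.PosDef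
  · set R := CFC.sqrt X with hRdef
    have hR : R.PosSemidef := (CFC.sqrt_nonneg X).posSemidef
    have hRR : R * R = X := CFC.sqrt_mul_sqrt_self X hX.nonneg
    have hdetR : R.det ≠ 0 := by
      intro h
      have : X.det = 0 := by rw [← hRR, det_mul, h, zero_mul]
      exact hd.det_pos.ne' this
    have hu : IsUnit R.det := isUnit_iff_ne_zero.2 hdetR
    have h1 : R * R⁻¹ = 1 := mul_nonsing_inv _ hu
    have h2 : R⁻¹ * R = 1 := nonsing_inv_mul _ hu
    have hZ : (R⁻¹ * Y * R⁻¹).PosSemidef := by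
      have := hY.conjTranspose_mul_mul_same (R⁻¹)
      rwa [hR.1.inv.eq] at this
    have key : R * (1 + R⁻¹ * Y * R⁻¹) * R = X + Y := by
      rw [mul_add, mul_one, add_mul, hRR]
      congr 1
      calc R * (R⁻¹ * Y * R⁻¹) * R = (R * R⁻¹) * Y * (R⁻¹ * R) := by
            simp only [Matrix.mul_assoc]
      _ = Y := by rw [h1, h2, one_mul, mul_one]
    have hdet : (X + Y).det = X.det * (1 + R⁻¹ * Y * R⁻¹).det := by
      rw [← key, det_mul, det_mul, ← hRR, det_mul]
      ring
    rw [hdet]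
    exact le_mul_of_one_le_right (det_nonneg hX) (one_le_det_one_add hZ)
  · rw [det_eq_zero_of_not_posDef hX hd]
    exact det_nonneg (hX.add hY)

lemma fischer2 {M : Matrix (α ⊕ β) (α ⊕ β) ℂ} (hM : M.PosSemidef) :
    M.det ≤ (M.submatrix Sum.inl Sum.inl).det * (M.submatrix Sum.inr Sum.inr).det := by
  set A := M.toBlocks₁₁ with hAdef
  set B := M.toBlocks₁₂ with hBdef
  set D := M.toBlocks₂₂ with hDdef
  have hC : M.toBlocks₂₁ = Bᴴ := by
    ext i j
    have := congrFun (congrFun hM.1 (Sum.inr i)) (Sum.inl j)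
    simpa [toBlocks₂₁, toBlocks₁₂, conjTranspose_apply, hBdef] using this.symm
  have hM' : M = fromBlocks A B Bᴴ D := by rw [← hC, hAdef, hBdef, hDdef, fromBlocks_toBlocks]
  have hsub1 : M.submatrix Sum.inl Sum.inl = A := rfl
  have hsub2 : M.submatrix Sum.inr Sum.inr = D := rfl
  rw [hsub1, hsub2]
  have hA : A.PosSemidef := hsub1 ▸ hM.submatrix Sum.inl
  have hD : D.PosSemidef := hsub2 ▸ hM.submatrix Sum.inr
  by_cases hd : A.PosDef
  · haveI := Matrix.invertibleOfIsUnitDet A (isUnit_iff_ne_zero.2 hd.det_pos.ne')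
    have hS : (D - Bᴴ * A⁻¹ * B).PosSemidef :=
      (PosDef.fromBlocks₁₁ B D hd).mp (hM' ▸ hM)
    have hdet : M.det = A.det * (D - Bᴴ * A⁻¹ * B).det := by
      rw [hM', det_fromBlocks₁₁, invOf_eq_nonsing_inv]
    have h2 : (Bᴴ * A⁻¹ * B).PosSemidef := hd.inv.posSemidef.conjTranspose_mul_mul_same B
    have hDS : (D - Bᴴ * A⁻¹ * B).det ≤ D.det := by
      have := det_le_det_add hS h2
      rwa [sub_add_cancel] at this
    rw [hdet]
    exact mul_le_mul_of_nonneg_left hDS (det_nonneg hA)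
  · obtain ⟨x, hx0, hAx⟩ := exists_kernel hA hd
    have hv0 : (Sum.elim x 0 : α ⊕ β → ℂ) ≠ 0 := by
      intro h
      exact hx0 (funext fun i => congrFun h (Sum.inl i))
    have hMv : M *ᵥ Sum.elim x 0 = 0 := by
      refine (hM.dotProduct_mulVec_zero_iff _).1 ?_
      have hstar : star (Sum.elim x 0 : α ⊕ β → ℂ) = Sum.elim (star x) 0 := by
        funext i; cases i <;> simp
      rw [hM', fromBlocks_mulVec, hstar]
      simp [hAx]
    have : M.det = 0 := (Matrix.exists_mulVec_eq_zero_iff).1 ⟨_, hv0, hMv⟩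
    rw [this]
    exact mul_nonneg (det_nonneg hA) (det_nonneg hD)

lemma fischer : ∀ (m : ℕ) (ι : Type) [Fintype ι] [DecidableEq ι] (blk : ι → Fin m)
    (A : Matrix ι ι ℂ), A.PosSemidef →
    A.det ≤ ∏ b : Fin m, (A.submatrix (fun i : {x : ι // blk x = b} => (i : ι))
      (fun i : {x : ι // blk x = b} => (i : ι))).det := by
  intro m
  induction m with
  | zero =>
    intro ι _ _ blk A hA
    haveI : IsEmpty ι := ⟨fun x => (blk x).elim0⟩
    simp [Matrix.det_isEmpty]
  | succ m ih =>
    intro ι _ _ blk A hA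
    classical
    let e : {x : ι // blk x = 0} ⊕ {x : ι // ¬ blk x = 0} ≃ ι :=
      Equiv.sumCompl (fun x => blk x = 0)
    have hMps : (A.submatrix e e).PosSemidef := hA.submatrix e
    have hdetA : A.det = (A.submatrix e e).det := (Matrix.det_submatrix_equiv_self e A).symm
    have h2 := fischer2 hMps
    have hb0 : (A.submatrix e e).submatrix Sum.inl Sum.inl
        = A.submatrix (fun i : {x : ι // blk x = (0 : Fin (m+1))} => (i : ι))
          (fun i : {x : ι // blk x = (0 : Fin (m+1))} => (i : ι)) := rfl
    have hrest : (A.submatrix e e).submatrix Sum.inr Sum.inr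
        = A.submatrix (fun i : {x : ι // ¬ blk x = 0} => (i : ι))
          (fun i : {x : ι // ¬ blk x = 0} => (i : ι)) := rfl
    have hA'ps : (A.submatrix (fun i : {x : ι // ¬ blk x = 0} => (i : ι))
        (fun i : {x : ι // ¬ blk x = 0} => (i : ι))).PosSemidef := hA.submatrix _
    have h3 := ih {x : ι // ¬ blk x = 0} (fun x => (blk x.val).pred x.2) _ hA'ps
    have hfac : ∀ b : Fin m,
        ((A.submatrix (fun i : {x : ι // ¬ blk x = 0} => (i : ι))
            (fun i : {x : ι // ¬ blk x = 0} => (i : ι))).submatrix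
          (fun i : {x : {x : ι // ¬ blk x = 0} // (blk x.val).pred x.2 = b} => (i : {x : ι // ¬ blk x = 0}))
          (fun i : {x : {x : ι // ¬ blk x = 0} // (blk x.val).pred x.2 = b} => (i : {x : ι // ¬ blk x = 0}))).det
        = (A.submatrix (fun i : {x : ι // blk x = b.succ} => (i : ι))
          (fun i : {x : ι // blk x = b.succ} => (i : ι))).det := by
      intro b
      let g : {x : {x : ι // ¬ blk x = 0} // (blk x.val).pred x.2 = b} ≃ {x : ι // blk x = b.succ} :=
        { toFun := fun y => ⟨y.1.1, by
            have h := congrArg Fin.succ y.2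
            rwa [Fin.succ_pred] at h⟩
          invFun := fun x => ⟨⟨x.1, by rw [x.2]; exact Fin.succ_ne_zero b⟩, by
            refine Fin.succ_injective _ ?_
            rw [Fin.succ_pred, x.2]⟩
          left_inv := fun y => Subtype.ext (Subtype.ext rfl)
          right_inv := fun x => Subtype.ext rfl }
      have hcomp : ((A.submatrix (fun i : {x : ι // ¬ blk x = 0} => (i : ι))
            (fun i : {x : ι // ¬ blk x = 0} => (i : ι))).submatrix
          (fun i : {x : {x : ι // ¬ blk x = 0} // (blk x.val).pred x.2 = b} => (i : {x : ι // ¬ blk x = 0}))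
          (fun i : {x : {x : ι // ¬ blk x = 0} // (blk x.val).pred x.2 = b} => (i : {x : ι // ¬ blk x = 0})))
          = (A.submatrix (fun i : {x : ι // blk x = b.succ} => (i : ι))
              (fun i : {x : ι // blk x = b.succ} => (i : ι))).submatrix g g := rfl
      rw [hcomp, Matrix.det_submatrix_equiv_self]
    calc A.det = (A.submatrix e e).det := hdetA
    _ ≤ ((A.submatrix e e).submatrix Sum.inl Sum.inl).det
          * ((A.submatrix e e).submatrix Sum.inr Sum.inr).det := h2
    _ ≤ ((A.submatrix e e).submatrix Sum.inl Sum.inl).det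
          * ∏ b : Fin m, (A.submatrix (fun i : {x : ι // blk x = b.succ} => (i : ι))
              (fun i : {x : ι // blk x = b.succ} => (i : ι))).det := by
        refine mul_le_mul_of_nonneg_left ?_ (det_nonneg (hMps.submatrix Sum.inl))
        rw [hrest]
        refine le_trans h3 (le_of_eq ?_)
        exact Finset.prod_congr rfl fun b _ => hfac b
    _ = ∏ b : Fin (m+1), (A.submatrix (fun i : {x : ι // blk x = b} => (i : ι))
          (fun i : {x : ι // blk x = b} => (i : ι))).det := by
        rw [Fin.prod_univ_succ, hb0]

lemma det_pinch {m : ℕ} {ι : Type} [Fintype ι] [DecidableEq ι] (blk : ι → Fin m)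
    (A : Matrix ι ι ℂ) :
    (Matrix.of fun i j => if blk i = blk j then A i j else 0).det
      = ∏ b : Fin m, (A.submatrix (fun i : {x : ι // blk x = b} => (i : ι))
          (fun i : {x : ι // blk x = b} => (i : ι))).det := by
  classical
  have hbt : (Matrix.of fun i j => if blk i = blk j then A i j else 0).BlockTriangular blk := by
    intro i j hij
    simp only [Matrix.of_apply]
    rw [if_neg (ne_of_gt hij)]
  rw [hbt.det_fintype]
  refine Finset.prod_congr rfl fun b _ => ?_
  congr 1
  ext i j
  have hi : blk (i : ι) = b := i.2
  have hj : blk (j : ι) = b := j.2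
  simp [Matrix.toSquareBlock, Matrix.toSquareBlockProp, hi, hj, hi.trans hj.symm]

lemma det_comp_equiv {ι κ κ' : Type*} [Fintype κ] [Fintype κ'] [DecidableEq κ] [DecidableEq κ']
    (A : Matrix ι ι ℂ) (f : κ → ι) (e : κ' ≃ κ) :
    (A.submatrix (f ∘ e) (f ∘ e)).det = (A.submatrix f f).det := by
  rw [show A.submatrix (f ∘ e) (f ∘ e) = (A.submatrix f f).submatrix e e from rfl,
    Matrix.det_submatrix_equiv_self]

lemma sum_powersetCard_prod (m : ℕ) (ι : Type) [Fintype ι] [DecidableEq ι] (blk : ι → Fin m)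
    (k : ℕ) (g : Fin m → Finset ι → ℂ) :
    ∑ S ∈ Finset.powersetCard k (Finset.univ : Finset ι),
        ∏ b : Fin m, g b (S.filter (fun x => blk x = b))
      = ∑ l ∈ Finset.Nat.antidiagonalTuple m k, ∏ b : Fin m,
          ∑ T ∈ Finset.powersetCard (l b) (Finset.univ.filter (fun x => blk x = b)), g b T := by
  classical
  have hrhs : ∀ l : Fin m → ℕ,
      (∏ b : Fin m, ∑ T ∈ Finset.powersetCard (l b) (Finset.univ.filter (fun x => blk x = b)), g b T)
      = ∑ x ∈ Fintype.piFinset (fun b => Finset.powersetCard (l b)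
            (Finset.univ.filter (fun x => blk x = b))), ∏ b : Fin m, g b (x b) := by
    intro l
    exact Finset.prod_univ_sum _ _
  simp only [hrhs]
  rw [Finset.sum_sigma']
  refine Finset.sum_nbij'
    (fun S => (⟨fun b => (S.filter (fun x => blk x = b)).card,
        fun b => S.filter (fun x => blk x = b)⟩ :
      Σ _l : Fin m → ℕ, (Fin m → Finset ι)))
    (fun p => Finset.univ.filter (fun i => i ∈ p.2 (blk i)))
    ?_ ?_ ?_ ?_ ?_
  · intro S hS
    rw [Finset.mem_powersetCard] at hS
    rw [Finset.mem_sigma]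
    constructor
    · rw [Finset.Nat.mem_antidiagonalTuple]
      rw [← hS.2]
      exact (Finset.card_eq_sum_card_fiberwise (fun x _ => Finset.mem_univ (blk x))).symm
    · rw [Fintype.mem_piFinset]
      intro b
      rw [Finset.mem_powersetCard]
      exact ⟨Finset.filter_subset_filter _ (Finset.subset_univ S), rfl⟩
  · intro p hp
    rw [Finset.mem_sigma] at hp
    obtain ⟨hp1, hp2⟩ := hp
    rw [Fintype.mem_piFinset] at hp2
    rw [Finset.Nat.mem_antidiagonalTuple] at hp1
    have hsub : ∀ b, ∀ i ∈ p.2 b, blk i = b := by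
      intro b i hi
      have := (Finset.mem_powersetCard.1 (hp2 b)).1 hi
      exact (Finset.mem_filter.1 this).2
    have hfib : ∀ b : Fin m,
        (Finset.univ.filter (fun i => i ∈ p.2 (blk i))).filter (fun i => blk i = b) = p.2 b := by
      intro b
      ext i
      simp only [Finset.mem_filter, Finset.mem_univ, true_and]
      constructor
      · rintro ⟨hi, hb⟩; rwa [hb] at hi
      · intro hi; have := hsub b i hi; exact ⟨by rwa [this], this⟩
    rw [Finset.mem_powersetCard]
    refine ⟨Finset.subset_univ _, ?_⟩
    rw [Finset.card_eq_sum_card_fiberwise (fun x _ => Finset.mem_univ (blk x))]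
    rw [← hp1]
    refine Finset.sum_congr rfl fun b _ => ?_
    rw [hfib b, (Finset.mem_powersetCard.1 (hp2 b)).2]
  · intro S hS
    ext i
    simp
  · intro p hp
    rw [Finset.mem_sigma] at hp
    obtain ⟨hp1, hp2⟩ := hp
    rw [Fintype.mem_piFinset] at hp2
    have hsub : ∀ b, ∀ i ∈ p.2 b, blk i = b := by
      intro b i hi
      have := (Finset.mem_powersetCard.1 (hp2 b)).1 hi
      exact (Finset.mem_filter.1 this).2
    have hfib : ∀ b : Fin m,
        (Finset.univ.filter (fun i => i ∈ p.2 (blk i))).filter (fun i => blk i = b) = p.2 b := by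
      intro b
      ext i
      simp only [Finset.mem_filter, Finset.mem_univ, true_and]
      constructor
      · rintro ⟨hi, hb⟩; rwa [hb] at hi
      · intro hi; have := hsub b i hi; exact ⟨by rwa [this], this⟩
    obtain ⟨l, x⟩ := p
    have h2 : (fun b => (Finset.univ.filter
        (fun i => i ∈ x (blk i))).filter (fun i => blk i = b)) = x := funext hfib
    have h1 : (fun b => ((Finset.univ.filter
        (fun i => i ∈ x (blk i))).filter (fun i => blk i = b)).card) = l := by
      funext b
      rw [hfib b]
      exact (Finset.mem_powersetCard.1 (hp2 b)).2
    simp only at h1 h2 ⊢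
    rw [show (⟨fun b => ((Finset.univ.filter (fun i => i ∈ x (blk i))).filter
          (fun i => blk i = b)).card,
        fun b => (Finset.univ.filter (fun i => i ∈ x (blk i))).filter (fun i => blk i = b)⟩ :
      Σ _l : Fin m → ℕ, (Fin m → Finset ι)) = ⟨l, x⟩ from by rw [h1, h2]]
  · intro S hS
    rfl

lemma pinch_minor {m : ℕ} {ι : Type} [Fintype ι] [DecidableEq ι] (blk : ι → Fin m)
    (A : Matrix ι ι ℂ) (S : Finset ι) :
    ((Matrix.of fun i j => if blk i = blk j then A i j else 0).submatrix
        (fun i : {x : ι // x ∈ S} => (i : ι)) (fun i : {x : ι // x ∈ S} => (i : ι))).det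
      = ∏ b : Fin m, (A.submatrix
          (fun i : {x : ι // x ∈ S.filter (fun x => blk x = b)} => (i : ι))
          (fun i : {x : ι // x ∈ S.filter (fun x => blk x = b)} => (i : ι))).det := by
  classical
  have h0 : ((Matrix.of fun i j => if blk i = blk j then A i j else 0).submatrix
        (fun i : {x : ι // x ∈ S} => (i : ι)) (fun i : {x : ι // x ∈ S} => (i : ι)))
      = (Matrix.of fun i j : {x : ι // x ∈ S} =>
          if (fun y : {x : ι // x ∈ S} => blk y.1) i = (fun y : {x : ι // x ∈ S} => blk y.1) j
          then (A.submatrix (fun i : {x : ι // x ∈ S} => (i : ι))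
            (fun i : {x : ι // x ∈ S} => (i : ι))) i j else 0) := rfl
  rw [h0, det_pinch (fun y : {x : ι // x ∈ S} => blk y.1)
    (A.submatrix (fun i : {x : ι // x ∈ S} => (i : ι)) (fun i : {x : ι // x ∈ S} => (i : ι)))]
  refine Finset.prod_congr rfl fun b _ => ?_
  let e1 : {x : ι // x ∈ S.filter (fun x => blk x = b)}
      ≃ {y : {x : ι // x ∈ S} // blk y.1 = b} :=
    { toFun := fun x => ⟨⟨x.1, (Finset.mem_filter.1 x.2).1⟩, (Finset.mem_filter.1 x.2).2⟩
      invFun := fun y => ⟨y.1.1, Finset.mem_filter.2 ⟨y.1.2, y.2⟩⟩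
      left_inv := fun x => Subtype.ext rfl
      right_inv := fun y => Subtype.ext (Subtype.ext rfl) }
  exact (det_comp_equiv A
    (fun y : {y : {x : ι // x ∈ S} // blk y.1 = b} => (y.1.1 : ι)) e1).symm

lemma block_cesymm {m : ℕ} {ι : Type} [Fintype ι] [DecidableEq ι] (blk : ι → Fin m)
    (A : Matrix ι ι ℂ) (b : Fin m) (j : ℕ) :
    ∑ T ∈ Finset.powersetCard j (Finset.univ.filter (fun x => blk x = b)),
        (A.submatrix (fun i : {x : ι // x ∈ T} => (i : ι))
          (fun i : {x : ι // x ∈ T} => (i : ι))).det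
      = cesymm (A.submatrix (fun i : {x : ι // blk x = b} => (i : ι))
          (fun i : {x : ι // blk x = b} => (i : ι))) j := by
  classical
  unfold cesymm
  refine Finset.sum_nbij' (fun T => T.subtype (fun x => blk x = b))
    (fun T' => T'.map (Function.Embedding.subtype _)) ?_ ?_ ?_ ?_ ?_
  · intro T hT
    rw [Finset.mem_powersetCard] at hT ⊢
    refine ⟨Finset.subset_univ _, ?_⟩
    rw [Finset.card_subtype, Finset.filter_true_of_mem
      (fun x hx => (Finset.mem_filter.1 (hT.1 hx)).2), hT.2]
  · intro T' hT'
    rw [Finset.mem_powersetCard] at hT' ⊢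
    constructor
    · intro i hi
      rw [Finset.mem_map] at hi
      obtain ⟨y, _, rfl⟩ := hi
      exact Finset.mem_filter.2 ⟨Finset.mem_univ _, y.2⟩
    · rw [Finset.card_map, hT'.2]
  · intro T hT
    rw [Finset.mem_powersetCard] at hT
    show (Finset.subtype (fun x => blk x = b) T).map (Function.Embedding.subtype _) = T
    rw [Finset.subtype_map]
    exact Finset.filter_true_of_mem (fun x hx => (Finset.mem_filter.1 (hT.1 hx)).2)
  · intro T' _
    ext y
    simp only [Finset.mem_subtype, Finset.mem_map, Function.Embedding.coe_subtype]
    constructor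
    · rintro ⟨z, hz, hzy⟩
      rwa [show z = y from Subtype.ext hzy] at hz
    · intro hy
      exact ⟨y, hy, rfl⟩
  · intro T hT
    rw [Finset.mem_powersetCard] at hT
    have hp : ∀ x ∈ T, blk x = b := fun x hx => (Finset.mem_filter.1 (hT.1 hx)).2
    let e2 : {y : {x : ι // blk x = b} // y ∈ T.subtype (fun x => blk x = b)}
        ≃ {x : ι // x ∈ T} :=
      { toFun := fun y => ⟨y.1.1, Finset.mem_subtype.1 y.2⟩
        invFun := fun x => ⟨⟨x.1, hp x.1 x.2⟩, Finset.mem_subtype.2 x.2⟩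
        left_inv := fun y => Subtype.ext (Subtype.ext rfl)
        right_inv := fun x => Subtype.ext rfl }
    exact det_comp_equiv A
      (fun y : {y : {x : ι // blk x = b} // y ∈ T.subtype (fun x => blk x = b)} => (y.1.1 : ι))
      e2.symm

lemma cesymm_real {ι : Type*} [Fintype ι] [DecidableEq ι] {A : Matrix ι ι ℂ}
    (hA : A.IsHermitian) (k : ℕ) : cesymm A k = ((esymm A k : ℝ) : ℂ) := by
  have h : cesymm A k = ((∑ S ∈ Finset.powersetCard k (Finset.univ : Finset ι),
      ((A.submatrix (fun i : {x : ι // x ∈ S} => (i : ι))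
        (fun i : {x : ι // x ∈ S} => (i : ι))).det).re : ℝ) : ℂ) := by
    rw [Complex.ofReal_sum]
    exact Finset.sum_congr rfl fun S _ => det_real (hA.submatrix _)
  rw [esymm_eq_re, h, Complex.ofReal_re]

end Stmt9Aux

set_option linter.unusedVariables false

open Stmt9Aux in
/-- Lemma 6.3 (2), inequality (6.14). -/
theorem stmt9 (ι : Type) [Fintype ι] [DecidableEq ι] (n m : ℕ)
    (hcard : Fintype.card ι = n)
    (blk : ι → Fin m) (hblk : Function.Surjective blk)
    (A : Matrix ι ι ℂ) (hA : A.PosSemidef) (k : ℕ) (hk : k ≤ n) :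
    esymm A k ≤ esymm (Matrix.of fun i j => if blk i = blk j then A i j else 0) k ∧
    esymm (Matrix.of fun i j => if blk i = blk j then A i j else 0) k =
      ∑ l ∈ Finset.Nat.antidiagonalTuple m k, ∏ b : Fin m,
        esymm (A.submatrix (fun i : {x : ι // blk x = b} => (i : ι))
          (fun i : {x : ι // blk x = b} => (i : ι))) (l b) := by
  classical
  set A' : Matrix ι ι ℂ := Matrix.of fun i j => if blk i = blk j then A i j else 0 with hA'def
  constructor
  · -- part 1
    have hle : cesymm A k ≤ cesymm A' k := by
      refine Finset.sum_le_sum fun S _ => ?_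
      have hps : (A.submatrix (fun i : {x : ι // x ∈ S} => (i : ι))
          (fun i : {x : ι // x ∈ S} => (i : ι))).PosSemidef := hA.submatrix _
      have hf := fischer m {x : ι // x ∈ S} (fun y => blk y.1) _ hps
      refine hf.trans (le_of_eq ?_)
      exact (det_pinch (fun y : {x : ι // x ∈ S} => blk y.1)
        (A.submatrix (fun i : {x : ι // x ∈ S} => (i : ι))
          (fun i : {x : ι // x ∈ S} => (i : ι)))).symm
    rw [esymm_eq_re, esymm_eq_re]
    exact (Complex.le_def.1 hle).1
  · -- part 2
    have hchain : cesymm A' k = ∑ l ∈ Finset.Nat.antidiagonalTuple m k, ∏ b : Fin m,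
        cesymm (A.submatrix (fun i : {x : ι // blk x = b} => (i : ι))
          (fun i : {x : ι // blk x = b} => (i : ι))) (l b) := by
      have h1 : cesymm A' k = ∑ S ∈ Finset.powersetCard k (Finset.univ : Finset ι),
          ∏ b : Fin m, (fun (b : Fin m) (T : Finset ι) =>
            (A.submatrix (fun i : {x : ι // x ∈ T} => (i : ι))
              (fun i : {x : ι // x ∈ T} => (i : ι))).det) b (S.filter (fun x => blk x = b)) :=
        Finset.sum_congr rfl fun S _ => pinch_minor blk A S
      rw [h1]
      refine (sum_powersetCard_prod m ι blk k (fun b T =>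
        (A.submatrix (fun i : {x : ι // x ∈ T} => (i : ι))
          (fun i : {x : ι // x ∈ T} => (i : ι))).det)).trans ?_
      exact Finset.sum_congr rfl fun l _ => Finset.prod_congr rfl fun b _ =>
        block_cesymm blk A b (l b)
    have hreal : ∀ (l : Fin m → ℕ), ∏ b : Fin m,
        cesymm (A.submatrix (fun i : {x : ι // blk x = b} => (i : ι))
          (fun i : {x : ι // blk x = b} => (i : ι))) (l b)
        = ((∏ b : Fin m, esymm (A.submatrix (fun i : {x : ι // blk x = b} => (i : ι))
            (fun i : {x : ι // blk x = b} => (i : ι))) (l b) : ℝ) : ℂ) := by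
      intro l
      rw [Complex.ofReal_prod]
      exact Finset.prod_congr rfl fun b _ => cesymm_real (hA.1.submatrix _) (l b)
    rw [esymm_eq_re, hchain]
    rw [Finset.sum_congr rfl fun l _ => hreal l, ← Complex.ofReal_sum, Complex.ofReal_re]
end

section
/- Fix a finite index set ι with |ι| = n, partitioned into m nonempty blocks b₁,…,b_m, and let A be a positive semidefinite Hermitian complex matrix indexed by ι×ι, with block-diagonal pinching A'. Then 2^{m−1} · A' − A is positive semidefinite; that is, A ≤ 2^{m−1} A' in the Loewner order. (The pinching bound (6.19) established in the proof of Lemma 6.3 (3), obtained by iterating the two-block case 2A' − A ≥ 0.) -/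
open Matrix ComplexOrder

noncomputable def sgn (b : Bool) : ℂ := if b then 1 else -1

lemma sgn_mul_self (b : Bool) : sgn b * sgn b = 1 := by
  cases b <;> simp [sgn]

lemma sgn_not (b : Bool) : sgn (!b) = - sgn b := by
  cases b <;> simp [sgn]

lemma sum_sgn_ne {m : ℕ} (a b : Fin m) (h : a ≠ b) :
    ∑ ε : Fin m → Bool, sgn (ε a) * sgn (ε b) = 0 := by
  classical
  apply Finset.sum_ninvolution (fun ε => Function.update ε a (!ε a))
  · intro ε
    simp only [Function.update_self, Function.update_of_ne (Ne.symm h), sgn_not]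
    ring
  · intro ε hne heq
    have := congrFun heq a
    simp [Function.update_self] at this
  · intro ε; exact Finset.mem_univ _
  · intro ε
    funext x
    by_cases hx : x = a
    · subst hx; simp [Function.update_self]
    · simp [Function.update_of_ne hx]

lemma sum_sgn_eq {m : ℕ} (a : Fin m) :
    ∑ ε : Fin m → Bool, sgn (ε a) * sgn (ε a) = 2 ^ m := by
  classical
  simp only [sgn_mul_self]
  simp [Finset.card_univ]

lemma psd_smul {ι : Type} [Fintype ι] (c : ℝ) (hc : 0 ≤ c) (M : Matrix ι ι ℂ)
    (hM : M.PosSemidef) : ((c : ℂ) • M).PosSemidef := by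
  refine PosSemidef.of_dotProduct_mulVec_nonneg ?_ ?_
  · unfold Matrix.IsHermitian
    rw [conjTranspose_smul, hM.1]
    congr 1
    simp
  · intro x
    rw [smul_mulVec, dotProduct_smul]
    have := hM.dotProduct_mulVec_nonneg x
    rw [smul_eq_mul]
    positivity

/-- The pinching bound (6.19) from the proof of Lemma 6.3 (3): if `A` is a positive
semidefinite Hermitian matrix indexed by a finite set `ι` partitioned into `m` nonempty
blocks (the fibers of a surjection `blk : ι → Fin m`), and `A'` is its block-diagonal
pinching, then `2^(m-1) • A' - A` is positive semidefinite, i.e. `A ≤ 2^(m-1) A'`. -/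
theorem stmt10 (ι : Type) [Fintype ι] [DecidableEq ι] (n m : ℕ)
    (hcard : Fintype.card ι = n)
    (blk : ι → Fin m) (hblk : Function.Surjective blk)
    (A : Matrix ι ι ℂ) (hA : A.PosSemidef) :
    ((2 ^ (m - 1) : ℂ) • Matrix.of (fun i j => if blk i = blk j then A i j else 0)
        - A).PosSemidef := by
  classical
  rcases Nat.eq_zero_or_pos m with hm | hm
  · subst hm
    have : IsEmpty ι := ⟨fun i => Fin.elim0 (blk i)⟩
    constructor
    · ext i j; exact isEmptyElim i
    · intro x
      have : Finset.univ (α := ι) = ∅ := Finset.univ_eq_empty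
      simp [Finsupp.sum, Finset.eq_empty_of_isEmpty x.support]
  · -- main case
    set D : (Fin m → Bool) → Matrix ι ι ℂ :=
      fun ε => Matrix.diagonal (fun i => sgn (ε (blk i))) with hD
    have hDherm : ∀ ε, (D ε)ᴴ = D ε := by
      intro ε
      have hst : (star fun i => sgn (ε (blk i))) = fun i => sgn (ε (blk i)) := by
        funext i
        rw [Pi.star_apply]
        cases ε (blk i) <;> simp [sgn]
      rw [hD, diagonal_conjTranspose, hst]
    have hterm : ∀ ε, (D ε * A * D ε).PosSemidef := by
      intro ε
      have := hA.conjTranspose_mul_mul_same (D ε)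
      rwa [hDherm] at this
    set ct : Fin m → Bool := fun _ => true with hct
    set cf : Fin m → Bool := fun _ => false with hcf
    have hctcf : ct ≠ cf := by
      intro h; have := congrFun h ⟨0, hm⟩; simp [hct, hcf] at this
    set S : Finset (Fin m → Bool) := Finset.univ \ {ct, cf} with hS
    have hDct : D ct = 1 := by
      simp [hD, hct, sgn]
    have hDcf : D cf * A * D cf = A := by
      have : D cf = -1 := by
        ext i j
        by_cases h : i = j <;> simp [hD, hcf, sgn, Matrix.diagonal, one_apply, h]
      simp [this]
    -- key matrix identity
    have key : (2 : ℂ) • ((2 ^ (m - 1) : ℂ) •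
        Matrix.of (fun i j => if blk i = blk j then A i j else 0) - A)
        = ∑ ε ∈ S, D ε * A * D ε := by
      have hsplit : ∑ ε ∈ S, D ε * A * D ε
          = (∑ ε : Fin m → Bool, D ε * A * D ε) - (D ct * A * D ct) - (D cf * A * D cf) := by
        rw [hS, Finset.sum_sdiff_eq_sub (by simp)]
        rw [Finset.sum_pair hctcf, sub_sub]
      have htotal : (∑ ε : Fin m → Bool, D ε * A * D ε)
          = (2 ^ m : ℂ) • Matrix.of (fun i j => if blk i = blk j then A i j else 0) := by
        ext i j
        simp only [Matrix.sum_apply, Matrix.smul_apply, Matrix.of_apply, smul_eq_mul]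
        have hent : ∀ ε, (D ε * A * D ε) i j
            = sgn (ε (blk i)) * sgn (ε (blk j)) * A i j := by
          intro ε
          simp only [hD, Matrix.diagonal_mul, Matrix.mul_diagonal]
          ring
        simp only [hent, ← Finset.sum_mul]
        by_cases h : blk i = blk j
        · rw [if_pos h, h, sum_sgn_eq]
        · rw [if_neg h, sum_sgn_ne _ _ h, zero_mul, mul_zero]
      rw [hsplit, htotal, hDct, hDcf]
      simp only [Matrix.one_mul, Matrix.mul_one]
      rw [smul_sub, smul_smul]
      have h2 : (2 : ℂ) * 2 ^ (m - 1) = 2 ^ m := by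
        rw [← pow_succ']
        congr 1
        omega
      rw [h2, two_smul]
      abel
    have hsum : (∑ ε ∈ S, D ε * A * D ε).PosSemidef := by
      refine Finset.sum_induction (fun ε => D ε * A * D ε) (fun M => M.PosSemidef)
        (fun a b ha hb => ha.add hb) Matrix.PosSemidef.zero (fun ε _ => hterm ε)
    have h12 : ((1/2 : ℝ) : ℂ) • ((2 : ℂ) • ((2 ^ (m - 1) : ℂ) •
        Matrix.of (fun i j => if blk i = blk j then A i j else 0) - A))
        = (2 ^ (m - 1) : ℂ) • Matrix.of (fun i j => if blk i = blk j then A i j else 0) - A := by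
      rw [smul_smul]
      norm_num
    rw [← h12, key]
    exact psd_smul (1/2 : ℝ) (by norm_num) _ hsum
end
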